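/- arXiv:1407.2485 — 7 statements merged into one kernel-verified Lean document; each statement's English description precedes it below -/
import Mathlib

section
/- Let P be an n×n positive stochastic real matrix and let v ∈ Δ^{n-1}_+. Then the matrix P + J_v(I_n − P) is similar (over ℝ) to P. -/
open Matrix BigOperators

/-- `Jmat v` is the matrix whose `(i,j)` entry is `v j`. -/
def Jmat {n : ℕ} (v : Fin n → ℝ) : Matrix (Fin n) (Fin n) ℝ :=
  Matrix.of fun _ j => v j

lemma Jmat_mul {n : ℕ} (v : Fin n → ℝ) (P : Matrix (Fin n) (Fin n) ℝ) :
    Jmat v * P = Jmat (fun j => ∑ k, v k * P k j) := by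
  ext i j; simp [Jmat, Matrix.mul_apply]

lemma mul_Jmat {n : ℕ} (P : Matrix (Fin n) (Fin n) ℝ) (hrow : ∀ i, ∑ j, P i j = 1)
    (u : Fin n → ℝ) : P * Jmat u = Jmat u := by
  ext i j
  simp only [Jmat, Matrix.mul_apply, Matrix.of_apply]
  rw [← Finset.sum_mul, hrow, one_mul]

lemma Jmat_mul_Jmat {n : ℕ} (a b : Fin n → ℝ) :
    Jmat a * Jmat b = (∑ k, a k) • Jmat b := by
  ext i j
  simp only [Jmat, Matrix.mul_apply, Matrix.of_apply, Matrix.smul_apply, smul_eq_mul]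
  rw [← Finset.sum_mul]

lemma sum_ne_zero_of_fixed {n : ℕ} (P : Matrix (Fin n) (Fin n) ℝ)
    (hpos : ∀ i j, 0 < P i j) (hrow : ∀ i, ∑ j, P i j = 1)
    (w : Fin n → ℝ) (hw : w ≠ 0)
    (hfix : ∀ j, ∑ i, w i * P i j = w j) :
    ∑ i, w i ≠ 0 := by
  intro hsum
  have hp : ∃ p, 0 < w p := by
    by_contra h
    push_neg at h
    have := (Finset.sum_eq_zero_iff_of_nonpos (fun i _ => h i)).mp hsum
    exact hw (funext fun i => this i (Finset.mem_univ i))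
  have hq : ∃ q, w q < 0 := by
    by_contra h
    push_neg at h
    have := (Finset.sum_eq_zero_iff_of_nonneg (fun i _ => h i)).mp hsum
    exact hw (funext fun i => this i (Finset.mem_univ i))
  obtain ⟨p, hp⟩ := hp
  obtain ⟨q, hq⟩ := hq
  have key : ∀ j, |w j| < ∑ i, |w i| * P i j := by
    intro j
    rw [abs_lt]
    constructor
    · rw [← hfix j, neg_lt, ← Finset.sum_neg_distrib]
      apply Finset.sum_lt_sum
      · intro i _
        rw [← neg_mul]
        exact mul_le_mul_of_nonneg_right (neg_le_abs _) (hpos i j).le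
      · exact ⟨p, Finset.mem_univ p, by nlinarith [hpos p j, abs_of_pos hp]⟩
    · rw [← hfix j]
      apply Finset.sum_lt_sum
      · intro i _; exact mul_le_mul_of_nonneg_right (le_abs_self _) (hpos i j).le
      · exact ⟨q, Finset.mem_univ q, by nlinarith [hpos q j, abs_of_neg hq]⟩
  have h1 : ∑ j, |w j| < ∑ j, ∑ i, |w i| * P i j :=
    Finset.sum_lt_sum_of_nonempty ⟨p, Finset.mem_univ p⟩ (fun j _ => key j)
  have h2 : ∑ j, ∑ i, |w i| * P i j = ∑ i, |w i| := by
    rw [Finset.sum_comm]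
    refine Finset.sum_congr rfl fun i _ => ?_
    rw [← Finset.mul_sum, hrow, mul_one]
  rw [h2] at h1
  exact lt_irrefl _ h1

/-- If `P` is an `n × n` positive stochastic real matrix and `v` lies in the
open simplex `Δ^{n-1}_+`, then `P + J_v (I - P)` is similar over `ℝ` to `P`. -/
theorem stmt0 {n : ℕ} (P : Matrix (Fin n) (Fin n) ℝ)
    (hpos : ∀ i j, 0 < P i j) (hrow : ∀ i, ∑ j, P i j = 1)
    (v : Fin n → ℝ) (hv : ∀ j, 0 < v j) (hvsum : ∑ j, v j = 1) :
    ∃ M : Matrix (Fin n) (Fin n) ℝ, IsUnit M ∧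
      P + Jmat v * (1 - P) = M * P * M⁻¹ := by
  rcases Nat.eq_zero_or_pos n with hn | hn
  · subst hn
    exact ⟨1, isUnit_one, Subsingleton.elim _ _⟩
  -- Find a nonzero left fixed vector w of P.
  have hdet : ((P - 1)ᵀ).det = 0 := by
    rw [Matrix.det_transpose, ← Matrix.exists_mulVec_eq_zero_iff]
    refine ⟨fun _ => 1, ?_, ?_⟩
    · intro h
      have := congrFun h ⟨0, hn⟩
      simp at this
    · funext i
      simp [Matrix.mulVec, dotProduct, Matrix.sub_apply, Matrix.one_apply, sub_mul,
        Finset.sum_sub_distrib, hrow i]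
  obtain ⟨w, hw0, hwv⟩ := (Matrix.exists_mulVec_eq_zero_iff).mpr hdet
  have hfix : ∀ j, ∑ i, w i * P i j = w j := by
    intro j
    have := congrFun hwv j
    simp only [Matrix.mulVec, dotProduct, Matrix.transpose_apply, Matrix.sub_apply,
      Matrix.one_apply, Pi.zero_apply, sub_mul, Finset.sum_sub_distrib] at this
    have h2 : ∑ i, (if i = j then (1 : ℝ) else 0) * w i = w j := by simp
    rw [h2] at this
    have h3 := sub_eq_zero.mp this
    calc ∑ i, w i * P i j = ∑ i, P i j * w i := by
          exact Finset.sum_congr rfl fun i _ => mul_comm _ _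
      _ = w j := h3
  have hs : ∑ i, w i ≠ 0 := sum_ne_zero_of_fixed P hpos hrow w hw0 hfix
  set s : ℝ := ∑ i, w i with hs_def
  set w' : Fin n → ℝ := fun i => s⁻¹ * w i with hw'_def
  have hw'fix : ∀ j, ∑ i, w' i * P i j = w' j := by
    intro j
    simp only [hw'_def, mul_assoc, ← Finset.mul_sum, hfix j]
  have hw'sum : ∑ i, w' i = 1 := by
    simp only [hw'_def, ← Finset.mul_sum, ← hs_def]
    exact inv_mul_cancel₀ hs
  set u : Fin n → ℝ := fun j => w' j - v j with hu_def
  have husum : ∑ j, u j = 0 := by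
    simp only [hu_def, Finset.sum_sub_distrib, hw'sum, hvsum, sub_self]
  have hJuJu : Jmat u * Jmat u = 0 := by
    rw [Jmat_mul_Jmat, husum, zero_smul]
  set M : Matrix (Fin n) (Fin n) ℝ := 1 + Jmat u with hM_def
  have hMinv : M * (1 - Jmat u) = 1 := by
    rw [hM_def]
    rw [add_mul, one_mul, mul_sub, mul_one, hJuJu]
    abel
  have hMinv' : (1 - Jmat u) * M = 1 := by
    rw [hM_def]
    rw [mul_add, mul_one, sub_mul, one_mul, hJuJu]
    abel
  have hMunit : IsUnit M := ⟨⟨M, 1 - Jmat u, hMinv, hMinv'⟩, rfl⟩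
  refine ⟨M, hMunit, ?_⟩
  rw [Matrix.inv_eq_right_inv hMinv]
  -- now compute (1 + J_u) * P * (1 - J_u)
  have hPJu : P * Jmat u = Jmat u := mul_Jmat P hrow u
  have hJuP : Jmat u * P = Jmat (fun j => ∑ i, u i * P i j) := Jmat_mul u P
  have hexp : M * P * (1 - Jmat u)
      = P + Jmat u * P - (P * Jmat u + Jmat u * (P * Jmat u)) := by
    rw [hM_def]; noncomm_ring
  rw [hexp, hPJu, hJuP, Jmat_mul_Jmat, husum, zero_smul, add_zero]
  -- final entrywise identity
  ext i j
  simp only [Matrix.add_apply, Matrix.sub_apply, Matrix.mul_apply, Jmat, Matrix.of_apply,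
    Matrix.one_apply, Matrix.sub_apply]
  have h1 : ∑ k, v k * ((if k = j then (1:ℝ) else 0) - P k j)
      = v j - ∑ k, v k * P k j := by
    simp [mul_sub, Finset.sum_sub_distrib, mul_ite]
  have h2 : ∑ k, u k * P k j = w' j - ∑ k, v k * P k j := by
    simp only [hu_def, sub_mul, Finset.sum_sub_distrib, hw'fix j]
  rw [h1, h2]
  simp only [hu_def]
  ring
end

section
/- Let 𝕌 be a subfield of ℝ and let P be an n×n positive stochastic matrix with entries in 𝕌. If the matrix P + J_n(I_n − P) is positive, then P is similar over 𝕌 to a positive doubly stochastic matrix Q, and P is strong shift equivalent over 𝕌₊ to Q through a chain consisting entirely of n×n matrices. -/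
open Matrix BigOperators

/-- Elementary strong shift equivalence between `n × n` real matrices, with all entries of the
connecting matrices lying in the set `S ⊆ ℝ`. -/
def ESSEn (S : Set ℝ) {n : ℕ} (A B : Matrix (Fin n) (Fin n) ℝ) : Prop :=
  ∃ U V : Matrix (Fin n) (Fin n) ℝ,
    (∀ i j, U i j ∈ S) ∧ (∀ i j, V i j ∈ S) ∧ A = U * V ∧ B = V * U

/-- Strong shift equivalence through matrices of the same size `n`: a finite chain of
elementary strong shift equivalences, all between `n × n` matrices. -/
def SSEn (S : Set ℝ) {n : ℕ} (A B : Matrix (Fin n) (Fin n) ℝ) : Prop :=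
  Relation.ReflTransGen (ESSEn S) A B

/-- `A` and `B` are similar via a conjugating matrix invertible over `U ⊆ ℝ`. -/
def SimilarOver (U : Set ℝ) {n : ℕ} (A B : Matrix (Fin n) (Fin n) ℝ) : Prop :=
  ∃ M : Matrix (Fin n) (Fin n) ℝ, IsUnit M ∧ (∀ i j, M i j ∈ U) ∧
    (∀ i j, M⁻¹ i j ∈ U) ∧ B = M * A * M⁻¹

/-- `Jconst n` is the `n × n` matrix all of whose entries are `1/n`. -/
noncomputable def Jconst (n : ℕ) : Matrix (Fin n) (Fin n) ℝ :=
  Matrix.of fun _ _ => (1 : ℝ) / n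

lemma det_mem_subfield (𝕌 : Subfield ℝ) {k : ℕ} (A : Matrix (Fin k) (Fin k) ℝ)
    (h : ∀ i j, A i j ∈ 𝕌) : A.det ∈ 𝕌 := by
  rw [Matrix.det_apply]
  exact Subfield.sum_mem _ fun σ _ => zsmul_mem (Subfield.prod_mem _ fun i _ => h _ _) _

lemma inv_mem_subfield (𝕌 : Subfield ℝ) {k : ℕ} (A : Matrix (Fin k) (Fin k) ℝ)
    (h : ∀ i j, A i j ∈ 𝕌) : ∀ i j, A⁻¹ i j ∈ 𝕌 := by
  intro i j
  rw [Matrix.inv_def, Matrix.smul_apply, smul_eq_mul, Ring.inverse_eq_inv]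
  refine mul_mem (inv_mem (det_mem_subfield 𝕌 A h)) ?_
  rw [Matrix.adjugate_apply]
  refine det_mem_subfield 𝕌 _ fun a b => ?_
  rw [Matrix.updateRow_apply]
  by_cases hab : a = j
  · simp only [hab, if_true]
    rw [Pi.single_apply]
    split <;> simp [Subfield.one_mem, Subfield.zero_mem]
  · simpa [hab] using h a b

lemma scalar_key (kk mm nn G W PP : ℝ) (hDne : kk + 2*nn*(mm-kk) ≠ 0) (hmne : mm ≠ 0) :
    (PP + kk/mm * G) * (1 + (kk + 2*nn*(mm-kk))⁻¹ * (1 - 2*nn))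
    = (PP + ((kk+1)/mm) * G + (kk + 2*nn*(mm-kk))⁻¹ * (W - 2)) *
        (1 + (kk + 2*nn*(mm-kk))⁻¹ * (1 - 2*nn))
      + (kk + 2*nn*(mm-kk))⁻¹ * ((2*(1 - nn*G) - W) + (2*nn-1) * (((kk+1)/mm) * G))
      + ((kk + 2*nn*(mm-kk))⁻¹ * (2*nn - 1)) * ((kk + 2*nn*(mm-kk))⁻¹ * (W - 2)) := by
  field_simp
  ring

/-- Let `𝕌` be a subfield of `ℝ` and `P` an `n × n` positive stochastic matrix
over `𝕌`. If `P + Jₙ(I - P)` is positive, then `P` is similar over `𝕌` to a positive doubly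
stochastic matrix `Q` over `𝕌`, and `P` is strong shift equivalent over `𝕌₊` to `Q` through
`n × n` matrices. -/
theorem stmt2 (𝕌 : Subfield ℝ) {n : ℕ} (P : Matrix (Fin n) (Fin n) ℝ)
    (hUP : ∀ i j, P i j ∈ 𝕌)
    (hpos : ∀ i j, 0 < P i j) (hrow : ∀ i, ∑ j, P i j = 1)
    (hQpos : ∀ i j, 0 < (P + Jconst n * (1 - P)) i j) :
    ∃ Q : Matrix (Fin n) (Fin n) ℝ,
      (∀ i j, Q i j ∈ 𝕌) ∧ (∀ i j, 0 < Q i j) ∧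
      (∀ i, ∑ j, Q i j = 1) ∧ (∀ j, ∑ i, Q i j = 1) ∧
      SimilarOver (𝕌 : Set ℝ) P Q ∧
      SSEn {x : ℝ | x ∈ 𝕌 ∧ 0 ≤ x} P Q := by
  rcases Nat.eq_zero_or_pos n with hn | hn
  · subst hn
    refine ⟨P, hUP, hpos, hrow, fun j => j.elim0, ⟨1, isUnit_one, fun i => i.elim0,
      fun i => i.elim0, by simp⟩, Relation.ReflTransGen.refl⟩
  haveI : NeZero n := ⟨hn.ne'⟩
  have hn0 : (n : ℝ) ≠ 0 := Nat.cast_ne_zero.2 hn.ne'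
  have h2U : (2:ℝ) ∈ 𝕌 := by
    have := natCast_mem 𝕌 2
    norm_num at this
    exact_mod_cast natCast_mem 𝕌 2
  have hn1 : (1:ℝ) ≤ (n:ℝ) := by exact_mod_cast hn
  -- the correction vector g
  set g : Fin n → ℝ := fun j => (1 - ∑ i, P i j) * (n : ℝ)⁻¹ with hgdef
  have hUg : ∀ j, g j ∈ 𝕌 := fun j =>
    mul_mem (sub_mem (one_mem _) (Subfield.sum_mem _ fun i _ => hUP i j))
      (inv_mem (natCast_mem 𝕌 n))
  have hgc : ∀ j, (n : ℝ) * g j = 1 - ∑ i, P i j := by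
    intro j; rw [hgdef]; field_simp
  have hcsum : ∑ j, ∑ i, P i j = n := by
    rw [Finset.sum_comm]
    simp [hrow]
  have hgsum : ∑ j, g j = 0 := by
    rw [hgdef]
    simp only
    rw [← Finset.sum_mul, Finset.sum_sub_distrib, hcsum]
    simp
  -- Q and its entries
  set Q := P + Jconst n * (1 - P) with hQdef
  have hQapp : ∀ i j, Q i j = P i j + g j := by
    intro i j
    rw [hQdef, Matrix.add_apply, Matrix.mul_apply]
    congr 1
    have : ∀ k, Jconst n i k * (1 - P) k j = (n:ℝ)⁻¹ * ((1:Matrix (Fin n) (Fin n) ℝ) k j - P k j) := by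
      intro k
      simp [Jconst, Matrix.sub_apply, one_div]
    rw [Finset.sum_congr rfl fun k _ => this k, ← Finset.mul_sum, Finset.sum_sub_distrib]
    have h1 : ∑ k, (1:Matrix (Fin n) (Fin n) ℝ) k j = 1 := by
      simp [Matrix.one_apply]
    rw [h1, hgdef]
    ring
  have hQU : ∀ i j, Q i j ∈ 𝕌 := fun i j => by
    rw [hQapp]; exact add_mem (hUP i j) (hUg j)
  have hQps : ∀ i j, 0 < Q i j := hQpos
  have hQrow : ∀ i, ∑ j, Q i j = 1 := by
    intro i
    rw [Finset.sum_congr rfl fun j _ => hQapp i j, Finset.sum_add_distrib, hrow, hgsum]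
    ring
  have hQcol : ∀ j, ∑ i, Q i j = 1 := by
    intro j
    rw [Finset.sum_congr rfl fun i _ => hQapp i j, Finset.sum_add_distrib]
    rw [Finset.sum_const, Finset.card_univ, Fintype.card_fin, nsmul_eq_mul, hgc]
    ring
  -- the matrix N = P - I + J is invertible
  set N : Matrix (Fin n) (Fin n) ℝ :=
    Matrix.of (fun i j => P i j - (1:Matrix (Fin n) (Fin n) ℝ) i j + (n:ℝ)⁻¹) with hNdef
  have hNU : ∀ i j, N i j ∈ 𝕌 := by
    intro i j
    show P i j - (1:Matrix (Fin n) (Fin n) ℝ) i j + (n:ℝ)⁻¹ ∈ 𝕌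
    refine add_mem (sub_mem (hUP i j) ?_) (inv_mem (natCast_mem 𝕌 n))
    rw [Matrix.one_apply]
    split <;> simp [Subfield.one_mem, Subfield.zero_mem]
  have hdelta : ∀ (x : Fin n → ℝ) (i : Fin n), ∑ j, (1:Matrix (Fin n) (Fin n) ℝ) i j * x j = x i := by
    intro x i; simp [Matrix.one_apply]
  have hdelta' : ∀ (x : Fin n → ℝ) (j : Fin n), ∑ i, x i * (1:Matrix (Fin n) (Fin n) ℝ) i j = x j := by
    intro x j; simp [Matrix.one_apply]
  have hNdet : N.det ≠ 0 := by
    intro h0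
    obtain ⟨v, hv0, hNv⟩ := (Matrix.exists_mulVec_eq_zero_iff).2 h0
    have hNvi : ∀ i, (∑ j, P i j * v j) - v i + (∑ j, v j) * (n:ℝ)⁻¹ = 0 := by
      intro i
      have := congrFun hNv i
      rw [Matrix.mulVec, dotProduct] at this
      calc (∑ j, P i j * v j) - v i + (∑ j, v j) * (n:ℝ)⁻¹
          = ∑ j, N i j * v j := by
            show _ = ∑ j, (P i j - (1:Matrix (Fin n) (Fin n) ℝ) i j + (n:ℝ)⁻¹) * v j
            rw [Finset.sum_congr rfl (fun j _ => by ring_nf :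
              ∀ j ∈ Finset.univ, (P i j - (1:Matrix (Fin n) (Fin n) ℝ) i j + (n:ℝ)⁻¹) * v j =
                P i j * v j - (1:Matrix (Fin n) (Fin n) ℝ) i j * v j + (n:ℝ)⁻¹ * v j)]
            rw [Finset.sum_add_distrib, Finset.sum_sub_distrib, hdelta, ← Finset.mul_sum]
            ring
        _ = 0 := this
    -- bounds at maximizers/minimizers
    have hub : ∀ i, (∀ j, v j ≤ v i) → (∑ j, P i j * v j) ≤ v i := by
      intro i hi
      calc ∑ j, P i j * v j ≤ ∑ j, P i j * v i :=
            Finset.sum_le_sum fun j _ => mul_le_mul_of_nonneg_left (hi j) (hpos i j).le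
        _ = v i := by rw [← Finset.sum_mul, hrow]; ring
    have hlb : ∀ i, (∀ j, v i ≤ v j) → v i ≤ (∑ j, P i j * v j) := by
      intro i hi
      calc v i = ∑ j, P i j * v i := by rw [← Finset.sum_mul, hrow]; ring
        _ ≤ ∑ j, P i j * v j :=
            Finset.sum_le_sum fun j _ => mul_le_mul_of_nonneg_left (hi j) (hpos i j).le
    obtain ⟨i0, -, hi0⟩ := Finset.exists_max_image Finset.univ v ⟨⟨0, hn⟩, Finset.mem_univ _⟩
    obtain ⟨i1, -, hi1⟩ := Finset.exists_min_image Finset.univ v ⟨⟨0, hn⟩, Finset.mem_univ _⟩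
    have hσnn : 0 ≤ ∑ j, v j := by
      have h0 := hNvi i0
      have h1 := hub i0 (fun j => hi0 j (Finset.mem_univ _))
      have hninv : 0 < (n:ℝ)⁻¹ := by positivity
      nlinarith
    have hσnp : ∑ j, v j ≤ 0 := by
      have h0 := hNvi i1
      have h1 := hlb i1 (fun j => hi1 j (Finset.mem_univ _))
      have hninv : 0 < (n:ℝ)⁻¹ := by positivity
      nlinarith
    have hσ : ∑ j, v j = 0 := le_antisymm hσnp hσnn
    have heig : ∀ i, ∑ j, P i j * v j = v i := by
      intro i
      have := hNvi i
      rw [hσ] at this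
      linarith
    have hconst : ∀ j, v j = v i0 := by
      have hzero : ∑ j, P i0 j * (v i0 - v j) = 0 := by
        rw [Finset.sum_congr rfl (fun j _ => mul_sub (P i0 j) (v i0) (v j)),
          Finset.sum_sub_distrib, ← Finset.sum_mul, hrow, heig]
        ring
      intro j
      have hj := (Finset.sum_eq_zero_iff_of_nonneg (fun j _ =>
        mul_nonneg (hpos i0 j).le (sub_nonneg.2 (hi0 j (Finset.mem_univ _))))).1 hzero j
        (Finset.mem_univ _)
      rcases mul_eq_zero.1 hj with h | h
      · exact absurd h (hpos i0 j).ne'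
      · linarith [sub_eq_zero.1 h]
    have hvi0 : v i0 = 0 := by
      have h2 : ∑ j, v j = (n:ℝ) * v i0 := by
        rw [Finset.sum_congr rfl fun j _ => hconst j]
        simp [Finset.sum_const, Finset.card_univ, mul_comm]
      rw [hσ] at h2
      rcases mul_eq_zero.1 h2.symm with h | h
      · exact absurd h hn0
      · exact h
    exact hv0 (funext fun j => by rw [hconst j, hvi0]; rfl)
  -- the left Perron vector w
  have hNinvU : ∀ i j, N⁻¹ i j ∈ 𝕌 := inv_mem_subfield 𝕌 N hNU
  set w : Fin n → ℝ := fun j => (n:ℝ)⁻¹ * ∑ i, N⁻¹ i j with hwdef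
  have hUw : ∀ j, w j ∈ 𝕌 := fun j =>
    mul_mem (inv_mem (natCast_mem 𝕌 n)) (Subfield.sum_mem _ fun i _ => hNinvU i j)
  have hwN : ∀ j, ∑ i, w i * N i j = (n:ℝ)⁻¹ := by
    intro j
    have hNN : N⁻¹ * N = 1 := Matrix.nonsing_inv_mul N (isUnit_iff_ne_zero.2 hNdet)
    have hvm : ((fun _ => (1:ℝ)) ᵥ* N⁻¹) ᵥ* N = fun _ => (1:ℝ) := by
      rw [Matrix.vecMul_vecMul, hNN, Matrix.vecMul_one]
    have hvmj := congrFun hvm j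
    rw [Matrix.vecMul, dotProduct] at hvmj
    calc ∑ i, w i * N i j = (n:ℝ)⁻¹ * ∑ i, ((fun _ => (1:ℝ)) ᵥ* N⁻¹) i * N i j := by
          rw [Finset.mul_sum]
          refine Finset.sum_congr rfl fun i _ => ?_
          rw [hwdef]
          simp only [Matrix.vecMul, dotProduct, one_mul]
          ring
      _ = (n:ℝ)⁻¹ * 1 := by rw [hvmj]
      _ = (n:ℝ)⁻¹ := mul_one _
  have hexp : ∀ j, ∑ i, w i * N i j = (∑ i, w i * P i j) - w j + (∑ i, w i) * (n:ℝ)⁻¹ := by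
    intro j
    show ∑ i, w i * (P i j - (1:Matrix (Fin n) (Fin n) ℝ) i j + (n:ℝ)⁻¹) = _
    rw [Finset.sum_congr rfl (fun i _ => by ring_nf :
      ∀ i ∈ Finset.univ, w i * (P i j - (1:Matrix (Fin n) (Fin n) ℝ) i j + (n:ℝ)⁻¹) =
        w i * P i j - w i * (1:Matrix (Fin n) (Fin n) ℝ) i j + w i * (n:ℝ)⁻¹)]
    rw [Finset.sum_add_distrib, Finset.sum_sub_distrib, hdelta', ← Finset.sum_mul]
  have hwN' : ∀ j, (∑ i, w i * P i j) - w j + (∑ i, w i) * (n:ℝ)⁻¹ = (n:ℝ)⁻¹ := by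
    intro j
    rw [← hexp j]
    exact hwN j
  have hwsum : ∑ i, w i = 1 := by
    have htot := Finset.sum_congr rfl (fun j (_ : j ∈ Finset.univ) => hwN' j)
    rw [Finset.sum_add_distrib, Finset.sum_sub_distrib] at htot
    have h1 : ∑ x : Fin n, ∑ i : Fin n, w i * P i x = ∑ i, w i := by
      rw [Finset.sum_comm]
      exact Finset.sum_congr rfl fun i _ => by rw [← Finset.mul_sum, hrow i, mul_one]
    rw [h1, Finset.sum_const, Finset.sum_const, Finset.card_univ, Fintype.card_fin,
      nsmul_eq_mul, nsmul_eq_mul] at htot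
    have hnn : (n:ℝ) * (n:ℝ)⁻¹ = 1 := by field_simp
    nlinarith [htot]
  have hwP : ∀ j, ∑ i, w i * P i j = w j := by
    intro j
    have := hwN' j
    rw [hwsum, one_mul] at this
    linarith
  -- w is nonnegative
  have hwnn : ∀ i, 0 ≤ w i := by
    by_contra hcon
    push_neg at hcon
    obtain ⟨q, hq⟩ := hcon
    have habs : ∀ j, |w j| ≤ ∑ i, |w i| * P i j := by
      intro j
      rw [← hwP j]
      calc |∑ i, w i * P i j| ≤ ∑ i, |w i * P i j| := Finset.abs_sum_le_sum_abs _ _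
        _ = ∑ i, |w i| * P i j := Finset.sum_congr rfl fun i _ => by
            rw [abs_mul, abs_of_pos (hpos i j)]
    have htot2 : ∑ j, ∑ i, |w i| * P i j = ∑ i, |w i| := by
      rw [Finset.sum_comm]
      exact Finset.sum_congr rfl fun i _ => by rw [← Finset.mul_sum, hrow, mul_one]
    have heq : ∀ j, |w j| = ∑ i, |w i| * P i j := by
      have hz : ∑ j, ((∑ i, |w i| * P i j) - |w j|) = 0 := by
        rw [Finset.sum_sub_distrib, htot2, sub_self]
      intro j
      have := (Finset.sum_eq_zero_iff_of_nonneg (fun j _ => sub_nonneg.2 (habs j))).1 hz j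
        (Finset.mem_univ _)
      linarith
    have hex : ∃ p, 0 < w p := by
      by_contra hc
      push_neg at hc
      have : ∑ i, w i ≤ 0 := Finset.sum_nonpos (fun i _ => hc i)
      rw [hwsum] at this
      linarith
    obtain ⟨p, hp⟩ := hex
    set j0 : Fin n := ⟨0, hn⟩
    rcases le_or_gt 0 (w j0) with hj0 | hj0
    · have hz2 : ∑ i, (|w i| - w i) * P i j0 = 0 := by
        rw [Finset.sum_congr rfl fun i _ => sub_mul (|w i|) (w i) (P i j0),
          Finset.sum_sub_distrib, ← heq j0, hwP j0, abs_of_nonneg hj0, sub_self]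
      have := (Finset.sum_eq_zero_iff_of_nonneg (fun i _ =>
        mul_nonneg (sub_nonneg.2 (le_abs_self _)) (hpos i j0).le)).1 hz2 q (Finset.mem_univ _)
      rcases mul_eq_zero.1 this with h | h
      · have := abs_of_neg hq
        nlinarith [sub_eq_zero.1 h]
      · exact absurd h (hpos q j0).ne'
    · have hz2 : ∑ i, (|w i| + w i) * P i j0 = 0 := by
        rw [Finset.sum_congr rfl fun i _ => add_mul (|w i|) (w i) (P i j0),
          Finset.sum_add_distrib, ← heq j0, hwP j0, abs_of_neg hj0]
        ring
      have := (Finset.sum_eq_zero_iff_of_nonneg (fun i _ =>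
        mul_nonneg (by linarith [neg_abs_le (w i)]) (hpos i j0).le)).1 hz2 p (Finset.mem_univ _)
      rcases mul_eq_zero.1 this with h | h
      · nlinarith [le_abs_self (w p), abs_nonneg (w p)]
      · exact absurd h (hpos p j0).ne'
  have hwle : ∀ i, w i ≤ 1 := by
    intro i
    rw [← hwsum]
    exact Finset.single_le_sum (fun i _ => hwnn i) (Finset.mem_univ i)
  -- the similarity
  set v : Fin n → ℝ := fun j => w j - (n:ℝ)⁻¹ with hvdef
  have hvsum : ∑ j, v j = 0 := by
    rw [hvdef]
    rw [Finset.sum_sub_distrib, hwsum, Finset.sum_const, Finset.card_univ, Fintype.card_fin,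
      nsmul_eq_mul]
    field_simp
    ring
  set M : Matrix (Fin n) (Fin n) ℝ := 1 + Matrix.of (fun _ j => v j) with hMdef
  set Minv : Matrix (Fin n) (Fin n) ℝ := 1 - Matrix.of (fun _ j => v j) with hMinvdef
  have hone : ∀ i : Fin n, ∑ l, (1:Matrix (Fin n) (Fin n) ℝ) i l = 1 := by
    intro i; simp [Matrix.one_apply]
  have hMMinv : M * Minv = 1 := by
    ext i j
    rw [Matrix.mul_apply]
    have hterm : ∀ l, M i l * Minv l j =
        (1:Matrix (Fin n) (Fin n) ℝ) i l * (1:Matrix (Fin n) (Fin n) ℝ) l j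
        - (1:Matrix (Fin n) (Fin n) ℝ) i l * v j
        + v l * (1:Matrix (Fin n) (Fin n) ℝ) l j - v l * v j := by
      intro l
      show ((1:Matrix (Fin n) (Fin n) ℝ) i l + v l) *
        ((1:Matrix (Fin n) (Fin n) ℝ) l j - v j) = _
      ring
    rw [Finset.sum_congr rfl fun l _ => hterm l, Finset.sum_sub_distrib,
      Finset.sum_add_distrib, Finset.sum_sub_distrib]
    rw [hdelta (fun l => (1:Matrix (Fin n) (Fin n) ℝ) l j) i, ← Finset.sum_mul, hone,
      hdelta' v j, ← Finset.sum_mul, hvsum]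
    ring
  have hMinvM : Minv * M = 1 := by
    ext i j
    rw [Matrix.mul_apply]
    have hterm : ∀ l, Minv i l * M l j =
        (1:Matrix (Fin n) (Fin n) ℝ) i l * (1:Matrix (Fin n) (Fin n) ℝ) l j
        + (1:Matrix (Fin n) (Fin n) ℝ) i l * v j
        - v l * (1:Matrix (Fin n) (Fin n) ℝ) l j - v l * v j := by
      intro l
      show ((1:Matrix (Fin n) (Fin n) ℝ) i l - v l) *
        ((1:Matrix (Fin n) (Fin n) ℝ) l j + v j) = _
      ring
    rw [Finset.sum_congr rfl fun l _ => hterm l, Finset.sum_sub_distrib, Finset.sum_sub_distrib,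
      Finset.sum_add_distrib]
    rw [hdelta (fun l => (1:Matrix (Fin n) (Fin n) ℝ) l j) i, ← Finset.sum_mul, hone,
      hdelta' v j, ← Finset.sum_mul, hvsum]
    ring
  have hMunit : IsUnit M := ⟨⟨M, Minv, hMMinv, hMinvM⟩, rfl⟩
  have hMinveq : M⁻¹ = Minv := Matrix.inv_eq_right_inv hMMinv
  have honeU : ∀ i j : Fin n, (1:Matrix (Fin n) (Fin n) ℝ) i j ∈ 𝕌 := by
    intro i j
    rw [Matrix.one_apply]
    split <;> simp [Subfield.one_mem, Subfield.zero_mem]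
  have hvU : ∀ j, v j ∈ 𝕌 := fun j => sub_mem (hUw j) (inv_mem (natCast_mem 𝕌 n))
  have hMU : ∀ i j, M i j ∈ 𝕌 := by
    intro i j
    show (1:Matrix (Fin n) (Fin n) ℝ) i j + v j ∈ 𝕌
    exact add_mem (honeU i j) (hvU j)
  have hMinvU : ∀ i j, M⁻¹ i j ∈ 𝕌 := by
    intro i j
    rw [hMinveq]
    show (1:Matrix (Fin n) (Fin n) ℝ) i j - v j ∈ 𝕌
    exact sub_mem (honeU i j) (hvU j)
  have hMP : ∀ i l, (M * P) i l = P i l + (w l - (n:ℝ)⁻¹ * ∑ a, P a l) := by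
    intro i l
    rw [Matrix.mul_apply]
    have hterm : ∀ k, M i k * P k l =
        (1:Matrix (Fin n) (Fin n) ℝ) i k * P k l + w k * P k l - (n:ℝ)⁻¹ * P k l := by
      intro k
      show ((1:Matrix (Fin n) (Fin n) ℝ) i k + (w k - (n:ℝ)⁻¹)) * P k l = _
      ring
    rw [Finset.sum_congr rfl fun k _ => hterm k, Finset.sum_sub_distrib,
      Finset.sum_add_distrib, hdelta (fun k => P k l) i, hwP l, ← Finset.mul_sum]
    ring
  have hsim : Q = M * P * M⁻¹ := by
    rw [hMinveq]
    ext i j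
    rw [Matrix.mul_apply]
    have hMProw : ∑ l, (M * P) i l = 1 := by
      rw [Finset.sum_congr rfl fun l _ => hMP i l, Finset.sum_add_distrib, hrow,
        Finset.sum_sub_distrib, hwsum, ← Finset.mul_sum, hcsum]
      field_simp
      ring
    have hterm : ∀ l, (M * P) i l * Minv l j =
        (M * P) i l * (1:Matrix (Fin n) (Fin n) ℝ) l j - (M * P) i l * v j := by
      intro l
      show (M * P) i l * ((1:Matrix (Fin n) (Fin n) ℝ) l j - v j) = _
      ring
    rw [Finset.sum_congr rfl fun l _ => hterm l, Finset.sum_sub_distrib,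
      hdelta' (fun l => (M * P) i l) j, ← Finset.sum_mul, hMProw, hMP i j, hQapp]
    rw [hvdef, hgdef]
    ring
  clear_value g Q N w v M Minv
  -- lower bound on entries
  haveI : Nonempty (Fin n) := ⟨⟨0, hn⟩⟩
  obtain ⟨m₀, hm₀pos, hm₀P, hm₀Q⟩ :
      ∃ t : ℝ, 0 < t ∧ (∀ i j, t ≤ P i j) ∧ (∀ i j, t ≤ Q i j) := by
    refine ⟨Finset.univ.inf' Finset.univ_nonempty
      (fun p : Fin n × Fin n => min (P p.1 p.2) (Q p.1 p.2)), ?_, ?_, ?_⟩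
    · rw [Finset.lt_inf'_iff]
      exact fun p _ => lt_min (hpos p.1 p.2) (hQps p.1 p.2)
    · exact fun i j =>
        le_trans (Finset.inf'_le _ (Finset.mem_univ (i, j))) (min_le_left _ _)
    · exact fun i j =>
        le_trans (Finset.inf'_le _ (Finset.mem_univ (i, j))) (min_le_right _ _)
  -- the number of steps
  obtain ⟨m, hmpos, hm2n, hm₀m⟩ :
      ∃ m : ℕ, 0 < m ∧ 2 * n ≤ m ∧ 2 / (m:ℝ) ≤ m₀ := by
    refine ⟨2 * n + Nat.ceil ((2:ℝ) / m₀), by omega, Nat.le_add_right _ _, ?_⟩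
    have hmR : (0:ℝ) < (2 * n + Nat.ceil ((2:ℝ) / m₀) : ℕ) := by
      have : 0 < 2 * n + Nat.ceil ((2:ℝ) / m₀) := by omega
      exact_mod_cast this
    have h1 : (2:ℝ) / m₀ ≤ ((2 * n + Nat.ceil ((2:ℝ) / m₀) : ℕ) : ℝ) := by
      refine le_trans (Nat.le_ceil _) ?_
      exact_mod_cast Nat.le_add_left _ _
    rw [div_le_iff₀ hm₀pos] at h1
    rw [div_le_iff₀ hmR]
    nlinarith
  have hmR : (0:ℝ) < m := by exact_mod_cast hmpos
  have hm2nR : 2 * (n:ℝ) ≤ (m:ℝ) := by exact_mod_cast hm2n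
  -- the interpolating path
  set A : ℕ → Matrix (Fin n) (Fin n) ℝ :=
    fun k => Matrix.of (fun i j => P i j + ((k:ℝ) / (m:ℝ)) * g j) with hAdef
  have hAk : ∀ k i j, A k i j = P i j + ((k:ℝ) / (m:ℝ)) * g j := fun k i j => rfl
  have hA0 : A 0 = P := by
    ext i j
    rw [hAk]
    simp
  have hAm : A m = Q := by
    ext i j
    rw [hAk, div_self (ne_of_gt hmR), one_mul, hQapp]
  have hAU : ∀ k i j, A k i j ∈ 𝕌 := by
    intro k i j
    rw [hAk]
    exact add_mem (hUP i j)
      (mul_mem (div_mem (natCast_mem 𝕌 k) (natCast_mem 𝕌 m)) (hUg j))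
  have hAbd : ∀ k : ℕ, k ≤ m → ∀ i j, m₀ ≤ A k i j := by
    intro k hk i j
    have hA2 : A k i j = (1 - (k:ℝ)/m) * P i j + ((k:ℝ)/m) * Q i j := by
      rw [hAk, hQapp]
      ring
    have h0 : (0:ℝ) ≤ (k:ℝ)/m := by positivity
    have h1 : (k:ℝ)/m ≤ 1 := by
      rw [div_le_one hmR]
      exact_mod_cast hk
    nlinarith [hm₀P i j, hm₀Q i j]
  clear_value A
  -- one elementary step
  have hstep : ∀ k, k < m → ESSEn {x : ℝ | x ∈ 𝕌 ∧ 0 ≤ x} (A k) (A (k+1)) := by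
    intro k hk
    have hkm : (k:ℝ) ≤ (m:ℝ) := by exact_mod_cast le_of_lt hk
    obtain ⟨D, hDdef⟩ : ∃ D : ℝ, D = (k:ℝ) + 2*(n:ℝ)*((m:ℝ) - (k:ℝ)) := ⟨_, rfl⟩
    have hDm : (m:ℝ) ≤ D := by
      have h5 : 0 ≤ (2*(n:ℝ)-1)*((m:ℝ)-(k:ℝ)) :=
        mul_nonneg (by linarith only [hn1]) (by linarith only [hkm])
      have h6 : D = (m:ℝ) + ((2*(n:ℝ)-1)*((m:ℝ)-(k:ℝ)) - ((m:ℝ)-(k:ℝ))) + ((m:ℝ)-(k:ℝ)) := by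
        rw [hDdef]; ring
      rw [h6]
      linarith only [h5, hkm]
    have hD0 : 0 < D := lt_of_lt_of_le hmR hDm
    obtain ⟨α, hαdef⟩ : ∃ a : ℝ, a = D⁻¹ := ⟨_, rfl⟩
    have hα0 : 0 < α := hαdef ▸ inv_pos.2 hD0
    have hαD : α * D = 1 := by
      rw [hαdef]
      exact inv_mul_cancel₀ (ne_of_gt hD0)
    have hαm : α ≤ (m:ℝ)⁻¹ := by
      rw [hαdef]
      exact inv_anti₀ hmR hDm
    obtain ⟨s, hsdef⟩ : ∃ s : ℝ, s = α * (1 - 2*(n:ℝ)) := ⟨_, rfl⟩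
    have h1s : 0 < 1 + s := by
      have heq : 1 + s = α * (D + 1 - 2*(n:ℝ)) := by
        rw [hsdef]
        linear_combination -hαD
      rw [heq]
      apply mul_pos hα0
      linarith only [hDm, hm2nR]
    obtain ⟨ε, hεval⟩ : ∃ e : Fin n → ℝ, ∀ j, e j = α * (w j - 2) := ⟨_, fun _ => rfl⟩
    obtain ⟨b, hbval⟩ : ∃ b : Fin n → ℝ, ∀ j, b j = (α * (2 - w j)) / (1 + s) :=
      ⟨_, fun _ => rfl⟩
    have hεnp : ∀ j, ε j ≤ 0 := by
      intro j
      rw [hεval]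
      exact mul_nonpos_of_nonneg_of_nonpos hα0.le (by linarith only [hwle j])
    have hεlb : ∀ j, -m₀ ≤ ε j := by
      intro j
      rw [hεval]
      have h2 : α * (-2) ≤ α * (w j - 2) :=
        mul_le_mul_of_nonneg_left (by linarith only [hwnn j]) hα0.le
      have h3 : 2 * α ≤ 2 / (m:ℝ) := by
        rw [div_eq_mul_inv]
        linarith only [hαm]
      linarith only [hm₀m, h2, h3]
    have hb0 : ∀ j, 0 ≤ b j := by
      intro j
      rw [hbval]
      exact div_nonneg (mul_nonneg hα0.le (by linarith only [hwle j])) h1s.le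
    have hDU : D ∈ 𝕌 := by
      rw [hDdef]
      exact add_mem (natCast_mem 𝕌 k)
        (mul_mem (mul_mem h2U (natCast_mem 𝕌 n))
          (sub_mem (natCast_mem 𝕌 m) (natCast_mem 𝕌 k)))
    have hαU : α ∈ 𝕌 := hαdef ▸ inv_mem hDU
    have hsU : s ∈ 𝕌 := hsdef ▸ mul_mem hαU (sub_mem (one_mem _)
      (mul_mem h2U (natCast_mem 𝕌 n)))
    have hεU : ∀ j, ε j ∈ 𝕌 := fun j =>
      (hεval j) ▸ mul_mem hαU (sub_mem (hUw j) h2U)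
    have hbU : ∀ j, b j ∈ 𝕌 := fun j => (hbval j) ▸
      div_mem (mul_mem hαU (sub_mem h2U (hUw j))) (add_mem (one_mem _) hsU)
    obtain ⟨U, hUapp⟩ : ∃ U : Matrix (Fin n) (Fin n) ℝ,
        ∀ i j, U i j = (1:Matrix (Fin n) (Fin n) ℝ) i j + b j :=
      ⟨Matrix.of fun i j => (1:Matrix (Fin n) (Fin n) ℝ) i j + b j, fun _ _ => rfl⟩
    obtain ⟨V, hVapp⟩ : ∃ V : Matrix (Fin n) (Fin n) ℝ,
        ∀ i j, V i j = A (k+1) i j + ε j :=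
      ⟨Matrix.of fun i j => A (k+1) i j + ε j, fun _ _ => rfl⟩
    have hUS : ∀ i j, U i j ∈ {x : ℝ | x ∈ 𝕌 ∧ 0 ≤ x} := by
      intro i j
      rw [hUapp]
      constructor
      · exact add_mem (honeU i j) (hbU j)
      · have h4 : (0:ℝ) ≤ (1:Matrix (Fin n) (Fin n) ℝ) i j := by
          rw [Matrix.one_apply]
          split <;> norm_num
        linarith [hb0 j]
    have hVS : ∀ i j, V i j ∈ {x : ℝ | x ∈ 𝕌 ∧ 0 ≤ x} := by
      intro i j
      rw [hVapp]
      constructor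
      · exact add_mem (hAU (k+1) i j) (hεU j)
      · linarith [hAbd (k+1) hk i j, hεlb j]
    -- sums
    have hsumε : ∑ l, ε l = s := by
      rw [Finset.sum_congr rfl fun l _ => hεval l, ← Finset.mul_sum, Finset.sum_sub_distrib,
        hwsum, Finset.sum_const, Finset.card_univ, Fintype.card_fin, nsmul_eq_mul, hsdef]
      ring
    have hb1s : ∀ j, b j * (1 + s) = α * (2 - w j) := by
      intro j
      rw [hbval, div_mul_cancel₀ _ (ne_of_gt h1s)]
    have hsumb : (∑ l, b l) * (1 + s) = α * (2*(n:ℝ) - 1) := by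
      rw [Finset.sum_mul, Finset.sum_congr rfl fun l _ => hb1s l, ← Finset.mul_sum,
        Finset.sum_sub_distrib, hwsum, Finset.sum_const, Finset.card_univ, Fintype.card_fin,
        nsmul_eq_mul]
      ring
    have htp : ∀ l j', A (k+1) l j' = P l j' + (((k:ℝ)+1) / m) * g j' := by
      intro l j'
      rw [hAk]
      push_cast
      ring
    have h2wsum : ∑ l, (2 - w l) = 2*(n:ℝ) - 1 := by
      rw [Finset.sum_sub_distrib, hwsum, Finset.sum_const, Finset.card_univ,
        Fintype.card_fin, nsmul_eq_mul]
      ring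
    have h2wP : ∀ j, ∑ l, (2 - w l) * P l j = 2*(∑ a, P a j) - w j := by
      intro j
      rw [Finset.sum_congr rfl fun l _ => sub_mul 2 (w l) (P l j), Finset.sum_sub_distrib,
        hwP j, ← Finset.mul_sum]
    have hbA : ∀ j, (∑ l, b l * A (k+1) l j) * (1 + s)
        = α * ((2*(∑ a, P a j) - w j) + (2*(n:ℝ)-1) * ((((k:ℝ)+1)/m) * g j)) := by
      intro j
      rw [Finset.sum_mul]
      have e1 : ∀ l, b l * A (k+1) l j * (1 + s)
          = (2 - w l) * P l j * α + (2 - w l) * α * ((((k:ℝ)+1)/m) * g j) := by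
        intro l
        have e2 : b l * A (k+1) l j * (1 + s) = (b l * (1+s)) * A (k+1) l j := by ring
        rw [e2, hb1s l, htp l j]
        ring
      rw [Finset.sum_congr rfl fun l _ => e1 l, Finset.sum_add_distrib, ← Finset.sum_mul,
        ← Finset.sum_mul, ← Finset.sum_mul, h2wP j, h2wsum]
      ring
    have hrowA : ∀ i, ∑ l, A (k+1) i l = 1 := by
      intro i
      rw [Finset.sum_congr rfl fun l _ => hAk (k+1) i l, Finset.sum_add_distrib, hrow,
        ← Finset.mul_sum, hgsum]
      ring
    have hVU : A (k+1) = V * U := by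
      ext i j
      rw [Matrix.mul_apply]
      have hterm : ∀ l, V i l * U l j =
          (A (k+1) i l) * (1:Matrix (Fin n) (Fin n) ℝ) l j
          + ε l * (1:Matrix (Fin n) (Fin n) ℝ) l j
          + (A (k+1) i l * b j + ε l * b j) := by
        intro l
        rw [hVapp, hUapp]
        ring
      rw [Finset.sum_congr rfl fun l _ => hterm l, Finset.sum_add_distrib,
        Finset.sum_add_distrib, Finset.sum_add_distrib,
        hdelta' (fun l => A (k+1) i l) j, hdelta' ε j, ← Finset.sum_mul, ← Finset.sum_mul,
        hsumε, hrowA i]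
      rw [hεval j]
      have h7 := hb1s j
      linarith only [h7]
    have hUV : A k = U * V := by
      ext i j
      rw [Matrix.mul_apply]
      have hterm : ∀ l, U i l * V l j =
          (1:Matrix (Fin n) (Fin n) ℝ) i l * (A (k+1) l j + ε j)
          + (b l * A (k+1) l j + b l * ε j) := by
        intro l
        rw [hUapp, hVapp]
        ring
      rw [Finset.sum_congr rfl fun l _ => hterm l, Finset.sum_add_distrib,
        Finset.sum_add_distrib, hdelta (fun l => A (k+1) l j + ε j) i, ← Finset.sum_mul]
      have hmul : ∀ X Y : ℝ, X * (1+s) = Y * (1+s) → X = Y := fun X Y h =>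
        mul_right_cancel₀ (ne_of_gt h1s) h
      apply hmul
      have expand : (A (k+1) i j + ε j + (∑ l, b l * A (k+1) l j + (∑ l, b l) * ε j)) * (1+s)
          = (A (k+1) i j + ε j) * (1+s) + (∑ l, b l * A (k+1) l j) * (1+s)
            + ((∑ l, b l) * (1+s)) * ε j := by ring
      rw [expand, hbA j, hsumb]
      rw [hAk k i j, htp i j, hεval j, hsdef]
      have hc' : ∑ a, P a j = 1 - (n:ℝ) * g j := by linarith only [hgc j]
      have hαe : α = ((k:ℝ) + 2*(n:ℝ)*((m:ℝ)-(k:ℝ)))⁻¹ := by rw [hαdef, hDdef]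
      rw [hc', hαe]
      have hDne : (k:ℝ) + 2*(n:ℝ)*((m:ℝ)-(k:ℝ)) ≠ 0 := by
        rw [← hDdef]
        exact ne_of_gt hD0
      have hmne : (m:ℝ) ≠ 0 := ne_of_gt hmR
      generalize g j = G
      generalize w j = W
      generalize P i j = PP
      linear_combination scalar_key (k:ℝ) (m:ℝ) (n:ℝ) G W PP hDne hmne
    exact ⟨U, V, hUS, hVS, hUV, hVU⟩
  -- assemble the chain
  have hchain : ∀ k, k ≤ m → SSEn {x : ℝ | x ∈ 𝕌 ∧ 0 ≤ x} P (A k) := by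
    intro k
    induction k with
    | zero => intro _; rw [hA0]; exact Relation.ReflTransGen.refl
    | succ k ih =>
        intro hk
        exact Relation.ReflTransGen.tail (ih (Nat.le_of_succ_le hk)) (hstep k hk)
  have hSSE : SSEn {x : ℝ | x ∈ 𝕌 ∧ 0 ≤ x} P Q := hAm ▸ hchain m le_rfl
  exact ⟨Q, hQU, hQps, hQrow, hQcol, ⟨M, hMunit, hMU, hMinvU, hsim⟩, hSSE⟩
end

section
/- Let 𝕌 be a subfield of ℝ. Every 2×2 positive stochastic matrix with entries in 𝕌 is similar over 𝕌 to a positive doubly stochastic matrix Q and is strong shift equivalent over 𝕌₊ to Q through a chain consisting entirely of 2×2 matrices. -/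
open Matrix BigOperators

lemma esse_step2 (𝕌 : Subfield ℝ) (a b b' s t : ℝ)
    (ha : a ∈ 𝕌) (hb : b ∈ 𝕌) (hb' : b' ∈ 𝕌) (hs : s ∈ 𝕌) (ht : t ∈ 𝕌)
    (hs0 : 0 < s) (ht0 : 0 < t) (hl1 : a - b < 1)
    (m1 : 0 ≤ b'*t + (1-a)*s) (m2 : 0 ≤ (1-(a-b+b'))*t - (1-a)*s)
    (m3 : 0 ≤ b'*t - b*s) (m4 : 0 ≤ (1-(a-b+b'))*t + b*s)
    (m5 : 0 ≤ b*s + (1-(a-b+b'))*((a-b)*t)) (m6 : 0 ≤ (1-a)*s - (1-(a-b+b'))*((a-b)*t))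
    (m7 : 0 ≤ b*s - b'*((a-b)*t)) (m8 : 0 ≤ (1-a)*s + b'*((a-b)*t)) :
    ESSEn {x : ℝ | x ∈ 𝕌 ∧ 0 ≤ x} !![a, 1-a; b, 1-b] !![a-b+b', 1-(a-b+b'); b', 1-b'] := by
  have hD : (0:ℝ) < 1 - (a-b) := by linarith
  have hDne : (1 - (a-b)) ≠ 0 := ne_of_gt hD
  have hsne : s ≠ 0 := ne_of_gt hs0
  have htne : t ≠ 0 := ne_of_gt ht0
  have htD : (0:ℝ) < t * (1 - (a-b)) := by positivity
  have hsD : (0:ℝ) < s * (1 - (a-b)) := by positivity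
  have hDU : (1 - (a-b)) ∈ 𝕌 :=
    Subfield.sub_mem _ (Subfield.one_mem _) (Subfield.sub_mem _ ha hb)
  have htDU : t * (1 - (a-b)) ∈ 𝕌 := Subfield.mul_mem _ ht hDU
  have hsDU : s * (1 - (a-b)) ∈ 𝕌 := Subfield.mul_mem _ hs hDU
  have h1a : (1-a) ∈ 𝕌 := Subfield.sub_mem _ (Subfield.one_mem _) ha
  have hlU : (a-b) ∈ 𝕌 := Subfield.sub_mem _ ha hb
  have ha' : (1-(a-b+b')) ∈ 𝕌 :=
    Subfield.sub_mem _ (Subfield.one_mem _) (Subfield.add_mem _ hlU hb')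
  refine ⟨!![(b'*t + (1-a)*s)/(t*(1-(a-b))), ((1-(a-b+b'))*t - (1-a)*s)/(t*(1-(a-b)));
             (b'*t - b*s)/(t*(1-(a-b))), ((1-(a-b+b'))*t + b*s)/(t*(1-(a-b)))],
          !![(b*s + (1-(a-b+b'))*((a-b)*t))/(s*(1-(a-b))), ((1-a)*s - (1-(a-b+b'))*((a-b)*t))/(s*(1-(a-b)));
             (b*s - b'*((a-b)*t))/(s*(1-(a-b))), ((1-a)*s + b'*((a-b)*t))/(s*(1-(a-b)))],
          ?_, ?_, ?_, ?_⟩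
  · intro i j
    fin_cases i <;> fin_cases j <;>
      refine ⟨Subfield.div_mem _ ?_ htDU, div_nonneg (by assumption) htD.le⟩
    · exact Subfield.add_mem _ (Subfield.mul_mem _ hb' ht) (Subfield.mul_mem _ h1a hs)
    · exact Subfield.sub_mem _ (Subfield.mul_mem _ ha' ht) (Subfield.mul_mem _ h1a hs)
    · exact Subfield.sub_mem _ (Subfield.mul_mem _ hb' ht) (Subfield.mul_mem _ hb hs)
    · exact Subfield.add_mem _ (Subfield.mul_mem _ ha' ht) (Subfield.mul_mem _ hb hs)
  · intro i j
    fin_cases i <;> fin_cases j <;>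
      refine ⟨Subfield.div_mem _ ?_ hsDU, div_nonneg (by assumption) hsD.le⟩
    · exact Subfield.add_mem _ (Subfield.mul_mem _ hb hs) (Subfield.mul_mem _ ha' (Subfield.mul_mem _ hlU ht))
    · exact Subfield.sub_mem _ (Subfield.mul_mem _ h1a hs) (Subfield.mul_mem _ ha' (Subfield.mul_mem _ hlU ht))
    · exact Subfield.sub_mem _ (Subfield.mul_mem _ hb hs) (Subfield.mul_mem _ hb' (Subfield.mul_mem _ hlU ht))
    · exact Subfield.add_mem _ (Subfield.mul_mem _ h1a hs) (Subfield.mul_mem _ hb' (Subfield.mul_mem _ hlU ht))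
  · ext i j
    fin_cases i <;> fin_cases j <;>
      · simp [Matrix.mul_apply, Fin.sum_univ_two]
        field_simp
        ring
  · ext i j
    fin_cases i <;> fin_cases j <;>
      · simp [Matrix.mul_apply, Fin.sum_univ_two]
        field_simp
        ring

/-- The stochastic matrix with second eigenvalue `l` and lower-left entry `u`. -/
def Mst (l u : ℝ) : Matrix (Fin 2) (Fin 2) ℝ := !![l+u, 1-(l+u); u, 1-u]

lemma esse_up (𝕌 : Subfield ℝ) (l u v : ℝ)
    (hl : l ∈ 𝕌) (hu : u ∈ 𝕌) (hv : v ∈ 𝕌)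
    (hl0 : 0 ≤ l) (hl1 : l < 1) (hu0 : 0 < u) (huv : u ≤ v) (hv1 : v < 1 - l)
    (hC : l * v ≤ u * (1 - v)) :
    ESSEn {x : ℝ | x ∈ 𝕌 ∧ 0 ≤ x} (Mst l u) (Mst l v) := by
  have hp : (0:ℝ) < 1 - l - u := by linarith
  have hp' : (0:ℝ) < 1 - l - v := by linarith
  have hv0 : (0:ℝ) < v := lt_of_lt_of_le hu0 huv
  have hC' : (0:ℝ) ≤ u - l*v - u*v := by nlinarith [hC]
  have h7 : l*v*(1-l-u) ≤ u*(1-l-v) := by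
    nlinarith [mul_nonneg (by linarith : (0:ℝ) ≤ 1 - l) hC']
  have key := esse_step2 𝕌 (l+u) u v (1-l-v) (1-l-u)
    (Subfield.add_mem _ hl hu) hu hv
    (Subfield.sub_mem _ (Subfield.sub_mem _ (Subfield.one_mem _) hl) hv)
    (Subfield.sub_mem _ (Subfield.sub_mem _ (Subfield.one_mem _) hl) hu)
    (by linarith) (by linarith) (by linarith)
    (by nlinarith) (by nlinarith) (by nlinarith) (by nlinarith)
    (by nlinarith [mul_nonneg hl0 hp.le, mul_nonneg hp'.le (mul_nonneg hl0 hp.le)])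
    (by nlinarith [mul_nonneg (mul_nonneg hp'.le hp.le) (by linarith : (0:ℝ) ≤ 1 - l)])
    (by nlinarith [h7]) (by nlinarith [mul_nonneg hv0.le (mul_nonneg hl0 hp.le)])
  rw [show l+u-u+v = l+v by ring] at key
  exact key

lemma esse_down (𝕌 : Subfield ℝ) (l u v : ℝ)
    (hl : l ∈ 𝕌) (hu : u ∈ 𝕌) (hv : v ∈ 𝕌)
    (hl0 : 0 ≤ l) (hl1 : l < 1) (hu0 : 0 < u) (huv : u ≤ v) (hv1 : v < 1 - l)
    (hC : l * v ≤ u * (1 - v)) :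
    ESSEn {x : ℝ | x ∈ 𝕌 ∧ 0 ≤ x} (Mst l v) (Mst l u) := by
  have hp : (0:ℝ) < 1 - l - u := by linarith
  have hp' : (0:ℝ) < 1 - l - v := by linarith
  have hv0 : (0:ℝ) < v := lt_of_lt_of_le hu0 huv
  have hC' : (0:ℝ) ≤ u - l*v - u*v := by nlinarith [hC]
  have h7 : l*v*(1-l-u) ≤ u*(1-l-v) := by
    nlinarith [mul_nonneg (by linarith : (0:ℝ) ≤ 1 - l) hC']
  have key := esse_step2 𝕌 (l+v) v u u v
    (Subfield.add_mem _ hl hv) hv hu hu hv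
    hu0 (by linarith) (by linarith)
    (by nlinarith) (by nlinarith) (by nlinarith) (by nlinarith)
    (by nlinarith [mul_nonneg (mul_nonneg hl0 hv0.le) hp.le])
    (by nlinarith [h7])
    (by nlinarith [mul_nonneg (mul_nonneg hu0.le hv0.le) (by linarith : (0:ℝ) ≤ 1 - l)])
    (by nlinarith [mul_nonneg hp'.le hu0.le, mul_nonneg hu0.le (mul_nonneg hl0 hv0.le)])
  rw [show l+v-v+u = l+u by ring] at key
  exact key

lemma esse_neg_aux (𝕌 : Subfield ℝ) (a b t : ℝ)
    (ha : a ∈ 𝕌) (hb : b ∈ 𝕌) (ht : t ∈ 𝕌)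
    (ha0 : 0 < a) (ha1 : a < 1) (hb0 : 0 < b) (hab : a ≤ b)
    (ht1a : 1 - a ≤ t) (htb : b ≤ t) (hm5 : (b-a)*t ≤ b) (hm8 : (b-a)*t ≤ 1-a) :
    ESSEn {x : ℝ | x ∈ 𝕌 ∧ 0 ≤ x} !![a, 1-a; b, 1-b]
      !![a-b+(1-(a-b))/2, 1-(a-b+(1-(a-b))/2); (1-(a-b))/2, 1-(1-(a-b))/2] := by
  have hw0 : (0:ℝ) < (1-(a-b))/2 := by linarith
  have ht0 : (0:ℝ) < t := by linarith
  have hwU : (1-(a-b))/2 ∈ 𝕌 := by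
    refine Subfield.div_mem _ (Subfield.sub_mem _ (Subfield.one_mem _) (Subfield.sub_mem _ ha hb)) ?_
    rw [show (2:ℝ) = 1+1 by norm_num]
    exact Subfield.add_mem _ (Subfield.one_mem _) (Subfield.one_mem _)
  have key := esse_step2 𝕌 a b ((1-(a-b))/2) ((1-(a-b))/2) t
    ha hb hwU hwU ht hw0 ht0 (by linarith)
    (by nlinarith) (by nlinarith) (by nlinarith) (by nlinarith)
    (by nlinarith [mul_nonneg hw0.le (by linarith : (0:ℝ) ≤ b - (b-a)*t)])
    (by nlinarith [mul_nonneg hw0.le (mul_nonneg (by linarith : (0:ℝ) ≤ b - a) ht0.le)])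
    (by nlinarith [mul_nonneg hw0.le (mul_nonneg (by linarith : (0:ℝ) ≤ b - a) ht0.le)])
    (by nlinarith [mul_nonneg hw0.le (by linarith : (0:ℝ) ≤ (1-a) - (b-a)*t)])
  exact key

lemma esse_neg (𝕌 : Subfield ℝ) (a b : ℝ)
    (ha : a ∈ 𝕌) (hb : b ∈ 𝕌)
    (ha0 : 0 < a) (ha1 : a < 1) (hb0 : 0 < b) (hb1 : b < 1) (hab : a ≤ b) :
    ESSEn {x : ℝ | x ∈ 𝕌 ∧ 0 ≤ x} !![a, 1-a; b, 1-b]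
      !![a-b+(1-(a-b))/2, 1-(a-b+(1-(a-b))/2); (1-(a-b))/2, 1-(1-(a-b))/2] := by
  have h1a : (1-a) ∈ 𝕌 := Subfield.sub_mem _ (Subfield.one_mem _) ha
  rcases le_total (1-a) b with h|h
  · exact esse_neg_aux 𝕌 a b b ha hb hb ha0 ha1 hb0 hab h le_rfl
      (by nlinarith) (by nlinarith)
  · exact esse_neg_aux 𝕌 a b (1-a) ha hb h1a ha0 ha1 hb0 hab le_rfl h
      (by nlinarith) (by nlinarith)

lemma sse_up (𝕌 : Subfield ℝ) (l tgt : ℝ)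
    (hlU : l ∈ 𝕌) (htU : tgt ∈ 𝕌) (hl0 : 0 < l) (hl1 : l < 1)
    (ht0 : 0 < tgt) (ht1 : tgt < 1 - l) :
    ∀ n : ℕ, ∀ u : ℝ, u ∈ 𝕌 → 0 < u → u ≤ tgt →
      tgt ≤ ((1-tgt)/l)^n * u →
      SSEn {x : ℝ | x ∈ 𝕌 ∧ 0 ≤ x} (Mst l u) (Mst l tgt) := by
  set ρ : ℝ := (1-tgt)/l with hρdef
  have hρU : ρ ∈ 𝕌 := Subfield.div_mem _ (Subfield.sub_mem _ (Subfield.one_mem _) htU) hlU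
  have hρ1 : 1 < ρ := by rw [hρdef, lt_div_iff₀ hl0]; linarith
  intro n
  induction n with
  | zero =>
    intro u hU h0 hle hge
    rw [pow_zero, one_mul] at hge
    rw [le_antisymm hle hge]
    exact Relation.ReflTransGen.refl
  | succ n ih =>
    intro u hU h0 hle hge
    by_cases hcase : tgt ≤ ρ^n * u
    · exact ih u hU h0 hle hcase
    · set v : ℝ := min (ρ * u) tgt with hvdef
      have huρu : u ≤ ρ * u := by nlinarith
      have huv : u ≤ v := le_min huρu hle
      have hvt : v ≤ tgt := min_le_right _ _
      have hv0 : 0 < v := lt_of_lt_of_le h0 huv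
      have hv1 : v < 1 - l := lt_of_le_of_lt hvt ht1
      have hvU : v ∈ 𝕌 := by
        rcases le_total (ρ * u) tgt with h|h
        · rw [hvdef, min_eq_left h]; exact Subfield.mul_mem _ hρU hU
        · rw [hvdef, min_eq_right h]; exact htU
      have e : l * (ρ * u) = (1-tgt) * u := by
        rw [hρdef]; field_simp
      have hC : l * v ≤ u * (1 - v) := by
        have h1 : l * v ≤ (1-tgt) * u := by
          rw [← e]
          exact mul_le_mul_of_nonneg_left (min_le_left _ _) hl0.le
        nlinarith
      have step := esse_up 𝕌 l u v hlU hU hvU hl0.le hl1 h0 huv hv1 hC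
      have hρn : (0:ℝ) < ρ^n := pow_pos (by linarith) n
      have hρn1 : (1:ℝ) ≤ ρ^n := one_le_pow₀ hρ1.le
      have tail : SSEn {x : ℝ | x ∈ 𝕌 ∧ 0 ≤ x} (Mst l v) (Mst l tgt) := by
        refine ih v hvU hv0 hvt ?_
        rcases le_total (ρ * u) tgt with h|h
        · rw [hvdef, min_eq_left h]
          calc tgt ≤ ρ^(n+1) * u := hge
          _ = ρ^n * (ρ * u) := by ring
        · rw [hvdef, min_eq_right h]
          nlinarith
      exact Relation.ReflTransGen.head step tail

lemma sse_down (𝕌 : Subfield ℝ) (l tgt BB : ℝ)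
    (hlU : l ∈ 𝕌) (htU : tgt ∈ 𝕌) (hBU : BB ∈ 𝕌) (hl0 : 0 < l) (hl1 : l < 1)
    (ht0 : 0 < tgt) (htB : tgt ≤ BB) (hB1 : BB < 1 - l) :
    ∀ n : ℕ, ∀ v : ℝ, v ∈ 𝕌 → tgt ≤ v → v ≤ BB →
      v ≤ ((1-BB)/l)^n * tgt →
      SSEn {x : ℝ | x ∈ 𝕌 ∧ 0 ≤ x} (Mst l v) (Mst l tgt) := by
  set ρ : ℝ := (1-BB)/l with hρdef
  have hρU : ρ ∈ 𝕌 := Subfield.div_mem _ (Subfield.sub_mem _ (Subfield.one_mem _) hBU) hlU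
  have hρ1 : 1 < ρ := by rw [hρdef, lt_div_iff₀ hl0]; linarith
  have hρ0 : (0:ℝ) < ρ := by linarith
  intro n
  induction n with
  | zero =>
    intro v hU hge hle hle'
    rw [pow_zero, one_mul] at hle'
    rw [le_antisymm hle' hge]
    exact Relation.ReflTransGen.refl
  | succ n ih =>
    intro v hU hge hle hle'
    by_cases hcase : v ≤ ρ^n * tgt
    · exact ih v hU hge hle hcase
    · set u : ℝ := max (v / ρ) tgt with hudef
      have hv0 : 0 < v := lt_of_lt_of_le ht0 hge
      have hvρv : v / ρ ≤ v := div_le_self hv0.le hρ1.le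
      have huv : u ≤ v := max_le hvρv hge
      have htu : tgt ≤ u := le_max_right _ _
      have hu0 : 0 < u := lt_of_lt_of_le ht0 htu
      have hu1 : v < 1 - l := lt_of_le_of_lt hle hB1
      have huU : u ∈ 𝕌 := by
        rcases le_total (v / ρ) tgt with h|h
        · rw [hudef, max_eq_right h]; exact htU
        · rw [hudef, max_eq_left h]; exact Subfield.div_mem _ hU hρU
      have e : (v / ρ) * (1 - BB) = l * v := by
        have h1 : (1:ℝ) - BB ≠ 0 := by intro h; nlinarith
        rw [hρdef]
        field_simp
      have hvρ0 : (0:ℝ) ≤ v / ρ := by positivity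
      have hC : l * v ≤ u * (1 - v) := by
        nlinarith [mul_nonneg (sub_nonneg.2 (le_max_left (v/ρ) tgt)) (by linarith : (0:ℝ) ≤ 1 - v),
          mul_nonneg hvρ0 (by linarith : (0:ℝ) ≤ BB - v), e]
      have step := esse_down 𝕌 l u v hlU huU hU hl0.le hl1 hu0 huv hu1 hC
      have hρn : (0:ℝ) < ρ^n := pow_pos hρ0 n
      have hρn1 : (1:ℝ) ≤ ρ^n := one_le_pow₀ hρ1.le
      have tail : SSEn {x : ℝ | x ∈ 𝕌 ∧ 0 ≤ x} (Mst l u) (Mst l tgt) := by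
        refine ih u huU htu (le_trans huv hle) ?_
        rcases le_total (v / ρ) tgt with h|h
        · rw [hudef, max_eq_right h]; nlinarith
        · rw [hudef, max_eq_left h]
          rw [div_le_iff₀ hρ0]
          calc v ≤ ρ^(n+1) * tgt := hle'
          _ = ρ^n * tgt * ρ := by ring
      exact Relation.ReflTransGen.head step tail

/-- Let `𝕌` be a subfield of `ℝ`. Every `2 × 2` positive stochastic matrix
over `𝕌` is similar over `𝕌` to a positive doubly stochastic matrix `Q` and strong shift
equivalent over `𝕌₊` to `Q` through `2 × 2` matrices. -/
theorem stmt3 (𝕌 : Subfield ℝ) (P : Matrix (Fin 2) (Fin 2) ℝ)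
    (hUP : ∀ i j, P i j ∈ 𝕌)
    (hpos : ∀ i j, 0 < P i j) (hrow : ∀ i, ∑ j, P i j = 1) :
    ∃ Q : Matrix (Fin 2) (Fin 2) ℝ,
      (∀ i j, Q i j ∈ 𝕌) ∧ (∀ i j, 0 < Q i j) ∧
      (∀ i, ∑ j, Q i j = 1) ∧ (∀ j, ∑ i, Q i j = 1) ∧
      SimilarOver (𝕌 : Set ℝ) P Q ∧
      SSEn {x : ℝ | x ∈ 𝕌 ∧ 0 ≤ x} P Q := by
  have hsum0 := hrow 0
  have hsum1 := hrow 1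
  rw [Fin.sum_univ_two] at hsum0 hsum1
  set a := P 0 0 with ha_def
  set b := P 1 0 with hb_def
  have ha0 : 0 < a := hpos 0 0
  have hb0 : 0 < b := hpos 1 0
  have ha1 : a < 1 := by have := hpos 0 1; linarith
  have hb1 : b < 1 := by have := hpos 1 1; linarith
  have haU : a ∈ 𝕌 := hUP 0 0
  have hbU : b ∈ 𝕌 := hUP 1 0
  have hP : P = !![a, 1-a; b, 1-b] := by
    ext i j
    fin_cases i <;> fin_cases j <;> simp <;> linarith
  have hl1 : a - b < 1 := by linarith
  have hlm1 : -1 < a - b := by linarith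
  have hD : (1:ℝ) - (a-b) ≠ 0 := by intro h; linarith
  have h2U : (2:ℝ) ∈ 𝕌 := by
    rw [show (2:ℝ) = 1+1 by norm_num]
    exact Subfield.add_mem _ (Subfield.one_mem _) (Subfield.one_mem _)
  have hlU : a - b ∈ 𝕌 := Subfield.sub_mem _ haU hbU
  have hqU : (1+(a-b))/2 ∈ 𝕌 :=
    Subfield.div_mem _ (Subfield.add_mem _ (Subfield.one_mem _) hlU) h2U
  refine ⟨!![(1+(a-b))/2, 1-(1+(a-b))/2; 1-(1+(a-b))/2, (1+(a-b))/2], ?_, ?_, ?_, ?_, ?_, ?_⟩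
  · intro i j
    fin_cases i <;> fin_cases j <;> simp <;>
      first
        | exact hqU
        | exact Subfield.sub_mem _ (Subfield.one_mem _) hqU
  · intro i j
    fin_cases i <;> fin_cases j <;> simp <;> linarith
  · intro i
    fin_cases i <;> rw [Fin.sum_univ_two] <;> simp <;> ring
  · intro j
    fin_cases j <;> rw [Fin.sum_univ_two] <;> simp <;> ring
  · -- SimilarOver
    have hMN : (!![-(b+1), a; 1-b, a-2] *
        !![(a-2)/(2*(1-(a-b))), -a/(2*(1-(a-b))); (b-1)/(2*(1-(a-b))), -(b+1)/(2*(1-(a-b)))]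
        : Matrix (Fin 2) (Fin 2) ℝ) = 1 := by
      ext i j
      fin_cases i <;> fin_cases j <;>
        · simp [Matrix.mul_apply, Fin.sum_univ_two, Matrix.one_apply]
          field_simp
          ring
    have hNM : (!![(a-2)/(2*(1-(a-b))), -a/(2*(1-(a-b))); (b-1)/(2*(1-(a-b))), -(b+1)/(2*(1-(a-b)))] *
        !![-(b+1), a; 1-b, a-2] : Matrix (Fin 2) (Fin 2) ℝ) = 1 := by
      ext i j
      fin_cases i <;> fin_cases j <;>
        · simp [Matrix.mul_apply, Fin.sum_univ_two, Matrix.one_apply]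
          field_simp
          ring
    have hMinv : (!![-(b+1), a; 1-b, a-2] : Matrix (Fin 2) (Fin 2) ℝ)⁻¹ =
        !![(a-2)/(2*(1-(a-b))), -a/(2*(1-(a-b))); (b-1)/(2*(1-(a-b))), -(b+1)/(2*(1-(a-b)))] :=
      Matrix.inv_eq_right_inv hMN
    have h2DU : 2*(1-(a-b)) ∈ 𝕌 :=
      Subfield.mul_mem _ h2U (Subfield.sub_mem _ (Subfield.one_mem _) hlU)
    have hswap : (!![(1+(a-b))/2, 1-(1+(a-b))/2; 1-(1+(a-b))/2, (1+(a-b))/2]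
        : Matrix (Fin 2) (Fin 2) ℝ) * !![-(b+1), a; 1-b, a-2] =
        !![-(b+1), a; 1-b, a-2] * !![a, 1-a; b, 1-b] := by
      ext i j
      fin_cases i <;> fin_cases j <;>
        · simp [Matrix.mul_apply, Fin.sum_univ_two]
          ring
    refine ⟨!![-(b+1), a; 1-b, a-2],
      ⟨⟨!![-(b+1), a; 1-b, a-2],
        !![(a-2)/(2*(1-(a-b))), -a/(2*(1-(a-b))); (b-1)/(2*(1-(a-b))), -(b+1)/(2*(1-(a-b)))],
        hMN, hNM⟩, rfl⟩, ?_, ?_, ?_⟩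
    · intro i j
      fin_cases i <;> fin_cases j <;> simp
      · rw [show (-1:ℝ) + -b = -(b+1) by ring]
        exact Subfield.neg_mem _ (Subfield.add_mem _ hbU (Subfield.one_mem _))
      · exact haU
      · exact Subfield.sub_mem _ (Subfield.one_mem _) hbU
      · exact Subfield.sub_mem _ haU h2U
    · intro i j
      rw [hMinv]
      fin_cases i <;> fin_cases j <;> simp
      · exact Subfield.div_mem _ (Subfield.sub_mem _ haU h2U) h2DU
      · rw [show -a / (2*(1-(a-b))) = -(a / (2*(1-(a-b)))) by ring]
        exact Subfield.neg_mem _ (Subfield.div_mem _ haU h2DU)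
      · exact Subfield.div_mem _ (Subfield.sub_mem _ hbU (Subfield.one_mem _)) h2DU
      · rw [show (-1 + -b) / (2*(1-(a-b))) = -((b+1) / (2*(1-(a-b)))) by ring]
        exact Subfield.neg_mem _ (Subfield.div_mem _ (Subfield.add_mem _ hbU (Subfield.one_mem _)) h2DU)
    · rw [hMinv, hP, ← hswap, Matrix.mul_assoc, hMN, Matrix.mul_one]
  · -- SSEn
    rw [hP]
    rcases le_or_gt a b with hab|hab
    · have key := esse_neg 𝕌 a b haU hbU ha0 ha1 hb0 hb1 hab
      have hQeq : !![a-b+(1-(a-b))/2, 1-(a-b+(1-(a-b))/2); (1-(a-b))/2, 1-(1-(a-b))/2]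
          = !![(1+(a-b))/2, 1-(1+(a-b))/2; 1-(1+(a-b))/2, (1+(a-b))/2] := by
        ext i j
        fin_cases i <;> fin_cases j <;> simp <;> ring
      rw [hQeq] at key
      exact Relation.ReflTransGen.single key
    · have hl0 : 0 < a - b := by linarith
      set tgt : ℝ := (1-(a-b))/2 with htgt_def
      have htgt0 : 0 < tgt := by rw [htgt_def]; linarith
      have htgt1 : tgt < 1 - (a-b) := by rw [htgt_def]; linarith
      have htgtU : tgt ∈ 𝕌 :=
        Subfield.div_mem _ (Subfield.sub_mem _ (Subfield.one_mem _) hlU) h2U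
      have hP' : !![a, 1-a; b, 1-b] = Mst (a-b) b := by
        unfold Mst
        ext i j
        fin_cases i <;> fin_cases j <;> simp <;> ring
      have hQ' : !![(1+(a-b))/2, 1-(1+(a-b))/2; 1-(1+(a-b))/2, (1+(a-b))/2]
          = Mst (a-b) tgt := by
        unfold Mst
        rw [htgt_def]
        ext i j
        fin_cases i <;> fin_cases j <;> simp <;> ring
      rw [hP', hQ']
      rcases le_total b tgt with h|h
      · have hρ1 : 1 < (1-tgt)/(a-b) := by
          rw [lt_div_iff₀ hl0]; linarith
        obtain ⟨n, hn⟩ := pow_unbounded_of_one_lt (tgt/b) hρ1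
        have hge : tgt ≤ ((1-tgt)/(a-b))^n * b := by
          rw [div_lt_iff₀ hb0] at hn
          nlinarith
        exact sse_up 𝕌 (a-b) tgt hlU htgtU hl0 hl1 htgt0 htgt1 n b hbU hb0 h hge
      · have hb1l : b < 1 - (a-b) := by linarith
        have hρ1 : 1 < (1-b)/(a-b) := by
          rw [lt_div_iff₀ hl0]; linarith
        obtain ⟨n, hn⟩ := pow_unbounded_of_one_lt (b/tgt) hρ1
        have hge : b ≤ ((1-b)/(a-b))^n * tgt := by
          rw [div_lt_iff₀ htgt0] at hn
          nlinarith
        exact sse_down 𝕌 (a-b) tgt b hlU htgtU hbU hl0 hl1 htgt0 h hb1l n b hbU h le_rfl hge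
end

section
/- Every n×n positive stochastic real matrix of rank one is similar over ℝ to the matrix J_n and is strong shift equivalent over ℝ₊ to J_n through a chain consisting entirely of n×n matrices. In particular, every positive stochastic matrix of rank one is similar and strong shift equivalent over ℝ₊ to a positive doubly stochastic matrix of the same size. -/
open Matrix BigOperators

-- auxiliary: rank one stochastic implies all rows equal
lemma rows_eq {n : ℕ} (P : Matrix (Fin n) (Fin n) ℝ)
    (hrow : ∀ i, ∑ j, P i j = 1) (hrank : P.rank = 1) :
    ∀ i i' j, P i j = P i' j := by
  -- factorization from rank one
  have h1 : ∃ v ≠ (0 : LinearMap.range P.mulVecLin), ∀ w, ∃ c : ℝ, c • v = w := by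
    rw [← finrank_eq_one_iff']
    exact hrank
  obtain ⟨v, hv0, hv⟩ := h1
  have minor : ∀ i i' j j', P i j * P i' j' = P i j' * P i' j := by
    intro i i' j j'
    have colmem : ∀ j, (fun i => P i j) ∈ LinearMap.range P.mulVecLin := by
      intro j
      refine ⟨Pi.single j 1, ?_⟩
      ext i
      simp [Matrix.mulVecLin_apply, Matrix.mulVec, dotProduct, Pi.single_apply]
    obtain ⟨c, hc⟩ := hv ⟨_, colmem j⟩
    obtain ⟨c', hc'⟩ := hv ⟨_, colmem j'⟩
    have hcj : ∀ i, P i j = c * (v : Fin n → ℝ) i := by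
      intro i
      have h2 := congrFun (congrArg (Subtype.val) hc) i
      simpa using h2.symm
    have hcj' : ∀ i, P i j' = c' * (v : Fin n → ℝ) i := by
      intro i
      have h2 := congrFun (congrArg (Subtype.val) hc') i
      simpa using h2.symm
    rw [hcj, hcj', hcj, hcj']
    ring
  intro i i' j
  calc P i j = P i j * ∑ j', P i' j' := by rw [hrow i', mul_one]
    _ = ∑ j', P i j * P i' j' := by rw [Finset.mul_sum]
    _ = ∑ j', P i j' * P i' j := by exact Finset.sum_congr rfl fun j' _ => minor i i' j j'
    _ = (∑ j', P i j') * P i' j := by rw [Finset.sum_mul]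
    _ = P i' j := by rw [hrow i, one_mul]


/-- Every `n × n` positive stochastic real matrix of rank one is similar over
`ℝ` to `Jₙ` and strong shift equivalent over `ℝ₊` to `Jₙ` through `n × n` matrices; in
particular `Jₙ` is a positive doubly stochastic matrix of the same size. -/
theorem stmt4 {n : ℕ} (P : Matrix (Fin n) (Fin n) ℝ)
    (hpos : ∀ i j, 0 < P i j) (hrow : ∀ i, ∑ j, P i j = 1)
    (hrank : P.rank = 1) :
    (∀ i j, 0 < Jconst n i j) ∧
    (∀ i, ∑ j, Jconst n i j = 1) ∧ (∀ j, ∑ i, Jconst n i j = 1) ∧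
    (∃ M : Matrix (Fin n) (Fin n) ℝ, IsUnit M ∧ Jconst n = M * P * M⁻¹) ∧
    SSEn {x : ℝ | 0 ≤ x} P (Jconst n) := by
  have hn : 0 < n := by
    by_contra h
    push_neg at h
    interval_cases n
    · have : P.rank ≤ 0 := by
        simpa using P.rank_le_card_height
      omega
  have hnR : (0 : ℝ) < n := by exact_mod_cast hn
  have hre := rows_eq P hrow hrank
  -- P * Jconst n = Jconst n
  have hPJ : P * Jconst n = Jconst n := by
    ext i k
    simp only [Matrix.mul_apply, Jconst, Matrix.of_apply]
    rw [← Finset.sum_mul, hrow i, one_mul]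
  -- Jconst n * P = P
  have hJP : Jconst n * P = P := by
    ext i k
    simp only [Matrix.mul_apply, Jconst, Matrix.of_apply]
    have : ∀ j : Fin n, (1 : ℝ)/n * P j k = (1:ℝ)/n * P i k := by
      intro j; rw [hre j i k]
    rw [Finset.sum_congr rfl fun j _ => this j, Finset.sum_const, Finset.card_fin,
      nsmul_eq_mul]
    field_simp
  refine ⟨fun i j => by simp [Jconst]; positivity, ?_, ?_, ?_, ?_⟩
  · intro i
    simp [Jconst, Finset.sum_const, Finset.card_fin, nsmul_eq_mul]
    field_simp
  · intro j
    simp [Jconst, Finset.sum_const, Finset.card_fin, nsmul_eq_mul]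
    field_simp
  · -- similarity
    set i0 : Fin n := ⟨0, hn⟩
    set C : Matrix (Fin n) (Fin n) ℝ := Matrix.of (fun _ j => P i0 j - 1/n) with hC
    have hsum0 : ∑ j, (P i0 j - 1/n) = 0 := by
      rw [Finset.sum_sub_distrib, hrow i0, Finset.sum_const, Finset.card_fin, nsmul_eq_mul]
      field_simp
      norm_num
    set M : Matrix (Fin n) (Fin n) ℝ := 1 + C with hM
    set N : Matrix (Fin n) (Fin n) ℝ := 1 - C with hN
    have hCC : C * C = 0 := by
      ext i k
      simp only [Matrix.mul_apply, hC, Matrix.of_apply, Matrix.zero_apply]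
      rw [← Finset.sum_mul, hsum0, zero_mul]
    have hMN : M * N = 1 := by
      rw [hM, hN, mul_sub, mul_one, add_mul, one_mul, hCC, add_zero]
      abel
    have hNM : N * M = 1 := by
      rw [hM, hN, sub_mul, one_mul, mul_add, mul_one, hCC, add_zero]
      abel
    have hMunit : IsUnit M := by
      exact Matrix.isUnit_iff_isUnit_det M |>.mpr (Matrix.isUnit_det_of_right_inverse hMN)
    have hMinv : M⁻¹ = N := Matrix.inv_eq_right_inv hMN
    have hCP : C * P = 0 := by
      ext i k
      simp only [Matrix.mul_apply, hC, Matrix.of_apply, Matrix.zero_apply]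
      have : ∀ j : Fin n, (P i0 j - 1/n) * P j k = (P i0 j - 1/n) * P i0 k := by
        intro j; rw [hre j i0 k]
      rw [Finset.sum_congr rfl fun j _ => this j, ← Finset.sum_mul, hsum0, zero_mul]
    have hJC : Jconst n * C = C := by
      ext i k
      simp only [Matrix.mul_apply, Jconst, hC, Matrix.of_apply]
      rw [Finset.sum_const, Finset.card_fin, nsmul_eq_mul]
      field_simp
    have hCapp : ∀ i k, Jconst n i k + C i k = P i k := by
      intro i k
      simp only [Jconst, hC, Matrix.of_apply]
      rw [hre i i0 k]; ring
    have hJM : Jconst n * M = P := by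
      rw [hM, mul_add, mul_one, hJC]
      ext i k
      simp only [Matrix.add_apply]
      exact hCapp i k
    have hMP : M * P = P := by
      rw [hM, add_mul, one_mul, hCP, add_zero]
    refine ⟨M, hMunit, ?_⟩
    rw [hMP, hMinv, ← hJM, mul_assoc, hMN, mul_one]
  · -- SSE
    refine Relation.ReflTransGen.single ?_
    exact ⟨Jconst n, P, fun i j => by simp only [Set.mem_setOf_eq, Jconst, Matrix.of_apply]; positivity,
      fun i j => (hpos i j).le, hJP.symm, hPJ.symm⟩
end

section
/- Let 𝕌 be a subfield of ℝ, n ≥ 2, and let P = (p_ij) be an n×n positive stochastic matrix with entries in 𝕌. If for every column j one has max_{1≤i≤n} p_ij − min_{1≤i≤n} p_ij < 1/(n−1), then P is similar over 𝕌 to a positive doubly stochastic matrix Q and is strong shift equivalent over 𝕌₊ to Q through a chain consisting entirely of n×n matrices. -/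
open Matrix BigOperators

/-- A positive stochastic matrix with entries in a subfield has a left fixed vector with
entries in the subfield and coordinate sum 1. -/
lemma exists_left_fixed (𝕌 : Subfield ℝ) {n : ℕ} (hn : 0 < n)
    (P : Matrix (Fin n) (Fin n) ℝ) (hUP : ∀ i j, P i j ∈ 𝕌)
    (hpos : ∀ i j, 0 < P i j) (hrow : ∀ i, ∑ j, P i j = 1) :
    ∃ z : Fin n → ℝ, (∀ j, z j ∈ 𝕌) ∧ (∀ j, ∑ i, z i * P i j = z j) ∧ ∑ j, z j = 1 := by
  haveI : NeZero n := ⟨hn.ne'⟩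
  -- the matrix over the subfield
  set P' : Matrix (Fin n) (Fin n) 𝕌 := Matrix.of fun i j => (⟨P i j, hUP i j⟩ : 𝕌) with hP'
  have hmap : (P'ᵀ - 1).map 𝕌.subtype = Pᵀ - 1 := by
    ext i j
    simp only [Matrix.map_apply, Matrix.sub_apply, Matrix.transpose_apply, Matrix.one_apply]
    split <;> simp [hP']
  -- determinant vanishes over ℝ
  have hdetR : (Pᵀ - 1 : Matrix (Fin n) (Fin n) ℝ).det = 0 := by
    have hker : (P - 1) *ᵥ (fun _ => (1:ℝ)) = 0 := by
      ext i
      simp only [Matrix.mulVec, dotProduct, Matrix.sub_apply, Matrix.one_apply,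
        mul_one, Pi.zero_apply, Finset.sum_sub_distrib, hrow i]
      simp
    have h1 : (fun _ => (1:ℝ)) ≠ (0 : Fin n → ℝ) := by
      intro h
      have := congrFun h ⟨0, hn⟩
      norm_num at this
    have : (P - 1 : Matrix (Fin n) (Fin n) ℝ).det = 0 :=
      (Matrix.exists_mulVec_eq_zero_iff).mp ⟨fun _ => 1, h1, hker⟩
    rw [show (Pᵀ - 1 : Matrix (Fin n) (Fin n) ℝ) = (P - 1)ᵀ by
      rw [Matrix.transpose_sub, Matrix.transpose_one], Matrix.det_transpose]
    exact this
  -- determinant vanishes over 𝕌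
  have hdetU : (P'ᵀ - 1).det = 0 := by
    apply (𝕌.subtype).injective
    rw [RingHom.map_det]
    simp only [RingHom.mapMatrix_apply]
    rw [hmap, hdetR, map_zero]
  -- a nonzero kernel vector over 𝕌
  obtain ⟨y, hy0, hky⟩ := (Matrix.exists_mulVec_eq_zero_iff).mpr hdetU
  set x : Fin n → ℝ := fun i => (y i : ℝ) with hx
  have h𝕌 : ∀ j, ∑ i, P' i j * y i = y j := by
    intro j
    have h := congrFun hky j
    simp only [Matrix.mulVec, dotProduct, Matrix.sub_apply, Matrix.transpose_apply,
      Matrix.one_apply, Pi.zero_apply, sub_mul, Finset.sum_sub_distrib, ite_mul, one_mul,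
      zero_mul, Finset.sum_ite_eq, Finset.mem_univ, if_true] at h
    exact sub_eq_zero.mp h
  have hfix : ∀ j, ∑ i, x i * P i j = x j := by
    intro j
    have h := congrArg (𝕌.subtype) (h𝕌 j)
    simp only [map_sum, _root_.map_mul, Subfield.coe_subtype] at h
    simp only [hx]
    rw [← h]
    exact Finset.sum_congr rfl fun i _ => mul_comm _ _
  have hxne : x ≠ 0 := by
    intro h
    apply hy0
    ext i
    have := congrFun h i
    simpa [hx] using this
  -- the coordinate sum is nonzero (Perron-type argument)
  have hsum : ∑ i, x i ≠ 0 := by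
    intro hs
    obtain ⟨a, ha⟩ : ∃ a, x a ≠ 0 := by
      by_contra h
      push_neg at h
      exact hxne (funext fun i => h i)
    have hboth : ∃ a b, 0 < x a ∧ x b < 0 := by
      rcases ha.lt_or_gt with h1 | h1
      · -- x a < 0 : there must be a positive entry
        by_contra h
        push_neg at h
        have hneg : ∀ i, x i ≤ 0 := by
          intro i
          by_contra hc
          push_neg at hc
          exact absurd (h i a hc) (not_le.mpr h1)
        have : ∑ i, x i < ∑ _i : Fin n, (0:ℝ) :=
          Finset.sum_lt_sum (fun i _ => hneg i) ⟨a, Finset.mem_univ a, h1⟩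
        simp [hs] at this
      · by_contra h
        push_neg at h
        have hpos' : ∀ i, 0 ≤ x i := fun i => h a i h1
        have : ∑ _i : Fin n, (0:ℝ) < ∑ i, x i :=
          Finset.sum_lt_sum (fun i _ => hpos' i) ⟨a, Finset.mem_univ a, h1⟩
        simp [hs] at this
    obtain ⟨a, b, hpa, hnb⟩ := hboth
    have key : ∀ j, |x j| < ∑ i, |x i| * P i j := by
      intro j
      rw [← hfix j]
      rw [abs_lt]
      constructor
      · have : ∑ i, -(|x i| * P i j) < ∑ i, x i * P i j := by
          apply Finset.sum_lt_sum
          · intro i _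
            have : -|x i| ≤ x i := neg_abs_le _
            nlinarith [(hpos i j)]
          · refine ⟨a, Finset.mem_univ a, ?_⟩
            have : -|x a| < x a := by
              have : 0 ≤ |x a| := abs_nonneg _
              nlinarith
            nlinarith [(hpos a j)]
        calc -∑ i, |x i| * P i j = ∑ i, -(|x i| * P i j) := by rw [Finset.sum_neg_distrib]
        _ < ∑ i, x i * P i j := this
      · apply Finset.sum_lt_sum
        · intro i _
          exact mul_le_mul_of_nonneg_right (le_abs_self _) (hpos i j).le
        · refine ⟨b, Finset.mem_univ b, ?_⟩
          have : x b < |x b| := by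
            have : 0 ≤ |x b| := abs_nonneg _
            nlinarith
          exact mul_lt_mul_of_pos_right this (hpos b j)
    have hlt : ∑ j, |x j| < ∑ j, |x j| := by
      calc ∑ j, |x j| < ∑ j, ∑ i, |x i| * P i j :=
            Finset.sum_lt_sum_of_nonempty Finset.univ_nonempty fun j _ => key j
      _ = ∑ i, ∑ j, |x i| * P i j := Finset.sum_comm
      _ = ∑ i, |x i| := by
            refine Finset.sum_congr rfl fun i _ => ?_
            rw [← Finset.mul_sum, hrow i, mul_one]
    exact lt_irrefl _ hlt
  -- normalize
  refine ⟨fun j => (∑ i, x i)⁻¹ * x j, ?_, ?_, ?_⟩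
  · intro j
    exact 𝕌.mul_mem (𝕌.inv_mem (sum_mem fun i _ => by simp [hx])) (by simp [hx])
  · intro j
    have : ∑ i, ((∑ i, x i)⁻¹ * x i) * P i j = (∑ i, x i)⁻¹ * ∑ i, x i * P i j := by
      rw [Finset.mul_sum]
      exact Finset.sum_congr rfl fun i _ => by ring
    rw [this, hfix j]
  · rw [← Finset.mul_sum, inv_mul_cancel₀ hsum]

lemma esse1 (𝕌 : Subfield ℝ) {n : ℕ} (A : Matrix (Fin n) (Fin n) ℝ) (u : Fin n → ℝ)
    (hA𝕌 : ∀ i j, A i j ∈ 𝕌) (hA0 : ∀ i j, 0 ≤ A i j) (hArow : ∀ i, ∑ j, A i j = 1)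
    (hu𝕌 : ∀ j, u j ∈ 𝕌) (hu0 : ∀ j, 0 ≤ u j)
    (hcond : ∀ i j, (∑ k, u k * A k j) ≤ A i j) :
    ESSEn {x : ℝ | x ∈ 𝕌 ∧ 0 ≤ x} A
      (Matrix.of fun i j => A i j + (1 + ∑ k, u k)⁻¹ * (u j - ∑ k, u k * A k j)) := by
  set σ : ℝ := ∑ k, u k with hσ
  have hσ0 : 0 ≤ σ := Finset.sum_nonneg fun k _ => hu0 k
  have h1σ : (1 : ℝ) + σ ≠ 0 := by positivity
  have hσ𝕌 : σ ∈ 𝕌 := sum_mem fun k _ => hu𝕌 k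
  refine ⟨Matrix.of fun i j => (if i = j then (1:ℝ) else 0) + u j,
    Matrix.of fun i j => A i j - (1 + σ)⁻¹ * (∑ k, u k * A k j), ?_, ?_, ?_, ?_⟩
  · intro i j
    refine ⟨𝕌.add_mem (by split; exacts [𝕌.one_mem, 𝕌.zero_mem]) (hu𝕌 j),
      add_nonneg (by split <;> norm_num) (hu0 j)⟩
  · intro i j
    constructor
    · exact 𝕌.sub_mem (hA𝕌 i j)
        (𝕌.mul_mem (𝕌.inv_mem (𝕌.add_mem 𝕌.one_mem hσ𝕌))
          (sum_mem fun k _ => 𝕌.mul_mem (hu𝕌 k) (hA𝕌 k j)))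
    · have h1 : (1 + σ)⁻¹ * (∑ k, u k * A k j) ≤ 1 * (∑ k, u k * A k j) := by
        apply mul_le_mul_of_nonneg_right
        · rw [inv_le_one_iff₀]; right; linarith
        · exact Finset.sum_nonneg fun k _ => mul_nonneg (hu0 k) (hA0 k j)
      have := hcond i j
      simp only [Set.mem_setOf_eq, Matrix.of_apply]
      nlinarith [hcond i j]
  · ext i j
    simp only [Matrix.mul_apply, Matrix.of_apply]
    have expand : ∀ k, ((if i = k then (1:ℝ) else 0) + u k) *
        (A k j - (1 + σ)⁻¹ * (∑ l, u l * A l j)) =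
        ((if i = k then (1:ℝ) else 0) * A k j)
          - ((if i = k then (1:ℝ) else 0) * ((1 + σ)⁻¹ * (∑ l, u l * A l j)))
          + (u k * A k j - u k * ((1 + σ)⁻¹ * (∑ l, u l * A l j))) := by
      intro k; ring
    rw [Finset.sum_congr rfl fun k _ => expand k]
    rw [Finset.sum_add_distrib, Finset.sum_sub_distrib, Finset.sum_sub_distrib,
      ← Finset.sum_mul, ← Finset.sum_mul]
    simp only [Finset.sum_ite_eq, Finset.mem_univ, if_true, one_mul, ← hσ, ite_mul, zero_mul]
    field_simp
    ring
  · ext i j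
    simp only [Matrix.mul_apply, Matrix.of_apply]
    have expand : ∀ k, (A i k - (1 + σ)⁻¹ * (∑ l, u l * A l k)) *
        ((if k = j then (1:ℝ) else 0) + u j) =
        (A i k * (if k = j then (1:ℝ) else 0)
          - (1 + σ)⁻¹ * (∑ l, u l * A l k) * (if k = j then (1:ℝ) else 0))
          + (A i k * u j - (1 + σ)⁻¹ * (∑ l, u l * A l k) * u j) := by
      intro k; ring
    rw [Finset.sum_congr rfl fun k _ => expand k]
    rw [Finset.sum_add_distrib, Finset.sum_sub_distrib, Finset.sum_sub_distrib]
    have h1 : ∑ k, A i k * (if k = j then (1:ℝ) else 0) = A i j := by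
      simp [mul_ite]
    have h2 : ∑ k, (1 + σ)⁻¹ * (∑ l, u l * A l k) * (if k = j then (1:ℝ) else 0)
        = (1 + σ)⁻¹ * (∑ l, u l * A l j) := by
      simp [mul_ite]
    have h3 : ∑ k, A i k * u j = u j := by rw [← Finset.sum_mul, hArow i, one_mul]
    have hSS : ∑ k, (∑ l, u l * A l k) = σ := by
      rw [Finset.sum_comm]
      simp only [← Finset.mul_sum, hArow, mul_one, hσ]
    have h4 : ∑ k, (1 + σ)⁻¹ * (∑ l, u l * A l k) * u j = (1 + σ)⁻¹ * σ * u j := by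
      have : ∀ k : Fin n, (1 + σ)⁻¹ * (∑ l, u l * A l k) * u j
          = (1 + σ)⁻¹ * u j * (∑ l, u l * A l k) := fun k => by ring
      rw [Finset.sum_congr rfl fun k _ => this k, ← Finset.mul_sum, hSS]
      ring
    rw [h1, h2, h3, h4]
    field_simp
    ring

lemma esse2 (𝕌 : Subfield ℝ) {n : ℕ} (B : Matrix (Fin n) (Fin n) ℝ) (u : Fin n → ℝ)
    (hB𝕌 : ∀ i j, B i j ∈ 𝕌) (hB0 : ∀ i j, 0 ≤ B i j) (hBrow : ∀ i, ∑ j, B i j = 1)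
    (hu𝕌 : ∀ j, u j ∈ 𝕌) (hu0 : ∀ j, 0 ≤ u j)
    (hcond : ∀ i j, u j ≤ B i j) :
    ESSEn {x : ℝ | x ∈ 𝕌 ∧ 0 ≤ x} B
      (Matrix.of fun i j => B i j + ((∑ k, u k * B k j) - u j)) := by
  set σ : ℝ := ∑ k, u k with hσ
  have hσ0 : 0 ≤ σ := Finset.sum_nonneg fun k _ => hu0 k
  have h1σ : (1 : ℝ) + σ ≠ 0 := by positivity
  have hσ𝕌 : σ ∈ 𝕌 := sum_mem fun k _ => hu𝕌 k
  have hβ1 : (1 + σ)⁻¹ ≤ 1 := by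
    rw [inv_le_one_iff₀]; right; linarith
  refine ⟨Matrix.of fun i j => B i j - (1 + σ)⁻¹ * u j,
    Matrix.of fun i j => (if i = j then (1:ℝ) else 0) + u j, ?_, ?_, ?_, ?_⟩
  · intro i j
    constructor
    · exact 𝕌.sub_mem (hB𝕌 i j)
        (𝕌.mul_mem (𝕌.inv_mem (𝕌.add_mem 𝕌.one_mem hσ𝕌)) (hu𝕌 j))
    · have : (1 + σ)⁻¹ * u j ≤ 1 * u j := mul_le_mul_of_nonneg_right hβ1 (hu0 j)
      simp only [Set.mem_setOf_eq, Matrix.of_apply]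
      nlinarith [hcond i j]
  · intro i j
    refine ⟨𝕌.add_mem (by split; exacts [𝕌.one_mem, 𝕌.zero_mem]) (hu𝕌 j),
      add_nonneg (by split <;> norm_num) (hu0 j)⟩
  · ext i j
    simp only [Matrix.mul_apply, Matrix.of_apply]
    have expand : ∀ k, (B i k - (1 + σ)⁻¹ * u k) * ((if k = j then (1:ℝ) else 0) + u j) =
        (B i k * (if k = j then (1:ℝ) else 0)
          - (1 + σ)⁻¹ * u k * (if k = j then (1:ℝ) else 0))
          + (B i k * u j - (1 + σ)⁻¹ * (u k * u j)) := by
      intro k; ring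
    rw [Finset.sum_congr rfl fun k _ => expand k]
    rw [Finset.sum_add_distrib, Finset.sum_sub_distrib, Finset.sum_sub_distrib]
    have h1 : ∑ k, B i k * (if k = j then (1:ℝ) else 0) = B i j := by simp [mul_ite]
    have h2 : ∑ k, (1 + σ)⁻¹ * u k * (if k = j then (1:ℝ) else 0) = (1 + σ)⁻¹ * u j := by
      simp [mul_ite]
    have h3 : ∑ k, B i k * u j = u j := by rw [← Finset.sum_mul, hBrow i, one_mul]
    have h4 : ∑ k, (1 + σ)⁻¹ * (u k * u j) = (1 + σ)⁻¹ * (σ * u j) := by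
      rw [← Finset.mul_sum, ← Finset.sum_mul]
    rw [h1, h2, h3, h4]
    field_simp
    ring
  · ext i j
    simp only [Matrix.mul_apply, Matrix.of_apply]
    have expand : ∀ k, ((if i = k then (1:ℝ) else 0) + u k) * (B k j - (1 + σ)⁻¹ * u j) =
        ((if i = k then (1:ℝ) else 0) * B k j
          - (if i = k then (1:ℝ) else 0) * ((1 + σ)⁻¹ * u j))
          + (u k * B k j - u k * ((1 + σ)⁻¹ * u j)) := by
      intro k; ring
    rw [Finset.sum_congr rfl fun k _ => expand k]
    rw [Finset.sum_add_distrib, Finset.sum_sub_distrib, Finset.sum_sub_distrib]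
    have hA : ∑ x, (if i = x then (1:ℝ) else 0) * B x j = B i j := by simp [ite_mul]
    have hA2 : ∑ x, (if i = x then (1:ℝ) else 0) * ((1 + σ)⁻¹ * u j)
        = (1 + σ)⁻¹ * u j := by simp [ite_mul]
    have hB4 : ∑ x, u x * ((1 + σ)⁻¹ * u j) = σ * ((1 + σ)⁻¹ * u j) := by
      rw [← Finset.sum_mul, ← hσ]
    rw [hA, hA2, hB4]
    field_simp
    ring

lemma scalar_id (δ σ t p W aj vpj vmj : ℝ) (h : (1:ℝ) + δ*σ ≠ 0) :
    (p + t*W + (1+δ*σ)⁻¹ * (δ*vmj - δ*(aj + t*σ*W)))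
      + ((δ*(aj + (vpj - vmj) + W) + δ*(t*σ*W)
          + δ*σ*((1+δ*σ)⁻¹ * (δ*vmj - δ*(aj + t*σ*W))))
        - δ*vpj) = p + (t+δ)*W := by
  field_simp
  ring

set_option maxHeartbeats 2000000 in
/-- Let `𝕌` be a subfield of `ℝ`, `n ≥ 2`, and `P` an `n × n` positive
stochastic matrix over `𝕌`. If for every column `j` the difference between the largest and the
smallest entry of the column is less than `1/(n-1)` (equivalently, `P i j - P i' j < 1/(n-1)`
for all rows `i, i'`), then `P` is similar over `𝕌` to a positive doubly stochastic matrix `Q`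
and strong shift equivalent over `𝕌₊` to `Q` through `n × n` matrices. -/
theorem stmt5 (𝕌 : Subfield ℝ) {n : ℕ} (hn : 2 ≤ n)
    (P : Matrix (Fin n) (Fin n) ℝ) (hUP : ∀ i j, P i j ∈ 𝕌)
    (hpos : ∀ i j, 0 < P i j) (hrow : ∀ i, ∑ j, P i j = 1)
    (hcol : ∀ j i i', P i j - P i' j < 1 / ((n : ℝ) - 1)) :
    ∃ Q : Matrix (Fin n) (Fin n) ℝ,
      (∀ i j, Q i j ∈ 𝕌) ∧ (∀ i j, 0 < Q i j) ∧
      (∀ i, ∑ j, Q i j = 1) ∧ (∀ j, ∑ i, Q i j = 1) ∧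
      SimilarOver (𝕌 : Set ℝ) P Q ∧
      SSEn {x : ℝ | x ∈ 𝕌 ∧ 0 ≤ x} P Q := by
  have hn0 : 0 < n := lt_of_lt_of_le two_pos hn
  haveI : NeZero n := ⟨hn0.ne'⟩
  have hnR : (0:ℝ) < (n:ℝ) := by exact_mod_cast hn0
  have hnne : ((n:ℝ)) ≠ 0 := hnR.ne'
  obtain ⟨z, hz𝕌, hzfix, hzsum⟩ := exists_left_fixed 𝕌 hn0 P hUP hpos hrow
  -- the correction vector and the doubly stochastic matrix
  set w : Fin n → ℝ := fun j => (1 - ∑ i, P i j) / n with hw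
  set Q : Matrix (Fin n) (Fin n) ℝ := Matrix.of fun i j => P i j + w j with hQdef
  have hQapp : ∀ i j, Q i j = P i j + w j := fun i j => rfl
  have hw𝕌 : ∀ j, w j ∈ 𝕌 := by
    intro j
    exact 𝕌.div_mem (𝕌.sub_mem 𝕌.one_mem (sum_mem fun i _ => hUP i j)) (natCast_mem 𝕌 n)
  have hQ𝕌 : ∀ i j, Q i j ∈ 𝕌 := fun i j => 𝕌.add_mem (hUP i j) (hw𝕌 j)
  -- positivity of Q
  have hcsum : ∀ i j, ∑ k, P k j < (n:ℝ) * P i j + 1 := by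
    intro i j
    have hne : (Finset.univ.erase i).Nonempty := by
      rw [← Finset.card_pos, Finset.card_erase_of_mem (Finset.mem_univ i), Finset.card_univ,
        Fintype.card_fin]
      omega
    have hlt : ∑ k ∈ Finset.univ.erase i, P k j
        < ∑ k ∈ Finset.univ.erase i, (P i j + 1/((n:ℝ)-1)) := by
      apply Finset.sum_lt_sum_of_nonempty hne
      intro k _
      have := hcol j k i
      linarith
    have hcard : ((Finset.univ.erase i).card : ℝ) = (n:ℝ) - 1 := by
      rw [Finset.card_erase_of_mem (Finset.mem_univ i), Finset.card_univ, Fintype.card_fin]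
      have : 1 ≤ n := by omega
      push_cast [Nat.cast_sub this]
      ring
    have hn1 : ((n:ℝ) - 1) ≠ 0 := by
      have : (2:ℝ) ≤ (n:ℝ) := by exact_mod_cast hn
      linarith
    have hconst : ∑ k ∈ Finset.univ.erase i, (P i j + 1/((n:ℝ)-1))
        = ((n:ℝ)-1) * P i j + 1 := by
      rw [Finset.sum_const, nsmul_eq_mul, hcard]
      field_simp
    have hsplit : ∑ k, P k j = P i j + ∑ k ∈ Finset.univ.erase i, P k j := by
      rw [← Finset.sum_erase_add Finset.univ _ (Finset.mem_univ i)]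
      ring
    rw [hsplit]
    rw [hconst] at hlt
    linarith
  have hQpos : ∀ i j, 0 < Q i j := by
    intro i j
    have h1 : Q i j = ((n:ℝ) * P i j + (1 - ∑ k, P k j)) / n := by
      rw [hQapp, hw]
      field_simp
    rw [h1]
    apply div_pos _ hnR
    have := hcsum i j
    linarith
  -- row and column sums of Q
  have hScol : ∑ j, (∑ i, P i j) = (n:ℝ) := by
    rw [Finset.sum_comm]
    simp [hrow]
  have hwsum : ∑ j, w j = 0 := by
    simp only [hw]
    rw [← Finset.sum_div, Finset.sum_sub_distrib, Finset.sum_const, Finset.card_univ,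
      Fintype.card_fin, hScol]
    simp
  have hQrow : ∀ i, ∑ j, Q i j = 1 := by
    intro i
    simp only [hQapp]
    rw [Finset.sum_add_distrib, hrow i, hwsum, add_zero]
  have hQcol : ∀ j, ∑ i, Q i j = 1 := by
    intro j
    simp only [hQapp]
    rw [Finset.sum_add_distrib, Finset.sum_const, Finset.card_univ, Fintype.card_fin,
      nsmul_eq_mul, hw]
    field_simp
    ring
  -- the conjugating vector
  set v : Fin n → ℝ := fun j => z j - 1 / n with hv
  have hv𝕌 : ∀ j, v j ∈ 𝕌 :=
    fun j => 𝕌.sub_mem (hz𝕌 j) (𝕌.div_mem 𝕌.one_mem (natCast_mem 𝕌 n))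
  have hvsum : ∑ j, v j = 0 := by
    simp only [hv]
    rw [Finset.sum_sub_distrib, hzsum, Finset.sum_const, Finset.card_univ, Fintype.card_fin,
      nsmul_eq_mul]
    field_simp
    ring
  have hvP : ∀ j, ∑ i, v i * P i j = v j + w j := by
    intro j
    have e1 : ∀ i, v i * P i j = z i * P i j - (1/(n:ℝ)) * P i j := fun i => by
      simp only [hv]; ring
    rw [Finset.sum_congr rfl fun i _ => e1 i, Finset.sum_sub_distrib, hzfix j,
      ← Finset.mul_sum]
    simp only [hv, hw]
    field_simp
    ring
  -- the conjugating matrix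
  set M : Matrix (Fin n) (Fin n) ℝ :=
    Matrix.of (fun i j => (if i = j then (1:ℝ) else 0) + v j) with hM
  set M' : Matrix (Fin n) (Fin n) ℝ :=
    Matrix.of (fun i j => (if i = j then (1:ℝ) else 0) - v j) with hM'
  have hMM' : M * M' = 1 := by
    ext i j
    simp only [Matrix.mul_apply, hM, hM', Matrix.of_apply]
    have expand : ∀ k, ((if i = k then (1:ℝ) else 0) + v k)
        * ((if k = j then (1:ℝ) else 0) - v j)
        = ((if i = k then (1:ℝ) else 0) * (if k = j then (1:ℝ) else 0)
            - (if i = k then (1:ℝ) else 0) * v j)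
          + (v k * (if k = j then (1:ℝ) else 0) - v k * v j) := fun k => by ring
    rw [Finset.sum_congr rfl fun k _ => expand k, Finset.sum_add_distrib,
      Finset.sum_sub_distrib, Finset.sum_sub_distrib]
    simp only [← Finset.sum_mul]
    simp [ite_mul, mul_ite, Finset.sum_ite_eq, Finset.sum_ite_eq', Matrix.one_apply, hvsum]
  have hM'M : M' * M = 1 := by
    ext i j
    simp only [Matrix.mul_apply, hM, hM', Matrix.of_apply]
    have expand : ∀ k, ((if i = k then (1:ℝ) else 0) - v k)
        * ((if k = j then (1:ℝ) else 0) + v j)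
        = ((if i = k then (1:ℝ) else 0) * (if k = j then (1:ℝ) else 0)
            + (if i = k then (1:ℝ) else 0) * v j)
          - (v k * (if k = j then (1:ℝ) else 0) + v k * v j) := fun k => by ring
    rw [Finset.sum_congr rfl fun k _ => expand k, Finset.sum_sub_distrib,
      Finset.sum_add_distrib, Finset.sum_add_distrib]
    simp only [← Finset.sum_mul]
    simp [ite_mul, mul_ite, Finset.sum_ite_eq, Finset.sum_ite_eq', Matrix.one_apply, hvsum]
  haveI : Invertible M := invertibleOfRightInverse M M' hMM'
  have hMinv : M⁻¹ = M' := Matrix.inv_eq_right_inv hMM'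
  have hMunit : IsUnit M := isUnit_of_invertible M
  have hMP : ∀ i l, (M * P) i l = P i l + (v l + w l) := by
    intro i l
    simp only [Matrix.mul_apply, hM, Matrix.of_apply]
    rw [Finset.sum_congr rfl fun k (_ : k ∈ Finset.univ) =>
      (add_mul (if i = k then (1:ℝ) else 0) (v k) (P k l)), Finset.sum_add_distrib, hvP l]
    simp [ite_mul, Finset.sum_ite_eq]
  have hMPM : ∀ i j, (M * P * M') i j = P i j + w j := by
    intro i j
    rw [Matrix.mul_apply]
    have e1 : ∀ l, (M * P) i l * M' l j
        = (P i l + (v l + w l)) * ((if l = j then (1:ℝ) else 0) - v j) := by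
      intro l; rw [hMP i l]; simp only [hM', Matrix.of_apply]
    rw [Finset.sum_congr rfl fun l _ => e1 l]
    have e2 : ∀ l, (P i l + (v l + w l)) * ((if l = j then (1:ℝ) else 0) - v j)
        = ((P i l + (v l + w l)) * (if l = j then (1:ℝ) else 0))
          - (P i l * v j + (v l * v j + w l * v j)) := fun l => by ring
    rw [Finset.sum_congr rfl fun l _ => e2 l, Finset.sum_sub_distrib,
      Finset.sum_add_distrib, Finset.sum_add_distrib]
    simp only [← Finset.sum_mul]
    rw [hrow i, hvsum, hwsum]
    simp [mul_ite, Finset.sum_ite_eq']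
    ring
  have hsim : SimilarOver (𝕌 : Set ℝ) P Q := by
    refine ⟨M, hMunit, ?_, ?_, ?_⟩
    · intro i j
      simp only [hM, Matrix.of_apply]
      exact 𝕌.add_mem (by split; exacts [𝕌.one_mem, 𝕌.zero_mem]) (hv𝕌 j)
    · intro i j
      rw [hMinv]
      simp only [hM', Matrix.of_apply]
      exact 𝕌.sub_mem (by split; exacts [𝕌.one_mem, 𝕌.zero_mem]) (hv𝕌 j)
    · rw [hMinv]
      ext i j
      rw [hMPM i j, hQapp]
  -- positive and negative parts of v
  set vp : Fin n → ℝ := fun j => max (v j) 0 with hvp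
  set vm : Fin n → ℝ := fun j => max (-v j) 0 with hvm
  have hvp0 : ∀ j, 0 ≤ vp j := fun j => le_max_right _ _
  have hvm0 : ∀ j, 0 ≤ vm j := fun j => le_max_right _ _
  have hsplit : ∀ j, vp j - vm j = v j := by
    intro j
    rcases le_total (v j) 0 with h | h
    · simp only [hvp, hvm]
      rw [max_eq_right h, max_eq_left (by linarith)]
      ring
    · simp only [hvp, hvm]
      rw [max_eq_left h, max_eq_right (by linarith)]
      ring
  have hvp𝕌 : ∀ j, vp j ∈ 𝕌 := by
    intro j
    rcases le_total (v j) 0 with h | h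
    · simp only [hvp]; rw [max_eq_right h]; exact 𝕌.zero_mem
    · simp only [hvp]; rw [max_eq_left h]; exact hv𝕌 j
  have hvm𝕌 : ∀ j, vm j ∈ 𝕌 := by
    intro j
    rcases le_total (v j) 0 with h | h
    · simp only [hvm]; rw [max_eq_left (by linarith)]; exact 𝕌.neg_mem (hv𝕌 j)
    · simp only [hvm]; rw [max_eq_right (by linarith)]; exact 𝕌.zero_mem
  set σ : ℝ := ∑ j, vm j with hσ2
  have hσ0 : 0 ≤ σ := Finset.sum_nonneg fun j _ => hvm0 j
  have hσ𝕌 : σ ∈ 𝕌 := sum_mem fun j _ => hvm𝕌 j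
  have hσp : ∑ j, vp j = σ := by
    have h1 : ∑ j, vp j - ∑ j, vm j = 0 := by
      rw [← Finset.sum_sub_distrib, Finset.sum_congr rfl fun j _ => hsplit j]
      exact hvsum
    rw [hσ2]; linarith
  have hvpσ : ∀ j, vp j ≤ σ := fun j => by
    rw [← hσp]; exact Finset.single_le_sum (fun i _ => hvp0 i) (Finset.mem_univ j)
  -- uniform entry bounds along the path
  set m : ℝ := Finset.univ.inf' Finset.univ_nonempty
    (fun p : Fin n × Fin n => min (P p.1 p.2) (Q p.1 p.2)) with hmdef
  have hm0 : 0 < m := by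
    rw [hmdef, Finset.lt_inf'_iff]
    rintro ⟨i, j⟩ _
    exact lt_min (hpos i j) (hQpos i j)
  have hmle : ∀ i j, m ≤ P i j ∧ m ≤ Q i j := by
    intro i j
    have h := Finset.inf'_le (f := fun p : Fin n × Fin n => min (P p.1 p.2) (Q p.1 p.2))
      (Finset.mem_univ (i, j))
    exact ⟨le_trans h (min_le_left _ _), le_trans h (min_le_right _ _)⟩
  set K : ℝ := ∑ p : Fin n × Fin n, (P p.1 p.2 + Q p.1 p.2) with hKdef
  have hKle : ∀ i j, P i j + Q i j ≤ K :=
    fun i j => Finset.single_le_sum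
      (f := fun p : Fin n × Fin n => P p.1 p.2 + Q p.1 p.2)
      (fun p _ => add_nonneg (hpos _ _).le (hQpos _ _).le) (Finset.mem_univ (i, j))
  -- choice of the number of steps
  obtain ⟨N, hN⟩ := exists_nat_gt (σ * (K + 1) / m)
  have hNR : (0:ℝ) < (N:ℝ) := by
    have h0 : (0:ℝ) ≤ σ * (K + 1) / m := by
      apply div_nonneg _ hm0.le
      apply mul_nonneg hσ0
      have := hKle ⟨0, hn0⟩ ⟨0, hn0⟩
      nlinarith [hpos ⟨0, hn0⟩ ⟨0, hn0⟩, hQpos ⟨0, hn0⟩ ⟨0, hn0⟩]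
    linarith
  set δ : ℝ := (N:ℝ)⁻¹ with hδdef
  have hδ0 : 0 < δ := by rw [hδdef]; positivity
  have hδ𝕌 : δ ∈ 𝕌 := 𝕌.inv_mem (natCast_mem 𝕌 N)
  have hmain : δ * (σ * (K + 1)) ≤ m := by
    have h1 : σ * (K + 1) < (N:ℝ) * m := by
      rw [div_lt_iff₀ hm0] at hN; exact hN
    have h2 : δ * (σ * (K + 1)) ≤ δ * ((N:ℝ) * m) :=
      mul_le_mul_of_nonneg_left h1.le hδ0.le
    have h3 : δ * ((N:ℝ) * m) = m := by
      rw [hδdef, ← mul_assoc, inv_mul_cancel₀ hNR.ne', one_mul]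
    linarith
  have hδσK : δ * σ * K + δ * σ ≤ m := by nlinarith
  have hδσ0 : 0 ≤ δ * σ := mul_nonneg hδ0.le hσ0
  have h1δσ : (1:ℝ) + δ * σ ≠ 0 := by positivity
  -- the path of matrices
  set Ach : ℕ → Matrix (Fin n) (Fin n) ℝ :=
    fun k => Matrix.of (fun i j => P i j + ((k:ℝ) * δ) * w j) with hAch
  have hAapp : ∀ k : ℕ, ∀ i j, Ach k i j = P i j + ((k:ℝ) * δ) * w j := fun k i j => rfl
  have hAch0 : Ach 0 = P := by
    ext i j; rw [hAapp]; simp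
  have hAchN : Ach N = Q := by
    ext i j
    rw [hAapp, hQapp, hδdef, mul_inv_cancel₀ hNR.ne', one_mul]
  have hA𝕌 : ∀ k : ℕ, ∀ i j, Ach k i j ∈ 𝕌 := fun k i j =>
    𝕌.add_mem (hUP i j) (𝕌.mul_mem (𝕌.mul_mem (natCast_mem 𝕌 k) hδ𝕌) (hw𝕌 j))
  have hArow : ∀ k : ℕ, ∀ i, ∑ j, Ach k i j = 1 := by
    intro k i
    simp only [hAapp]
    rw [Finset.sum_add_distrib, hrow i, ← Finset.mul_sum, hwsum, mul_zero, add_zero]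
  have hAm : ∀ k : ℕ, k ≤ N → ∀ i j, m ≤ Ach k i j := by
    intro k hk i j
    have ht0 : 0 ≤ (k:ℝ) * δ := by positivity
    have ht1 : (k:ℝ) * δ ≤ 1 := by
      have hkN : (k:ℝ) ≤ (N:ℝ) := by exact_mod_cast hk
      calc (k:ℝ) * δ ≤ (N:ℝ) * δ := mul_le_mul_of_nonneg_right hkN hδ0.le
      _ = 1 := by rw [hδdef, mul_inv_cancel₀ hNR.ne']
    rcases le_total 0 (w j) with hwj | hwj
    · have h2 : P i j ≤ Ach k i j := by rw [hAapp]; nlinarith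
      linarith [(hmle i j).1]
    · have hQa : Ach k i j = Q i j + ((k:ℝ) * δ - 1) * w j := by rw [hAapp, hQapp]; ring
      have h2 : Q i j ≤ Ach k i j := by rw [hQa]; nlinarith
      linarith [(hmle i j).2]
  have hAK : ∀ k : ℕ, k ≤ N → ∀ i j, Ach k i j ≤ K := by
    intro k hk i j
    have ht0 : 0 ≤ (k:ℝ) * δ := by positivity
    have ht1 : (k:ℝ) * δ ≤ 1 := by
      have hkN : (k:ℝ) ≤ (N:ℝ) := by exact_mod_cast hk
      calc (k:ℝ) * δ ≤ (N:ℝ) * δ := mul_le_mul_of_nonneg_right hkN hδ0.le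
      _ = 1 := by rw [hδdef, mul_inv_cancel₀ hNR.ne']
    have hKij := hKle i j
    rcases le_total 0 (w j) with hwj | hwj
    · have hQa : Ach k i j = Q i j + ((k:ℝ) * δ - 1) * w j := by rw [hAapp, hQapp]; ring
      have h2 : Ach k i j ≤ Q i j := by rw [hQa]; nlinarith
      nlinarith [hpos i j]
    · have h2 : Ach k i j ≤ P i j := by rw [hAapp]; nlinarith
      nlinarith [hQpos i j]
  -- auxiliary sums
  set a : Fin n → ℝ := fun q => ∑ l, vm l * P l q with ha
  set b : Fin n → ℝ := fun q => ∑ l, vp l * P l q with hb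
  have hba : ∀ q, b q = a q + ((vp q - vm q) + w q) := by
    intro q
    have h1 : ∑ l, vp l * P l q - ∑ l, vm l * P l q = v q + w q := by
      rw [← Finset.sum_sub_distrib,
        Finset.sum_congr rfl fun l (_ : l ∈ Finset.univ) => by rw [← sub_mul, hsplit l]]
      exact hvP q
    simp only [ha, hb]
    rw [hsplit q]
    linarith
  -- the inductive chain
  have chain : ∀ k : ℕ, k ≤ N → SSEn {x : ℝ | x ∈ 𝕌 ∧ 0 ≤ x} P (Ach k) := by
    intro k
    induction k with
    | zero => intro _; rw [hAch0]; exact Relation.ReflTransGen.refl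
    | succ k ih =>
      intro hk1
      have hk : k ≤ N := Nat.le_of_succ_le hk1
      have hA0 : ∀ i j, 0 ≤ Ach k i j := fun i j => le_trans hm0.le (hAm k hk i j)
      -- step 1 : conjugate by (1 + e (δ vm)ᵀ)⁻¹
      have hsu : ∑ l, δ * vm l = δ * σ := by rw [← Finset.mul_sum, hσ2]
      have hsu' : ∑ l, δ * vp l = δ * σ := by rw [← Finset.mul_sum, hσp]
      have hS : ∀ q, ∑ l, (δ * vm l) * Ach k l q
          = δ * a q + (δ * (((k:ℝ) * δ) * w q)) * σ := by
        intro q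
        have e : ∀ l, (δ * vm l) * Ach k l q
            = δ * (vm l * P l q) + (δ * (((k:ℝ) * δ) * w q)) * vm l := by
          intro l; rw [hAapp]; ring
        rw [Finset.sum_congr rfl fun l _ => e l, Finset.sum_add_distrib,
          ← Finset.mul_sum, ← Finset.mul_sum, ← hσ2]
      have hSbound : ∀ i j, (∑ l, (δ * vm l) * Ach k l j) ≤ Ach k i j := by
        intro i j
        have h1 : ∑ l, (δ * vm l) * Ach k l j ≤ ∑ l, (δ * vm l) * K := by
          apply Finset.sum_le_sum
          intro l _
          exact mul_le_mul_of_nonneg_left (hAK k hk l j)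
            (mul_nonneg hδ0.le (hvm0 l))
        have h2 : ∑ l, (δ * vm l) * K = δ * σ * K := by
          rw [← Finset.sum_mul, hsu]
        have h3 := hAm k hk i j
        have h4 : 0 ≤ δ * σ := hδσ0
        linarith
      have step1 := esse1 𝕌 (Ach k) (fun l => δ * vm l) (hA𝕌 k) hA0 (hArow k)
        (fun l => 𝕌.mul_mem hδ𝕌 (hvm𝕌 l)) (fun l => mul_nonneg hδ0.le (hvm0 l)) hSbound
      set B : Matrix (Fin n) (Fin n) ℝ := Matrix.of fun i j =>
        Ach k i j + (1 + ∑ l, δ * vm l)⁻¹ * (δ * vm j - ∑ l, (δ * vm l) * Ach k l j)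
        with hBdef
      have hBapp : ∀ p q, B p q = Ach k p q
          + (1 + δ * σ)⁻¹ * (δ * vm q - (δ * a q + (δ * (((k:ℝ) * δ) * w q)) * σ)) := by
        intro p q
        show Ach k p q + (1 + ∑ l, δ * vm l)⁻¹ * (δ * vm q - ∑ l, (δ * vm l) * Ach k l q) = _
        rw [hsu, hS q]
      have hβ0 : 0 ≤ (1 + δ * σ)⁻¹ := by positivity
      have hβ1 : (1 + δ * σ)⁻¹ ≤ 1 := by
        rw [inv_le_one_iff₀]; right; linarith
      have hS0 : ∀ q, 0 ≤ ∑ l, (δ * vm l) * Ach k l q := fun q =>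
        Finset.sum_nonneg fun l _ => mul_nonneg (mul_nonneg hδ0.le (hvm0 l)) (hA0 l q)
      have hSK : ∀ q, ∑ l, (δ * vm l) * Ach k l q ≤ δ * σ * K := by
        intro q
        have h1 : ∑ l, (δ * vm l) * Ach k l q ≤ ∑ l, (δ * vm l) * K :=
          Finset.sum_le_sum fun l _ => mul_le_mul_of_nonneg_left (hAK k hk l q)
            (mul_nonneg hδ0.le (hvm0 l))
        have h2 : ∑ l, (δ * vm l) * K = δ * σ * K := by rw [← Finset.sum_mul, hsu]
        linarith
      have hBlow : ∀ p q, m - δ * σ * K ≤ B p q := by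
        intro p q
        show m - δ * σ * K ≤ Ach k p q
          + (1 + ∑ l, δ * vm l)⁻¹ * (δ * vm q - ∑ l, (δ * vm l) * Ach k l q)
        rw [hsu]
        have h3 := hAm k hk p q
        have h4 := hS0 q
        have h5 := hSK q
        have h6 : 0 ≤ δ * vm q := mul_nonneg hδ0.le (hvm0 q)
        nlinarith [mul_le_mul_of_nonneg_left h5 hβ0, hβ1, hβ0]
      have hB0 : ∀ p q, 0 ≤ B p q := by
        intro p q
        have h8 := hBlow p q
        have hK0 : (0:ℝ) ≤ K := le_trans (add_nonneg (hpos ⟨0, hn0⟩ ⟨0, hn0⟩).le (hQpos ⟨0, hn0⟩ ⟨0, hn0⟩).le) (hKle ⟨0, hn0⟩ ⟨0, hn0⟩)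
        have h7 : 0 ≤ δ * σ * K := mul_nonneg hδσ0 hK0
        linarith
      have hB𝕌 : ∀ p q, B p q ∈ 𝕌 := by
        intro p q
        show Ach k p q + (1 + ∑ l, δ * vm l)⁻¹ * (δ * vm q - ∑ l, (δ * vm l) * Ach k l q) ∈ 𝕌
        exact 𝕌.add_mem (hA𝕌 k p q)
          (𝕌.mul_mem
            (𝕌.inv_mem (𝕌.add_mem 𝕌.one_mem
              (sum_mem fun l _ => 𝕌.mul_mem hδ𝕌 (hvm𝕌 l))))
            (𝕌.sub_mem (𝕌.mul_mem hδ𝕌 (hvm𝕌 q))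
              (sum_mem fun l _ => 𝕌.mul_mem (𝕌.mul_mem hδ𝕌 (hvm𝕌 l)) (hA𝕌 k l q))))
      have hBrow : ∀ p, ∑ q, B p q = 1 := by
        intro p
        have hSS : ∑ q, ∑ l, (δ * vm l) * Ach k l q = δ * σ := by
          rw [Finset.sum_comm]
          rw [Finset.sum_congr rfl fun l (_ : l ∈ Finset.univ) => by
            rw [← Finset.mul_sum, hArow k l, mul_one]]
          exact hsu
        show ∑ q, (Ach k p q
          + (1 + ∑ l, δ * vm l)⁻¹ * (δ * vm q - ∑ l, (δ * vm l) * Ach k l q)) = 1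
        rw [Finset.sum_add_distrib, hArow k p, ← Finset.mul_sum, Finset.sum_sub_distrib,
          hSS, hsu]
        simp
      have hcondb : ∀ p q, δ * vp q ≤ B p q := by
        intro p q
        have h1 : δ * vp q ≤ δ * σ := mul_le_mul_of_nonneg_left (hvpσ q) hδ0.le
        have h2 := hBlow p q
        linarith
      have step2 := esse2 𝕌 B (fun l => δ * vp l) hB𝕌 hB0 hBrow
        (fun l => 𝕌.mul_mem hδ𝕌 (hvp𝕌 l)) (fun l => mul_nonneg hδ0.le (hvp0 l)) hcondb
      -- identify the end of step 2 with the next matrix on the path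
      have hCA : (Matrix.of fun i j => B i j + ((∑ l, (δ * vp l) * B l j) - δ * vp j))
          = Ach (k + 1) := by
        ext i j
        have hT : ∑ l, (δ * vp l) * B l j
            = δ * b j + (δ * (((k:ℝ) * δ) * w j)) * σ
              + (δ * σ) * ((1 + δ * σ)⁻¹
                  * (δ * vm j - (δ * a j + (δ * (((k:ℝ) * δ) * w j)) * σ))) := by
          have e : ∀ l, (δ * vp l) * B l j
              = (δ * vp l) * Ach k l j
                + (δ * vp l) * ((1 + δ * σ)⁻¹
                    * (δ * vm j - (δ * a j + (δ * (((k:ℝ) * δ) * w j)) * σ))) := by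
            intro l; rw [hBapp l j]; ring
          rw [Finset.sum_congr rfl fun l _ => e l, Finset.sum_add_distrib,
            ← Finset.sum_mul, hsu']
          have hS' : ∑ l, (δ * vp l) * Ach k l j
              = δ * b j + (δ * (((k:ℝ) * δ) * w j)) * σ := by
            have e2 : ∀ l, (δ * vp l) * Ach k l j
                = δ * (vp l * P l j) + (δ * (((k:ℝ) * δ) * w j)) * vp l := by
              intro l; rw [hAapp]; ring
            rw [Finset.sum_congr rfl fun l _ => e2 l, Finset.sum_add_distrib,
              ← Finset.mul_sum, ← Finset.mul_sum, hσp]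
          rw [hS']
        show B i j + ((∑ l, (δ * vp l) * B l j) - δ * vp j) = Ach (k + 1) i j
        rw [hT, hBapp i j, hba j]
        simp only [hAapp]
        push_cast
        field_simp
        ring
      exact ((ih hk).tail step1).tail (hCA ▸ step2)
  have hfinal : SSEn {x : ℝ | x ∈ 𝕌 ∧ 0 ≤ x} P Q := by
    have := chain N le_rfl
    rwa [hAchN] at this
  exact ⟨Q, hQ𝕌, hQpos, hQrow, hQcol, hsim, hfinal⟩
end

section
/- Let 𝕌 be a subfield of ℝ, n ≥ 2, and let P = (p_ij) be an n×n positive stochastic matrix with entries in 𝕌. If max_{i,j} p_ij − min_{i,j} p_ij < 1/n, then P is similar over 𝕌 to a positive doubly stochastic matrix Q and is strong shift equivalent over 𝕌₊ to Q through a chain consisting entirely of n×n matrices. -/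
open Matrix BigOperators

def dmat {n : ℕ} (v : Fin n → ℝ) : Matrix (Fin n) (Fin n) ℝ :=
  Matrix.of fun i j => (if i = j then (1:ℝ) else 0) + v j

lemma dmat_apply {n : ℕ} (v : Fin n → ℝ) (i j : Fin n) :
    dmat v i j = (if i = j then (1:ℝ) else 0) + v j := rfl

lemma mul_dmat_apply {n : ℕ} (X : Matrix (Fin n) (Fin n) ℝ) (q : Fin n → ℝ) (i j : Fin n) :
    (X * dmat q) i j = X i j + (∑ k, X i k) * q j := by
  rw [Matrix.mul_apply]
  have : ∀ k, X i k * dmat q k j = (if k = j then X i k else 0) + X i k * q j := by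
    intro k
    rw [dmat_apply, mul_add]
    congr 1
    by_cases h : k = j <;> simp [h]
  simp only [this, Finset.sum_add_distrib, Finset.sum_ite_eq', Finset.mem_univ, if_true,
    ← Finset.sum_mul]

lemma dmat_mul_apply {n : ℕ} (p : Fin n → ℝ) (Y : Matrix (Fin n) (Fin n) ℝ) (i j : Fin n) :
    (dmat p * Y) i j = Y i j + ∑ k, p k * Y k j := by
  rw [Matrix.mul_apply]
  have : ∀ k, dmat p i k * Y k j = (if k = i then Y k j else 0) + p k * Y k j := by
    intro k
    rw [dmat_apply, add_mul]
    congr 1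
    by_cases h : i = k
    · simp [h]
    · simp [h, Ne.symm h]
  simp only [this, Finset.sum_add_distrib, Finset.sum_ite_eq', Finset.mem_univ, if_true]

lemma abs_mem_subfield (𝕌 : Subfield ℝ) {a : ℝ} (ha : a ∈ 𝕌) : |a| ∈ 𝕌 := by
  rcases abs_cases a with ⟨h1, _⟩ | ⟨h1, _⟩
  · rw [h1]; exact ha
  · rw [h1]; exact 𝕌.neg_mem ha

lemma twostep (𝕌 : Subfield ℝ) {n : ℕ} (hn : 0 < n)
    (A : Matrix (Fin n) (Fin n) ℝ) (u w : Fin n → ℝ) (μ h : ℝ)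
    (hA𝕌 : ∀ i j, A i j ∈ 𝕌) (hu𝕌 : ∀ j, u j ∈ 𝕌) (hh𝕌 : h ∈ 𝕌)
    (hμpos : 0 < μ) (hApos : ∀ i j, μ ≤ A i j) (hA1 : ∀ i j, A i j ≤ 1)
    (hrowA : ∀ i, ∑ j, A i j = 1)
    (husum : ∑ j, u j = 0)
    (heig : ∀ j, ∑ i, u i * A i j = u j + w j)
    (hhpos : 0 < h)
    (hsmall : h * (∑ j, (|u j| + u j) / 2) ≤ μ / 4) :
    SSEn {x : ℝ | x ∈ 𝕌 ∧ 0 ≤ x} A (Matrix.of fun i j => A i j + h * w j) := by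
  have i0 : Fin n := ⟨0, hn⟩
  set up : Fin n → ℝ := fun j => (|u j| + u j) / 2 with hup_def
  set um : Fin n → ℝ := fun j => (|u j| - u j) / 2 with hum_def
  have hup0 : ∀ j, 0 ≤ up j := fun j => by
    have := neg_abs_le (u j); simp only [hup_def]; linarith
  have hum0 : ∀ j, 0 ≤ um j := fun j => by
    have := le_abs_self (u j); simp only [hum_def]; linarith
  have hupum : ∀ j, up j - um j = u j := fun j => by simp only [hup_def, hum_def]; ring
  set s : ℝ := ∑ j, up j with hs_def
  have hs0 : 0 ≤ s := Finset.sum_nonneg fun j _ => hup0 j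
  have hums : ∑ j, um j = s := by
    have : ∀ j ∈ Finset.univ, um j = up j - u j := fun j _ => by
      simp only [hup_def, hum_def]; ring
    rw [Finset.sum_congr rfl this, Finset.sum_sub_distrib, husum, sub_zero]
  have hhs : h * s ≤ μ / 4 := hsmall
  have hμ1 : μ ≤ 1 := le_trans (hApos i0 i0) (hA1 i0 i0)
  set d : ℝ := 1 - h * s with hd_def
  have hhs0 : 0 ≤ h * s := mul_nonneg hhpos.le hs0
  have hd : 3 / 4 ≤ d := by rw [hd_def]; linarith
  have hdpos : 0 < d := lt_of_lt_of_le (by norm_num) hd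
  have hdne : d ≠ 0 := ne_of_gt hdpos
  -- memberships
  have hup𝕌 : ∀ j, up j ∈ 𝕌 := fun j =>
    𝕌.div_mem (𝕌.add_mem (abs_mem_subfield 𝕌 (hu𝕌 j)) (hu𝕌 j)) (by exact_mod_cast natCast_mem 𝕌 2 : (2:ℝ) ∈ 𝕌)
  have hum𝕌 : ∀ j, um j ∈ 𝕌 := fun j =>
    𝕌.div_mem (𝕌.sub_mem (abs_mem_subfield 𝕌 (hu𝕌 j)) (hu𝕌 j)) (by exact_mod_cast natCast_mem 𝕌 2 : (2:ℝ) ∈ 𝕌)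
  have hs𝕌 : s ∈ 𝕌 := Subfield.sum_mem 𝕌 fun j _ => hup𝕌 j
  have hd𝕌 : d ∈ 𝕌 := 𝕌.sub_mem 𝕌.one_mem (𝕌.mul_mem hh𝕌 hs𝕌)
  -- matrices
  set U1 : Matrix (Fin n) (Fin n) ℝ := Matrix.of (fun i j => A i j - h * up j) with hU1_def
  set V1 : Matrix (Fin n) (Fin n) ℝ := dmat (fun j => h * up j / d) with hV1_def
  set z : Fin n → ℝ := fun j => ∑ k, up k * A k j with hz_def
  set Cm : Matrix (Fin n) (Fin n) ℝ :=
    Matrix.of (fun i j => A i j + (h / d) * (z j - up j)) with hCm_def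
  set U2 : Matrix (Fin n) (Fin n) ℝ := dmat (fun j => h * um j / d) with hU2_def
  set y : Fin n → ℝ := fun j => ∑ k, um k * Cm k j with hy_def
  set V2 : Matrix (Fin n) (Fin n) ℝ := Matrix.of (fun i j => Cm i j - h * y j) with hV2_def
  -- row sums
  have hU1row : ∀ i, ∑ k, U1 i k = d := by
    intro i
    simp only [hU1_def, Matrix.of_apply]
    rw [Finset.sum_sub_distrib, hrowA, ← Finset.mul_sum, ← hs_def, ← hd_def]
  have hzsum : ∑ k, z k = s := by
    simp only [hz_def]
    rw [Finset.sum_comm]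
    have : ∀ k ∈ Finset.univ, ∑ j : Fin n, up k * A k j = up k := fun k _ => by
      rw [← Finset.mul_sum, hrowA, mul_one]
    rw [Finset.sum_congr rfl this]
  have hCmrow : ∀ i, ∑ k, Cm i k = 1 := by
    intro i
    simp only [hCm_def, Matrix.of_apply]
    rw [Finset.sum_add_distrib, hrowA, ← Finset.mul_sum, Finset.sum_sub_distrib, hzsum,
      ← hs_def, sub_self, mul_zero, add_zero]
  have hysum : ∑ k, y k = s := by
    simp only [hy_def]
    rw [Finset.sum_comm]
    have : ∀ k ∈ Finset.univ, ∑ j : Fin n, um k * Cm k j = um k := fun k _ => by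
      rw [← Finset.mul_sum, hCmrow, mul_one]
    rw [Finset.sum_congr rfl this, hums]
  have hV2row : ∀ i, ∑ k, V2 i k = d := by
    intro i
    simp only [hV2_def, Matrix.of_apply]
    rw [Finset.sum_sub_distrib, hCmrow, ← Finset.mul_sum, hysum, ← hd_def]
  -- bounds
  have hup_le : ∀ j, up j ≤ s := fun j =>
    Finset.single_le_sum (fun k _ => hup0 k) (Finset.mem_univ j)
  have hum_le : ∀ j, um j ≤ s := fun j => by
    rw [← hums]; exact Finset.single_le_sum (fun k _ => hum0 k) (Finset.mem_univ j)
  have hA0 : ∀ i j, 0 ≤ A i j := fun i j => le_trans hμpos.le (hApos i j)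
  have hz0 : ∀ j, 0 ≤ z j := fun j => Finset.sum_nonneg fun k _ =>
    mul_nonneg (hup0 k) (hA0 k j)
  have hzs : ∀ j, z j ≤ s := by
    intro j
    rw [hz_def, hs_def]
    exact Finset.sum_le_sum fun k _ => by
      have := hA1 k j
      nlinarith [hup0 k]
  have hhd : h / d * s ≤ μ / 3 := by
    have h1 : (h * s) / d ≤ (μ / 4) / (3 / 4) :=
      div_le_div₀ (by positivity) hhs (by norm_num) hd
    have h2 : (μ / 4) / (3 / 4 : ℝ) = μ / 3 := by ring
    calc h / d * s = (h * s) / d := by ring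
      _ ≤ μ / 3 := by rw [← h2]; exact h1
  have hhd0 : 0 ≤ h / d := div_nonneg hhpos.le hdpos.le
  have hCmlb : ∀ i j, 2 * μ / 3 ≤ Cm i j := by
    intro i j
    simp only [hCm_def, Matrix.of_apply]
    have h1 : (h / d) * (z j - up j) ≥ -(h / d * s) := by nlinarith [hz0 j, hup_le j]
    have := hApos i j
    linarith [hhd]
  have hCmub : ∀ i j, Cm i j ≤ 4 / 3 := by
    intro i j
    simp only [hCm_def, Matrix.of_apply]
    have h1 : (h / d) * (z j - up j) ≤ h / d * s := by nlinarith [hzs j, hup0 j]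
    have := hA1 i j
    linarith [hhd]
  have hy0 : ∀ j, 0 ≤ y j := fun j => Finset.sum_nonneg fun k _ =>
    mul_nonneg (hum0 k) (le_trans (by positivity) (hCmlb k j))
  have hyub : ∀ j, y j ≤ 4 / 3 * s := by
    intro j
    calc y j ≤ ∑ k, um k * (4 / 3) :=
          Finset.sum_le_sum fun k _ => mul_le_mul_of_nonneg_left (hCmub k j) (hum0 k)
      _ = 4 / 3 * s := by rw [← Finset.sum_mul, hums]; ring
  have hV2nn : ∀ i j, 0 ≤ V2 i j := by
    intro i j
    simp only [hV2_def, Matrix.of_apply]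
    have h1 := hCmlb i j
    have h2 : h * y j ≤ h * (4 / 3 * s) := mul_le_mul_of_nonneg_left (hyub j) hhpos.le
    nlinarith
  -- products
  have hAU1V1 : A = U1 * V1 := by
    ext i j
    rw [hV1_def, mul_dmat_apply, hU1row]
    simp only [hU1_def, Matrix.of_apply]
    field_simp
    ring
  have hCmV1U1 : Cm = V1 * U1 := by
    ext i j
    rw [hV1_def, dmat_mul_apply]
    have e1 : ∀ k ∈ Finset.univ, (h * up k / d) * (U1 k j)
        = (h / d) * (up k * A k j) - (h * h * up j / d) * up k := fun k _ => by
      simp only [hU1_def, Matrix.of_apply]; ring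
    rw [Finset.sum_congr rfl e1, Finset.sum_sub_distrib, ← Finset.mul_sum, ← Finset.mul_sum]
    have hz' : ∑ k, up k * A k j = z j := rfl
    have hs' : ∑ k, up k = s := rfl
    rw [hz', hs']
    simp only [hCm_def, hU1_def, Matrix.of_apply]
    field_simp
    ring
  have hCmU2V2 : Cm = U2 * V2 := by
    ext i j
    rw [hU2_def, dmat_mul_apply]
    have e1 : ∀ k ∈ Finset.univ, (h * um k / d) * (V2 k j)
        = (h / d) * (um k * Cm k j) - (h * h * y j / d) * um k := fun k _ => by
      simp only [hV2_def, Matrix.of_apply]; ring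
    rw [Finset.sum_congr rfl e1, Finset.sum_sub_distrib, ← Finset.mul_sum, ← Finset.mul_sum]
    have hy' : ∑ k, um k * Cm k j = y j := rfl
    rw [hy', hums]
    simp only [hV2_def, Matrix.of_apply]
    field_simp
    ring
  have hBV2U2 : (Matrix.of fun i j => A i j + h * w j) = V2 * U2 := by
    ext i j
    rw [hU2_def, mul_dmat_apply, hV2row]
    have e2 : ∀ k ∈ Finset.univ, um k * Cm k j
        = um k * A k j + ((h / d) * (z j - up j)) * um k := fun k _ => by
      simp only [hCm_def, Matrix.of_apply]; ring
    have hyj : y j = (∑ k, um k * A k j) + ((h / d) * (z j - up j)) * s := by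
      have h0 : y j = ∑ k, um k * Cm k j := rfl
      rw [h0, Finset.sum_congr rfl e2, Finset.sum_add_distrib, ← Finset.mul_sum, hums]
    have hzzm : z j - (∑ k, um k * A k j) = u j + w j := by
      have h1 : z j - (∑ k, um k * A k j) = ∑ k, u k * A k j := by
        have h2 : z j = ∑ k, up k * A k j := rfl
        rw [h2, ← Finset.sum_sub_distrib]
        exact Finset.sum_congr rfl fun k _ => by rw [← sub_mul, hupum]
      rw [h1, heig]
    have hz2 : z j = (∑ k, um k * A k j) + u j + w j := by linarith
    have hup2 : up j = u j + um j := by have := hupum j; linarith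
    simp only [hV2_def, hCm_def, Matrix.of_apply]
    rw [hyj, hz2, hup2]
    field_simp
    ring
  -- memberships
  have hz𝕌 : ∀ j, z j ∈ 𝕌 := fun j =>
    Subfield.sum_mem 𝕌 fun k _ => 𝕌.mul_mem (hup𝕌 k) (hA𝕌 k j)
  have hCm𝕌 : ∀ i j, Cm i j ∈ 𝕌 := fun i j => by
    simp only [hCm_def, Matrix.of_apply]
    exact 𝕌.add_mem (hA𝕌 i j)
      (𝕌.mul_mem (𝕌.div_mem hh𝕌 hd𝕌) (𝕌.sub_mem (hz𝕌 j) (hup𝕌 j)))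
  have hy𝕌 : ∀ j, y j ∈ 𝕌 := fun j =>
    Subfield.sum_mem 𝕌 fun k _ => 𝕌.mul_mem (hum𝕌 k) (hCm𝕌 k j)
  have hU1S : ∀ i j, U1 i j ∈ {x : ℝ | x ∈ 𝕌 ∧ 0 ≤ x} := by
    intro i j
    refine ⟨𝕌.sub_mem (hA𝕌 i j) (𝕌.mul_mem hh𝕌 (hup𝕌 j)), ?_⟩
    have h1 : h * up j ≤ h * s := mul_le_mul_of_nonneg_left (hup_le j) hhpos.le
    have h2 := hApos i j
    simp only [hU1_def, Matrix.of_apply]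
    linarith
  have hV1S : ∀ i j, V1 i j ∈ {x : ℝ | x ∈ 𝕌 ∧ 0 ≤ x} := by
    intro i j
    simp only [hV1_def, dmat_apply, Set.mem_setOf_eq]
    constructor
    · exact 𝕌.add_mem (by split_ifs; exacts [𝕌.one_mem, 𝕌.zero_mem])
        (𝕌.div_mem (𝕌.mul_mem hh𝕌 (hup𝕌 j)) hd𝕌)
    · exact add_nonneg (by split_ifs <;> norm_num)
        (div_nonneg (mul_nonneg hhpos.le (hup0 j)) hdpos.le)
  have hU2S : ∀ i j, U2 i j ∈ {x : ℝ | x ∈ 𝕌 ∧ 0 ≤ x} := by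
    intro i j
    simp only [hU2_def, dmat_apply, Set.mem_setOf_eq]
    constructor
    · exact 𝕌.add_mem (by split_ifs; exacts [𝕌.one_mem, 𝕌.zero_mem])
        (𝕌.div_mem (𝕌.mul_mem hh𝕌 (hum𝕌 j)) hd𝕌)
    · exact add_nonneg (by split_ifs <;> norm_num)
        (div_nonneg (mul_nonneg hhpos.le (hum0 j)) hdpos.le)
  have hV2S : ∀ i j, V2 i j ∈ {x : ℝ | x ∈ 𝕌 ∧ 0 ≤ x} := by
    intro i j
    exact ⟨𝕌.sub_mem (hCm𝕌 i j) (𝕌.mul_mem hh𝕌 (hy𝕌 j)), hV2nn i j⟩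
  exact Relation.ReflTransGen.tail
    (Relation.ReflTransGen.single ⟨U1, V1, hU1S, hV1S, hAU1V1, hCmV1U1⟩)
    ⟨U2, V2, hU2S, hV2S, hCmU2V2, hBV2U2⟩


set_option maxHeartbeats 1600000 in
/-- Let `𝕌` be a subfield of `ℝ`, `n ≥ 2`, and `P` an `n × n` positive
stochastic matrix over `𝕌`. If the difference between the largest and the smallest entry of
`P` is less than `1/n` (equivalently, `P i j - P i' j' < 1/n` for all `i, j, i', j'`), then
`P` is similar over `𝕌` to a positive doubly stochastic matrix `Q` and strong shift
equivalent over `𝕌₊` to `Q` through `n × n` matrices. -/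
theorem stmt6 (𝕌 : Subfield ℝ) {n : ℕ} (hn : 2 ≤ n)
    (P : Matrix (Fin n) (Fin n) ℝ) (hUP : ∀ i j, P i j ∈ 𝕌)
    (hpos : ∀ i j, 0 < P i j) (hrow : ∀ i, ∑ j, P i j = 1)
    (hgap : ∀ i j i' j', P i j - P i' j' < 1 / (n : ℝ)) :
    ∃ Q : Matrix (Fin n) (Fin n) ℝ,
      (∀ i j, Q i j ∈ 𝕌) ∧ (∀ i j, 0 < Q i j) ∧
      (∀ i, ∑ j, Q i j = 1) ∧ (∀ j, ∑ i, Q i j = 1) ∧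
      SimilarOver (𝕌 : Set ℝ) P Q ∧
      SSEn {x : ℝ | x ∈ 𝕌 ∧ 0 ≤ x} P Q := by
  have hn0 : 0 < n := lt_of_lt_of_le two_pos hn
  haveI : Nonempty (Fin n) := ⟨⟨0, hn0⟩⟩
  have hnR : (0:ℝ) < n := by exact_mod_cast hn0
  have hnne : (n:ℝ) ≠ 0 := ne_of_gt hnR
  set c : Fin n → ℝ := fun j => ∑ i, P i j with hc_def
  set w : Fin n → ℝ := fun j => (1 - c j) / n with hw_def
  set Q : Matrix (Fin n) (Fin n) ℝ := Matrix.of (fun i j => P i j + w j) with hQ_def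
  have hcj : ∀ j, ∑ i, P i j = c j := fun j => rfl
  clear_value c w Q
  have hcsum : ∑ j, c j = n := by
    simp only [hc_def]
    rw [Finset.sum_comm]
    rw [Finset.sum_congr rfl fun i (_ : i ∈ Finset.univ) => hrow i]
    simp [Finset.card_univ]
  have hwsum : ∑ j, w j = 0 := by
    simp only [hw_def]
    rw [← Finset.sum_div, Finset.sum_sub_distrib, hcsum]
    simp [Finset.card_univ]
  have hc𝕌 : ∀ j, c j ∈ 𝕌 := fun j => by
    rw [← hcj j]; exact Subfield.sum_mem 𝕌 fun i _ => hUP i j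
  have hw𝕌 : ∀ j, w j ∈ 𝕌 := fun j => by
    simp only [hw_def]
    exact 𝕌.div_mem (𝕌.sub_mem 𝕌.one_mem (hc𝕌 j)) (natCast_mem 𝕌 n)
  have hQ𝕌 : ∀ i j, Q i j ∈ 𝕌 := fun i j => by
    simp only [hQ_def, Matrix.of_apply]
    exact 𝕌.add_mem (hUP i j) (hw𝕌 j)
  have hQpos : ∀ i j, 0 < Q i j := by
    intro i j
    have hsum : ∑ i' : Fin n, (P i j - P i' j + 1/(n:ℝ)) = (n:ℝ) * P i j + 1 - c j := by
      rw [Finset.sum_add_distrib, Finset.sum_sub_distrib]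
      simp only [Finset.sum_const, Finset.card_univ, Fintype.card_fin, nsmul_eq_mul]
      rw [hcj j]
      field_simp
      ring
    have hpos' : 0 < ∑ i' : Fin n, (P i j - P i' j + 1/(n:ℝ)) :=
      Finset.sum_pos (fun i' _ => by have := hgap i' j i j; linarith) Finset.univ_nonempty
    have hQe : Q i j = ((n:ℝ) * P i j + 1 - c j) / n := by
      simp only [hQ_def, hw_def, Matrix.of_apply]
      field_simp
      ring
    rw [hQe, ← hsum]
    exact div_pos hpos' hnR
  have hQrow : ∀ i, ∑ j, Q i j = 1 := by
    intro i
    simp only [hQ_def, Matrix.of_apply]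
    rw [Finset.sum_add_distrib, hrow, hwsum, add_zero]
  have hQcol : ∀ j, ∑ i, Q i j = 1 := by
    intro j
    simp only [hQ_def, Matrix.of_apply]
    rw [Finset.sum_add_distrib]
    simp only [Finset.sum_const, Finset.card_univ, Fintype.card_fin, nsmul_eq_mul]
    rw [hcj j]
    simp only [hw_def]
    field_simp
    ring
  have hPle1 : ∀ i j, P i j ≤ 1 := by
    intro i j
    have h1 : P i j ≤ ∑ k, P i k :=
      Finset.single_le_sum (fun k _ => (hpos i k).le) (Finset.mem_univ j)
    rwa [hrow] at h1
  have hQle1 : ∀ i j, Q i j ≤ 1 := by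
    intro i j
    have h1 : Q i j ≤ ∑ k, Q i k :=
      Finset.single_le_sum (fun k _ => (hQpos i k).le) (Finset.mem_univ j)
    rwa [hQrow] at h1
  -- left eigenvector over 𝕌
  set P' : Matrix (Fin n) (Fin n) 𝕌 := Matrix.of (fun i j => ⟨P i j, hUP i j⟩) with hP'_def
  have hdet1 : (P - 1).det = 0 := by
    rw [← Matrix.exists_mulVec_eq_zero_iff]
    refine ⟨fun _ => 1, ?_, ?_⟩
    · intro h0
      have := congrFun h0 ⟨0, hn0⟩
      norm_num at this
    · funext i
      simp only [Matrix.mulVec, dotProduct, Matrix.sub_apply, Matrix.one_apply, mul_one]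
      rw [Finset.sum_sub_distrib, hrow]
      simp
  have hdetT : (Pᵀ - 1).det = 0 := by
    have h1 : Pᵀ - 1 = (P - 1)ᵀ := by rw [Matrix.transpose_sub, Matrix.transpose_one]
    rw [h1, Matrix.det_transpose]
    exact hdet1
  have hdetU : (P'ᵀ - 1).det = 0 := by
    have hmap : (𝕌.subtype).mapMatrix (P'ᵀ - 1) = Pᵀ - 1 := by
      ext i j
      simp only [RingHom.mapMatrix_apply, Matrix.map_apply, Matrix.sub_apply,
        Matrix.transpose_apply, Matrix.one_apply, hP'_def, Matrix.of_apply]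
      by_cases hij : i = j <;> simp [hij]
    have h2 := RingHom.map_det 𝕌.subtype (P'ᵀ - 1)
    rw [hmap, hdetT] at h2
    exact Subtype.coe_injective h2
  obtain ⟨v, hvne, hveq⟩ := Matrix.exists_mulVec_eq_zero_iff.mpr hdetU
  set x : Fin n → ℝ := fun i => (v i : ℝ) with hx_def
  have hxa : ∀ i, (v i : ℝ) = x i := fun i => rfl
  clear_value x
  have hx𝕌 : ∀ i, x i ∈ 𝕌 := fun i => by rw [← hxa i]; exact (v i).2
  have hx : ∀ j, ∑ i, x i * P i j = x j := by
    intro j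
    have h1 := congrFun hveq j
    simp only [Matrix.mulVec, dotProduct, Matrix.sub_apply, Matrix.transpose_apply,
      Matrix.one_apply, Pi.zero_apply, sub_mul] at h1
    have h3 := congrArg (fun t : 𝕌 => (t : ℝ)) h1
    push_cast at h3
    simp only [Finset.sum_sub_distrib] at h3
    simp only [hxa, hP'_def, Matrix.of_apply, apply_ite (fun t : 𝕌 => (t : ℝ)),
      OneMemClass.coe_one, ZeroMemClass.coe_zero, ite_mul, one_mul, zero_mul,
      Finset.sum_ite_eq, Finset.mem_univ, if_true] at h3
    rw [Finset.sum_congr rfl fun i (_ : i ∈ Finset.univ) => mul_comm (x i) (P i j)]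
    linarith
  have hxne : ∃ i, x i ≠ 0 := by
    obtain ⟨i, hi⟩ := Function.ne_iff.mp hvne
    exact ⟨i, fun h0 => hi (by simpa [hx_def, ZeroMemClass.coe_eq_zero] using h0)⟩
  have hgap' : ∀ i j, |P i j - 1/(n:ℝ)| < 1/(n:ℝ) := by
    intro i j
    have hlow : ∃ k, P i k ≤ 1/(n:ℝ) := by
      by_contra hcon
      push_neg at hcon
      have h1 : ∑ k : Fin n, (1/(n:ℝ)) < ∑ k, P i k :=
        Finset.sum_lt_sum_of_nonempty Finset.univ_nonempty (fun k _ => hcon k)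
      rw [hrow] at h1
      simp only [Finset.sum_const, Finset.card_univ, Fintype.card_fin, nsmul_eq_mul] at h1
      rw [mul_one_div, div_self hnne] at h1
      exact lt_irrefl _ h1
    have hhigh : ∃ k, 1/(n:ℝ) ≤ P i k := by
      by_contra hcon
      push_neg at hcon
      have h1 : ∑ k, P i k < ∑ k : Fin n, (1/(n:ℝ)) :=
        Finset.sum_lt_sum_of_nonempty Finset.univ_nonempty (fun k _ => hcon k)
      rw [hrow] at h1
      simp only [Finset.sum_const, Finset.card_univ, Fintype.card_fin, nsmul_eq_mul] at h1
      rw [mul_one_div, div_self hnne] at h1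
      exact lt_irrefl _ h1
    obtain ⟨k1, hk1⟩ := hlow
    obtain ⟨k2, hk2⟩ := hhigh
    rw [abs_lt]
    constructor
    · have := hgap i k2 i j; linarith
    · have := hgap i j i k1; linarith
  set T : ℝ := ∑ i, x i with hT_def
  clear_value T
  have hTne : T ≠ 0 := by
    intro hT0
    obtain ⟨j0, _, hj0⟩ := Finset.exists_max_image Finset.univ (fun j => |x j|)
      Finset.univ_nonempty
    obtain ⟨i1, hi1⟩ := hxne
    have hj0pos : 0 < |x j0| :=
      lt_of_lt_of_le (abs_pos.mpr hi1) (hj0 i1 (Finset.mem_univ i1))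
    have key : x j0 = ∑ i, x i * (P i j0 - 1/(n:ℝ)) := by
      have h1 : ∑ i, x i * (P i j0 - 1/(n:ℝ))
          = (∑ i, x i * P i j0) - (∑ i, x i) * (1/(n:ℝ)) := by
        rw [Finset.sum_congr rfl fun i (_ : i ∈ Finset.univ) => mul_sub (x i) _ _,
          Finset.sum_sub_distrib, ← Finset.sum_mul]
      rw [h1, hx j0, ← hT_def, hT0, zero_mul, sub_zero]
    have h1 : |x j0| ≤ ∑ i, |x i| * |P i j0 - 1/(n:ℝ)| := by
      calc |x j0| = |∑ i, x i * (P i j0 - 1/(n:ℝ))| := by rw [← key]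
        _ ≤ ∑ i, |x i * (P i j0 - 1/(n:ℝ))| := Finset.abs_sum_le_sum_abs _ _
        _ = ∑ i, |x i| * |P i j0 - 1/(n:ℝ)| :=
            Finset.sum_congr rfl fun i _ => abs_mul _ _
    have h2 : ∑ i, |x i| * |P i j0 - 1/(n:ℝ)| < ∑ i : Fin n, |x j0| * (1/(n:ℝ)) := by
      refine lt_of_le_of_lt (Finset.sum_le_sum fun i _ =>
        mul_le_mul_of_nonneg_right (hj0 i (Finset.mem_univ i)) (abs_nonneg _)) ?_
      exact Finset.sum_lt_sum_of_nonempty Finset.univ_nonempty fun i _ =>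
        mul_lt_mul_of_pos_left (hgap' i j0) hj0pos
    have h3 : ∑ i : Fin n, |x j0| * (1/(n:ℝ)) = |x j0| := by
      simp only [Finset.sum_const, Finset.card_univ, Fintype.card_fin, nsmul_eq_mul]
      field_simp
    linarith
  have hT𝕌 : T ∈ 𝕌 := by
    rw [hT_def]; exact Subfield.sum_mem 𝕌 fun i _ => hx𝕌 i
  set u : Fin n → ℝ := fun j => x j / T - 1/(n:ℝ) with hu_def
  clear_value u
  have hu𝕌 : ∀ j, u j ∈ 𝕌 := fun j => by
    simp only [hu_def]
    exact 𝕌.sub_mem (𝕌.div_mem (hx𝕌 j) hT𝕌) (𝕌.div_mem 𝕌.one_mem (natCast_mem 𝕌 n))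
  have husum : ∑ j, u j = 0 := by
    simp only [hu_def]
    rw [Finset.sum_sub_distrib, ← Finset.sum_div, ← hT_def, div_self hTne]
    simp only [Finset.sum_const, Finset.card_univ, Fintype.card_fin, nsmul_eq_mul]
    rw [mul_one_div, div_self hnne, sub_self]
  have heig : ∀ j, ∑ i, u i * P i j = u j + w j := by
    intro j
    have e : ∀ i ∈ Finset.univ, u i * P i j = (x i * P i j) / T - (1/(n:ℝ)) * P i j :=
      fun i _ => by simp only [hu_def]; ring
    rw [Finset.sum_congr rfl e, Finset.sum_sub_distrib, ← Finset.sum_div, hx j,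
      ← Finset.mul_sum]
    rw [hcj j]
    simp only [hu_def, hw_def]
    field_simp
    ring
  -- similarity
  set M : Matrix (Fin n) (Fin n) ℝ := dmat u with hM_def
  set Mi : Matrix (Fin n) (Fin n) ℝ := dmat (fun j => -u j) with hMi_def
  clear_value M Mi
  have hMrow : ∀ i, ∑ k, M i k = 1 := by
    intro i
    simp only [hM_def, dmat_apply]
    rw [Finset.sum_add_distrib, husum, add_zero]
    simp
  have hMMi : M * Mi = 1 := by
    ext i j
    rw [hMi_def, mul_dmat_apply, hMrow]
    simp only [hM_def, dmat_apply, Matrix.one_apply]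
    ring
  have hMiM : Mi * M = 1 := mul_eq_one_comm.mp hMMi
  have hMinv : M⁻¹ = Mi := Matrix.inv_eq_right_inv hMMi
  have hMP : M * P = Q * M := by
    ext i j
    rw [hM_def, dmat_mul_apply, mul_dmat_apply, hQrow, heig j]
    simp only [hQ_def, Matrix.of_apply, dmat_apply]
    ring
  have hsim : SimilarOver (𝕌 : Set ℝ) P Q := by
    refine ⟨M, isUnit_iff_exists.mpr ⟨Mi, hMMi, hMiM⟩, ?_, ?_, ?_⟩
    · intro i j
      simp only [hM_def, dmat_apply, SetLike.mem_coe]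
      exact 𝕌.add_mem (by split_ifs; exacts [𝕌.one_mem, 𝕌.zero_mem]) (hu𝕌 j)
    · intro i j
      rw [hMinv]
      simp only [hMi_def, dmat_apply, SetLike.mem_coe]
      exact 𝕌.add_mem (by split_ifs; exacts [𝕌.one_mem, 𝕌.zero_mem]) (𝕌.neg_mem (hu𝕌 j))
    · rw [hMinv, hMP, Matrix.mul_assoc, hMMi, Matrix.mul_one]
  -- the SSE chain
  set μ : ℝ := Finset.univ.inf' Finset.univ_nonempty
    (fun p : Fin n × Fin n => min (P p.1 p.2) (Q p.1 p.2)) with hμ_def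
  clear_value μ
  have hμpos : 0 < μ := by
    rw [hμ_def, Finset.lt_inf'_iff]
    exact fun p _ => lt_min (hpos p.1 p.2) (hQpos p.1 p.2)
  have hμP : ∀ i j, μ ≤ P i j := fun i j => by
    rw [hμ_def]
    exact le_trans (Finset.inf'_le _ (Finset.mem_univ (i, j))) (min_le_left _ _)
  have hμQ : ∀ i j, μ ≤ Q i j := fun i j => by
    rw [hμ_def]
    exact le_trans (Finset.inf'_le _ (Finset.mem_univ (i, j))) (min_le_right _ _)
  set sU : ℝ := ∑ j, (|u j| + u j) / 2 with hsU_def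
  clear_value sU
  have hsU0 : 0 ≤ sU := by
    rw [hsU_def]
    refine Finset.sum_nonneg fun j _ => ?_
    have h0 : -|u j| ≤ u j := neg_abs_le (u j)
    linarith
  obtain ⟨N, hN⟩ := exists_nat_ge (4 * sU / μ + 1)
  have hN0 : (0:ℝ) < N := lt_of_lt_of_le (by positivity) hN
  have hNn : 0 < N := by exact_mod_cast hN0
  set h : ℝ := 1 / (N:ℝ) with hh_def
  clear_value h
  have hhpos : 0 < h := by rw [hh_def]; positivity
  have hh𝕌 : h ∈ 𝕌 := by
    rw [hh_def]; exact 𝕌.div_mem 𝕌.one_mem (natCast_mem 𝕌 N)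
  have hsmall : h * sU ≤ μ / 4 := by
    have h1 : 4 * sU / μ ≤ (N:ℝ) := by linarith
    have h2 : 4 * sU ≤ (N:ℝ) * μ := by
      rw [div_le_iff₀ hμpos] at h1; linarith
    rw [hh_def, div_mul_eq_mul_div, one_mul, div_le_div_iff₀ hN0 (by norm_num : (0:ℝ) < 4)]
    linarith
  set A : ℕ → Matrix (Fin n) (Fin n) ℝ :=
    fun k => Matrix.of (fun i j => P i j + ((k:ℝ) * h) * w j) with hA_def
  clear_value A
  have hA0P : A 0 = P := by
    ext i j; simp [hA_def]
  have hANQ : A N = Q := by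
    ext i j
    simp only [hA_def, hQ_def, Matrix.of_apply]
    rw [show ((N:ℝ) * h) = 1 by rw [hh_def]; field_simp, one_mul]
  have hstep : ∀ k : ℕ, k + 1 ≤ N → SSEn {x : ℝ | x ∈ 𝕌 ∧ 0 ≤ x} (A k) (A (k + 1)) := by
    intro k hk
    have ht0 : 0 ≤ (k:ℝ) * h := mul_nonneg (Nat.cast_nonneg k) hhpos.le
    have ht1 : (k:ℝ) * h ≤ 1 := by
      rw [hh_def, mul_one_div, div_le_one hN0]
      exact_mod_cast le_trans (Nat.le_succ k) hk
    have hconv : ∀ i j, A k i j = (1 - (k:ℝ) * h) * P i j + ((k:ℝ) * h) * Q i j := by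
      intro i j
      simp only [hA_def, hQ_def, Matrix.of_apply]
      ring
    have main := twostep 𝕌 hn0 (A k) u w μ h
      (fun i j => by
        simp only [hA_def, Matrix.of_apply]
        exact 𝕌.add_mem (hUP i j)
          (𝕌.mul_mem (𝕌.mul_mem (natCast_mem 𝕌 k) hh𝕌) (hw𝕌 j)))
      hu𝕌 hh𝕌 hμpos
      (fun i j => by
        rw [hconv i j]
        nlinarith [hμP i j, hμQ i j])
      (fun i j => by
        rw [hconv i j]
        nlinarith [hPle1 i j, hQle1 i j])
      (fun i => by
        simp only [hA_def, Matrix.of_apply]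
        rw [Finset.sum_add_distrib, hrow, ← Finset.mul_sum, hwsum, mul_zero, add_zero])
      husum
      (fun j => by
        have e : ∀ i ∈ Finset.univ, u i * (A k i j)
            = u i * P i j + (((k:ℝ) * h) * w j) * u i := fun i _ => by
          simp only [hA_def, Matrix.of_apply]; ring
        rw [Finset.sum_congr rfl e, Finset.sum_add_distrib, heig j, ← Finset.mul_sum,
          husum, mul_zero, add_zero])
      hhpos (by rw [← hsU_def]; exact hsmall)
    have hBA : (Matrix.of fun i j => A k i j + h * w j) = A (k + 1) := by
      ext i j
      simp only [hA_def, Matrix.of_apply]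
      push_cast
      ring
    rwa [hBA] at main
  have hchain : ∀ k : ℕ, k ≤ N → SSEn {x : ℝ | x ∈ 𝕌 ∧ 0 ≤ x} P (A k) := by
    intro k
    induction k with
    | zero => intro _; rw [hA0P]; exact Relation.ReflTransGen.refl
    | succ m ih =>
        intro hm
        exact Relation.ReflTransGen.trans (ih (Nat.le_of_succ_le hm)) (hstep m hm)
  have hsse : SSEn {x : ℝ | x ∈ 𝕌 ∧ 0 ≤ x} P Q := by
    have := hchain N le_rfl
    rwa [hANQ] at this
  exact ⟨Q, hQ𝕌, hQpos, hQrow, hQcol, hsim, hsse⟩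
end

section
/- Let 𝕌 be a subfield of ℝ, n ≥ 2, and let P = (p_ij) be an n×n positive stochastic matrix with entries in 𝕌. If min_{i,j} p_ij > 1/n − 1/n², then P is similar over 𝕌 to a positive doubly stochastic matrix Q and is strong shift equivalent over 𝕌₊ to Q through a chain consisting entirely of n×n matrices. -/
open Matrix BigOperators

private lemma abs_sum_lt' {n : ℕ} (a : Fin n → ℝ) (k m : Fin n) (hk : 0 < a k) (hm : a m < 0) :
    |∑ i, a i| < ∑ i, |a i| := by
  have hkm : k ≠ m := by rintro rfl; linarith
  rw [abs_lt]
  constructor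
  · have h1 : ∑ i ∈ Finset.univ.erase k, a i ≥ -∑ i ∈ Finset.univ.erase k, |a i| := by
      rw [← Finset.sum_neg_distrib]
      exact Finset.sum_le_sum fun i _ => neg_abs_le _
    have h2 := Finset.sum_erase_add Finset.univ a (Finset.mem_univ k)
    have h3 := Finset.sum_erase_add Finset.univ (fun i => |a i|) (Finset.mem_univ k)
    have : |a k| = a k := abs_of_pos hk
    nlinarith [abs_nonneg (a k)]
  · have h1 : ∑ i ∈ Finset.univ.erase m, a i ≤ ∑ i ∈ Finset.univ.erase m, |a i| :=
      Finset.sum_le_sum fun i _ => le_abs_self _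
    have h2 := Finset.sum_erase_add Finset.univ a (Finset.mem_univ m)
    have h3 := Finset.sum_erase_add Finset.univ (fun i => |a i|) (Finset.mem_univ m)
    have : |a m| = -a m := abs_of_neg hm
    linarith

private lemma no_mixed {n : ℕ} (P : Matrix (Fin n) (Fin n) ℝ)
    (hpos : ∀ i j, 0 < P i j) (hrow : ∀ i, ∑ j, P i j = 1)
    (v : Fin n → ℝ) (hv : ∀ j, ∑ i, v i * P i j = v j)
    (k m : Fin n) (hk : 0 < v k) (hm : v m < 0) : False := by
  have h1 : ∀ j, |v j| < ∑ i, |v i| * P i j := by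
    intro j
    have := abs_sum_lt' (fun i => v i * P i j) k m
      (mul_pos hk (hpos k j)) (mul_neg_of_neg_of_pos hm (hpos m j))
    rw [hv j] at this
    calc |v j| < ∑ i, |v i * P i j| := this
      _ = ∑ i, |v i| * P i j := by
          refine Finset.sum_congr rfl fun i _ => ?_
          rw [abs_mul, abs_of_pos (hpos i j)]
  have h2 : ∑ j, |v j| < ∑ j, ∑ i, |v i| * P i j :=
    Finset.sum_lt_sum_of_nonempty ⟨k, Finset.mem_univ k⟩ (fun j _ => h1 j)
  rw [Finset.sum_comm] at h2
  simp only [← Finset.mul_sum, hrow, mul_one] at h2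
  exact lt_irrefl _ h2

/-- fill in the missing equation at `i0` using column-sum structure. -/
private lemma fill_in {n : ℕ} (P : Matrix (Fin n) (Fin n) ℝ)
    (hrow : ∀ i, ∑ j, P i j = 1) (v : Fin n → ℝ) (i0 : Fin n)
    (h : ∀ i, i ≠ i0 → ∑ j, v j * P j i = v i) :
    ∀ i, ∑ j, v j * P j i = v i := by
  have htot : ∑ i, (v i - ∑ j, v j * P j i) = 0 := by
    rw [Finset.sum_sub_distrib, Finset.sum_comm]
    simp only [← Finset.mul_sum, hrow, mul_one]
    ring
  have hsingle : ∑ i, (v i - ∑ j, v j * P j i) = v i0 - ∑ j, v j * P j i0 := by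
    refine Finset.sum_eq_single i0 (fun b _ hb => ?_) (fun h' => absurd (Finset.mem_univ i0) h')
    rw [h b hb]; ring
  intro i
  rcases eq_or_ne i i0 with rfl | hi
  · rw [hsingle] at htot; linarith
  · exact h i hi

private lemma exists_pi (𝕌 : Subfield ℝ) {n : ℕ} (hn : 2 ≤ n)
    (P : Matrix (Fin n) (Fin n) ℝ) (hUP : ∀ i j, P i j ∈ 𝕌)
    (hpos : ∀ i j, 0 < P i j) (hrow : ∀ i, ∑ j, P i j = 1) :
    ∃ π : Fin n → ℝ, (∀ j, π j ∈ 𝕌) ∧ (∑ j, π j = 1) ∧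
      (∀ j, ∑ i, π i * P i j = π j) ∧ (∀ j, 0 ≤ π j) := by
  have hn0 : 0 < n := by omega
  set i0 : Fin n := ⟨0, hn0⟩ with hi0
  -- the modified matrix C
  set Cm : Matrix (Fin n) (Fin n) ℝ :=
    Matrix.of (fun i j => if i = i0 then 1 else ((if i = j then (1:ℝ) else 0) - P j i)) with hCm
  -- C has nonzero determinant
  have hdet : Cm.det ≠ 0 := by
    intro hd
    obtain ⟨v, hv0, hvz⟩ := (Matrix.exists_mulVec_eq_zero_iff).2 hd
    have hsum : ∑ j, v j = 0 := by
      have := congrFun hvz i0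
      simpa [Matrix.mulVec, dotProduct, Cm] using this
    have heq : ∀ i, i ≠ i0 → ∑ j, v j * P j i = v i := by
      intro i hi
      have := congrFun hvz i
      simp only [Matrix.mulVec, dotProduct, Cm, Matrix.of_apply, if_neg hi,
        Pi.zero_apply] at this
      rw [Finset.sum_congr rfl (fun j _ => sub_mul (if i = j then (1:ℝ) else 0) (P j i) (v j)),
        Finset.sum_sub_distrib] at this
      have h1 : ∑ j, (if i = j then (1:ℝ) else 0) * v j = v i := by simp
      rw [h1] at this
      have : v i - ∑ j, P j i * v j = 0 := this
      rw [Finset.sum_congr rfl (fun j _ => mul_comm (P j i) (v j))] at this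
      linarith [this]
    have hall := fill_in P hrow v i0 heq
    -- v must be zero
    apply hv0
    funext j
    show v j = 0
    by_contra hvj
    rcases lt_or_gt_of_ne (hvj : v j ≠ 0) with hneg | hposj
    · -- v j < 0, need some positive entry
      have : ∃ k, 0 < v k := by
        by_contra hc
        push_neg at hc
        have : ∑ i, v i < 0 := by
          have h1 : ∀ i ∈ Finset.univ, v i ≤ 0 := fun i _ => hc i
          have := Finset.sum_le_sum h1
          simp only [Finset.sum_const_zero] at this
          rcases this.lt_or_eq with h | h
          · exact h
          · exfalso
            have := (Finset.sum_eq_zero_iff_of_nonpos h1).1 h j (Finset.mem_univ j)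
            exact hvj this
        linarith [hsum]
      obtain ⟨k, hk⟩ := this
      exact no_mixed P hpos hrow v hall k j hk hneg
    · have : ∃ m, v m < 0 := by
        by_contra hc
        push_neg at hc
        have : 0 < ∑ i, v i := by
          have h1 : ∀ i ∈ Finset.univ, 0 ≤ v i := fun i _ => hc i
          have h2 := Finset.single_le_sum h1 (Finset.mem_univ j)
          linarith
        linarith [hsum]
      obtain ⟨m, hm⟩ := this
      exact no_mixed P hpos hrow v hall j m hposj hm
  -- now work over the subfield
  set f : 𝕌 →+* ℝ := 𝕌.subtype with hf
  have hmem : ∀ i j, (if i = i0 then (1:ℝ) else ((if i = j then (1:ℝ) else 0) - P j i)) ∈ 𝕌 := by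
    intro i j
    split
    · exact one_mem 𝕌
    · exact sub_mem (by split; exacts [one_mem 𝕌, zero_mem 𝕌]) (hUP j i)
  set Cm' : Matrix (Fin n) (Fin n) 𝕌 :=
    Matrix.of (fun i j => (⟨_, hmem i j⟩ : 𝕌)) with hCm'
  have hmap : f.mapMatrix Cm' = Cm := by
    ext i j
    simp [Cm', Cm, f]
  have hdet' : IsUnit Cm'.det := by
    rw [isUnit_iff_ne_zero]
    intro h
    apply hdet
    rw [← hmap, ← RingHom.map_det, h, map_zero]
  set u : Fin n → 𝕌 := fun j => if j = i0 then 1 else 0 with hu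
  set π' : Fin n → 𝕌 := Cm'⁻¹.mulVec u with hπ'
  have hCπ' : Cm'.mulVec π' = u := by
    rw [hπ', Matrix.mulVec_mulVec, Matrix.mul_nonsing_inv _ hdet', Matrix.one_mulVec]
  set π : Fin n → ℝ := fun j => (π' j : ℝ) with hπdef
  have hCπ : ∀ i, ∑ j, Cm i j * π j = (if i = i0 then (1:ℝ) else 0) := by
    intro i
    have h0 := congrFun hCπ' i
    have h2 := congrArg f h0
    rw [show Cm'.mulVec π' i = ∑ j, Cm' i j * π' j from rfl, map_sum] at h2
    simp only [_root_.map_mul] at h2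
    have h3 : ∀ j, f (Cm' i j) = Cm i j := fun j => rfl
    have h4 : ∀ j, f (π' j) = π j := fun j => rfl
    simp only [h3, h4] at h2
    rw [h2]
    simp [u, f, apply_ite]
  have hπ1 : ∑ j, π j = 1 := by
    have := hCπ i0
    simpa [Cm] using this
  have heqπ : ∀ i, i ≠ i0 → ∑ j, π j * P j i = π i := by
    intro i hi
    have := hCπ i
    rw [if_neg hi] at this
    simp only [Cm, Matrix.of_apply, if_neg hi] at this
    rw [Finset.sum_congr rfl (fun j _ => sub_mul (if i = j then (1:ℝ) else 0) (P j i) (π j)),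
      Finset.sum_sub_distrib] at this
    have h1 : ∑ j, (if i = j then (1:ℝ) else 0) * π j = π i := by simp
    rw [h1] at this
    rw [Finset.sum_congr rfl (fun j _ => mul_comm (π j) (P j i))]
    linarith [this]
  have hall := fill_in P hrow π i0 heqπ
  have hnonneg : ∀ j, 0 ≤ π j := by
    intro j
    by_contra hc
    push_neg at hc
    have : ∃ k, 0 < π k := by
      by_contra hc2
      push_neg at hc2
      have h1 : ∀ i ∈ Finset.univ, π i ≤ 0 := fun i _ => hc2 i
      have := Finset.sum_le_sum h1
      simp only [Finset.sum_const_zero] at this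
      rw [hπ1] at this
      linarith
    obtain ⟨k, hk⟩ := this
    exact absurd (no_mixed P hpos hrow π hall k j hk hc) not_false
  exact ⟨π, fun j => (π' j).2, hπ1, hall, hnonneg⟩

/-- Let `𝕌` be a subfield of `ℝ`, `n ≥ 2`, and `P` an `n × n` positive
stochastic matrix over `𝕌`. If every entry of `P` is greater than `1/n - 1/n²`, then `P` is
similar over `𝕌` to a positive doubly stochastic matrix `Q` and strong shift equivalent over
`𝕌₊` to `Q` through `n × n` matrices. -/
theorem stmt7 (𝕌 : Subfield ℝ) {n : ℕ} (hn : 2 ≤ n)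
    (P : Matrix (Fin n) (Fin n) ℝ) (hUP : ∀ i j, P i j ∈ 𝕌)
    (hpos : ∀ i j, 0 < P i j) (hrow : ∀ i, ∑ j, P i j = 1)
    (hmin : ∀ i j, 1 / (n : ℝ) - 1 / (n : ℝ) ^ 2 < P i j) :
    ∃ Q : Matrix (Fin n) (Fin n) ℝ,
      (∀ i j, Q i j ∈ 𝕌) ∧ (∀ i j, 0 < Q i j) ∧
      (∀ i, ∑ j, Q i j = 1) ∧ (∀ j, ∑ i, Q i j = 1) ∧
      SimilarOver (𝕌 : Set ℝ) P Q ∧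
      SSEn {x : ℝ | x ∈ 𝕌 ∧ 0 ≤ x} P Q := by
  obtain ⟨π, hπU, hπ1, hπfix, hπ0⟩ := exists_pi 𝕌 hn P hUP hpos hrow
  obtain ⟨N, hNdef⟩ : ∃ N : ℝ, N = (n : ℝ) := ⟨_, rfl⟩
  have hN2 : (2:ℝ) ≤ N := by rw [hNdef]; exact_mod_cast hn
  have hNpos : (0:ℝ) < N := by linarith
  have hN0 : N ≠ 0 := ne_of_gt hNpos
  obtain ⟨L, hLdef⟩ : ∃ L : ℝ, L = 1/N - 1/N^2 := ⟨_, rfl⟩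
  have hLpos : 0 < L := by
    rw [hLdef]
    have h1 : 1/N^2 < 1/N := by
      apply one_div_lt_one_div_of_lt hNpos
      nlinarith
    linarith
  have hLP : ∀ i j, L < P i j := by
    intro i j
    rw [hLdef, hNdef]
    exact hmin i j
  obtain ⟨UB, hUBdef⟩ : ∃ UB : ℝ, UB = 1 - (N-1)*L := ⟨_, rfl⟩
  -- upper bound on entries
  have hPub : ∀ i j, P i j < UB := by
    intro i j
    have herase : ∑ k ∈ Finset.univ.erase j, P i k + P i j = 1 := by
      rw [← hrow i]; exact Finset.sum_erase_add _ _ (Finset.mem_univ j)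
    have hne : (Finset.univ.erase j).Nonempty := by
      rw [← Finset.card_pos, Finset.card_erase_of_mem (Finset.mem_univ j), Finset.card_univ,
        Fintype.card_fin]
      omega
    have hlt : ∑ k ∈ Finset.univ.erase j, L < ∑ k ∈ Finset.univ.erase j, P i k :=
      Finset.sum_lt_sum_of_nonempty hne (fun k _ => hLP i k)
    have hcard : ∑ k ∈ Finset.univ.erase j, L = (N - 1) * L := by
      rw [Finset.sum_const, Finset.card_erase_of_mem (Finset.mem_univ j), Finset.card_univ,
        Fintype.card_fin, nsmul_eq_mul, hNdef]
      congr 1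
      push_cast [Nat.cast_sub (by omega : 1 ≤ n)]
      ring
    rw [hUBdef]
    linarith [hcard ▸ hlt]
  have hπex : ∃ k, 0 < π k := by
    by_contra hc
    push_neg at hc
    have := Finset.sum_le_sum (fun i (_ : i ∈ Finset.univ) => hc i)
    simp only [Finset.sum_const_zero] at this
    rw [hπ1] at this
    linarith
  obtain ⟨k₀, hk₀⟩ := hπex
  have hπub : ∀ j, π j < UB := by
    intro j
    have h1 : ∑ i, π i * P i j < ∑ i, π i * UB := by
      refine Finset.sum_lt_sum (fun i _ => ?_) ⟨k₀, Finset.mem_univ k₀, ?_⟩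
      · exact mul_le_mul_of_nonneg_left (hPub i j).le (hπ0 i)
      · exact mul_lt_mul_of_pos_left (hPub k₀ j) hk₀
    rw [← Finset.sum_mul, hπ1, one_mul] at h1
    rw [← hπfix j]
    exact h1
  have hπlb : ∀ j, L < π j := by
    intro j
    have h1 : ∑ i, π i * L < ∑ i, π i * P i j := by
      refine Finset.sum_lt_sum (fun i _ => ?_) ⟨k₀, Finset.mem_univ k₀, ?_⟩
      · exact mul_le_mul_of_nonneg_left (hLP i j).le (hπ0 i)
      · exact mul_lt_mul_of_pos_left (hLP k₀ j) hk₀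
    rw [← Finset.sum_mul, hπ1, one_mul] at h1
    rw [← hπfix j]
    exact h1
  -- key scalar identities
  have hUBL : UB - 1/N = L := by rw [hUBdef, hLdef]; field_simp; ring
  have hLN : 1/N - L = 1/N^2 := by rw [hLdef]; ring
  have h2N : 1/N^2 ≤ L := by
    have h0 : 0 ≤ (N-2)/N^2 := div_nonneg (by linarith) (by positivity)
    have hid : (N-2)/N^2 = L - 1/N^2 := by rw [hLdef]; field_simp; ring
    linarith [hid ▸ h0]
  -- positive/negative parts of the deviation vector
  obtain ⟨wp, hwpdef⟩ : ∃ f : Fin n → ℝ, f = fun j => max (π j - 1/N) 0 := ⟨_, rfl⟩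
  obtain ⟨wm, hwmdef⟩ : ∃ f : Fin n → ℝ, f = fun j => max (1/N - π j) 0 := ⟨_, rfl⟩
  have hwpm : ∀ j, wp j - wm j = π j - 1/N := by
    intro j
    rcases le_total (π j) (1/N) with h | h
    · simp only [hwpdef, hwmdef]
      rw [max_eq_right (by linarith : π j - 1/N ≤ 0),
        max_eq_left (by linarith : (0:ℝ) ≤ 1/N - π j)]
      ring
    · simp only [hwpdef, hwmdef]
      rw [max_eq_left (by linarith : (0:ℝ) ≤ π j - 1/N),
        max_eq_right (by linarith : 1/N - π j ≤ 0)]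
      ring
  have hwp0 : ∀ j, 0 ≤ wp j := fun j => by rw [hwpdef]; exact le_max_right _ _
  have hwm0 : ∀ j, 0 ≤ wm j := fun j => by rw [hwmdef]; exact le_max_right _ _
  obtain ⟨σ, hσdef⟩ : ∃ s : ℝ, s = ∑ j, wm j := ⟨_, rfl⟩
  have hσ0 : 0 ≤ σ := hσdef ▸ Finset.sum_nonneg (fun j _ => hwm0 j)
  have hsum1N : ∑ _j : Fin n, 1/N = 1 := by
    rw [Finset.sum_const, Finset.card_univ, Fintype.card_fin, nsmul_eq_mul, ← hNdef]
    field_simp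
  have hwpsum : ∑ j, wp j = σ := by
    have h1 : ∑ j, (wp j - wm j) = ∑ j, (π j - 1/N) :=
      Finset.sum_congr rfl (fun j _ => by rw [hwpm j])
    rw [Finset.sum_sub_distrib, Finset.sum_sub_distrib, hπ1, hsum1N, ← hσdef] at h1
    linarith
  have hwpL : ∀ j, wp j < L := by
    intro j
    rw [hwpdef]
    exact max_lt (by linarith [hπub j, hUBL]) hLpos
  have hwmN : ∀ j, wm j < 1/N^2 := by
    intro j
    rw [hwmdef]
    refine max_lt ?_ (by positivity)
    calc 1/N - π j < 1/N - L := by linarith [hπlb j]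
      _ = 1/N^2 := hLN
  have hσ1 : σ < 1 := by
    have h1 : ∑ j, wm j < ∑ _j : Fin n, 1/N^2 :=
      Finset.sum_lt_sum_of_nonempty ⟨k₀, Finset.mem_univ k₀⟩ (fun j _ => hwmN j)
    have h2 : ∑ _j : Fin n, 1/N^2 = 1/N := by
      rw [Finset.sum_const, Finset.card_univ, Fintype.card_fin, nsmul_eq_mul, ← hNdef]
      field_simp
    have h3 : 1/N ≤ 1 := by
      rw [div_le_one hNpos]; linarith
    rw [hσdef]
    linarith
  have h1σ : 0 < 1 - σ := by linarith
  have h1σ0 : (1:ℝ) - σ ≠ 0 := ne_of_gt h1σ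
  -- column sums
  obtain ⟨c, hcdef⟩ : ∃ f : Fin n → ℝ, f = fun j => ∑ i, P i j := ⟨_, rfl⟩
  have hcub : ∀ j, c j < N * UB := by
    intro j
    have h1 : ∑ i, P i j < ∑ _i : Fin n, UB :=
      Finset.sum_lt_sum_of_nonempty ⟨k₀, Finset.mem_univ k₀⟩ (fun i _ => hPub i j)
    have h2 : ∑ _i : Fin n, UB = N * UB := by
      rw [Finset.sum_const, Finset.card_univ, Fintype.card_fin, nsmul_eq_mul, ← hNdef]
    simp only [hcdef]
    linarith
  have hcsum : ∑ j, c j = N := by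
    simp only [hcdef]
    rw [Finset.sum_comm]
    simp only [hrow]
    rw [Finset.sum_const, Finset.card_univ, Fintype.card_fin, nsmul_eq_mul, mul_one, hNdef]
  obtain ⟨g, hgdef⟩ : ∃ f : Fin n → ℝ, f = fun j => ∑ k, wp k * P k j := ⟨_, rfl⟩
  obtain ⟨hh, hhdef⟩ : ∃ f : Fin n → ℝ, f = fun j => ∑ k, wm k * P k j := ⟨_, rfl⟩
  have hgh : ∀ j, g j - hh j = π j - c j / N := by
    intro j
    simp only [hgdef, hhdef, hcdef]
    rw [← Finset.sum_sub_distrib]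
    have h1 : ∀ k, wp k * P k j - wm k * P k j = π k * P k j - (1/N) * P k j := by
      intro k
      rw [← sub_mul, hwpm k, sub_mul]
    rw [Finset.sum_congr rfl (fun k _ => h1 k), Finset.sum_sub_distrib, hπfix j,
      ← Finset.mul_sum]
    ring
  have hgsum : ∑ j, g j = σ := by
    simp only [hgdef]
    rw [Finset.sum_comm]
    simp only [← Finset.mul_sum, hrow, mul_one]
    exact hwpsum
  have hhsum : ∑ j, hh j = σ := by
    simp only [hhdef]
    rw [Finset.sum_comm]
    simp only [← Finset.mul_sum, hrow, mul_one]
    exact hσdef.symm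
  -- positivity of Q entries
  have hQpos : ∀ i j, 0 < P i j + (1 - c j)/N := by
    intro i j
    have hid : L + (1 - N*UB)/N = 0 := by
      rw [hUBdef, hLdef]; field_simp; ring
    have h1 : (1 - N*UB)/N < (1 - c j)/N := by
      gcongr
      linarith [hcub j]
    linarith [hLP i j]
  -- the key positivity estimate for V₂
  have hkey : ∀ i j, 0 < P i j + (g j - hh j) - wp j := by
    intro i j
    rcases le_total (π j) (1/N) with hle | hge
    · have hwpj : wp j = 0 := by
        rw [hwpdef]; exact max_eq_right (by linarith)
      rw [hgh j, hwpj]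
      have hA : ∑ k, (1/N) * P k j = c j / N := by
        rw [← Finset.mul_sum]
        simp only [hcdef]
        ring
      have hC : ∑ _k : Fin n, (1/N)*L = L := by
        rw [Finset.sum_const, Finset.card_univ, Fintype.card_fin, nsmul_eq_mul, ← hNdef]
        field_simp
      have hD : ∑ k, π k * L = L := by rw [← Finset.sum_mul, hπ1, one_mul]
      have hx : c j / N - π j = ∑ k, (1/N - π k) * (P k j - L) := by
        symm
        calc ∑ k, (1/N - π k) * (P k j - L)
            = ∑ k, ((1/N)*P k j - π k * P k j - (1/N)*L + π k * L) :=
              Finset.sum_congr rfl (fun k _ => by ring)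
          _ = ((∑ k, (1/N)*P k j) - (∑ k, π k * P k j) - ∑ _k : Fin n, (1/N)*L)
                + ∑ k, π k * L := by
              rw [Finset.sum_add_distrib, Finset.sum_sub_distrib, Finset.sum_sub_distrib]
          _ = (c j/N - π j - L) + L := by rw [hA, hπfix j, hC, hD]
          _ = c j/N - π j := by ring
      have hb1 : ∑ k, (1/N - π k) * (P k j - L) ≤ ∑ k, (1/N^2) * (P k j - L) :=
        Finset.sum_le_sum (fun k _ =>
          mul_le_mul_of_nonneg_right (by linarith [hπlb k, hLN]) (by linarith [hLP k j]))
      have hsumL : ∑ _k : Fin n, L = N * L := by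
        rw [Finset.sum_const, Finset.card_univ, Fintype.card_fin, nsmul_eq_mul, ← hNdef]
      have hb2 : ∑ k, (1/N^2) * (P k j - L) = (1/N^2) * (c j - N*L) := by
        rw [← Finset.mul_sum, Finset.sum_sub_distrib, hsumL]
        simp only [hcdef]
      have hb3 : (1/N^2) * (c j - N*L) < (1/N^2) * (N*UB - N*L) := by
        apply mul_lt_mul_of_pos_left _ (by positivity)
        linarith [hcub j]
      have hb4 : (1/N^2) * (N*UB - N*L) = 1/N^2 := by
        have hUBL2 : UB - L = 1/N := by linarith [hUBL, hLN]
        rw [show N*UB - N*L = N * (UB - L) by ring, hUBL2]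
        field_simp
      have hb : c j / N - π j < 1/N^2 := by
        rw [hx]
        calc ∑ k, (1/N - π k) * (P k j - L) ≤ ∑ k, (1/N^2) * (P k j - L) := hb1
          _ = (1/N^2) * (c j - N*L) := hb2
          _ < (1/N^2) * (N*UB - N*L) := hb3
          _ = 1/N^2 := hb4
      linarith [hLP i j]
    · have hwpj : wp j = π j - 1/N := by
        rw [hwpdef]; exact max_eq_left (by linarith)
      rw [hgh j, hwpj]
      have h0 := hQpos i j
      have hid2 : P i j + (π j - c j/N) - (π j - 1/N) = P i j + (1 - c j)/N := by ring
      linarith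
  -- the matrices
  obtain ⟨U1, hU1def⟩ : ∃ M : Matrix (Fin n) (Fin n) ℝ,
    M = Matrix.of fun i j => P i j - wp j := ⟨_, rfl⟩
  obtain ⟨V1, hV1def⟩ : ∃ M : Matrix (Fin n) (Fin n) ℝ,
    M = Matrix.of fun i j => (if i = j then (1:ℝ) else 0) + wp j / (1-σ) := ⟨_, rfl⟩
  obtain ⟨A1, hA1def⟩ : ∃ M : Matrix (Fin n) (Fin n) ℝ,
    M = Matrix.of fun i j => P i j + (g j - wp j)/(1-σ) := ⟨_, rfl⟩
  obtain ⟨U2, hU2def⟩ : ∃ M : Matrix (Fin n) (Fin n) ℝ,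
    M = Matrix.of fun i j => (if i = j then (1:ℝ) else 0) + wm j / (1-σ) := ⟨_, rfl⟩
  obtain ⟨V2, hV2def⟩ : ∃ M : Matrix (Fin n) (Fin n) ℝ,
    M = Matrix.of fun i j => P i j + (g j - hh j) - wp j := ⟨_, rfl⟩
  obtain ⟨Qm, hQmdef⟩ : ∃ M : Matrix (Fin n) (Fin n) ℝ,
    M = Matrix.of fun i j => P i j + (1 - c j)/N := ⟨_, rfl⟩
  obtain ⟨Mm, hMmdef⟩ : ∃ M : Matrix (Fin n) (Fin n) ℝ,
    M = Matrix.of fun i j => (if i = j then (1:ℝ) else 0) + (π j - 1/N) := ⟨_, rfl⟩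
  obtain ⟨Mi, hMidef⟩ : ∃ M : Matrix (Fin n) (Fin n) ℝ,
    M = Matrix.of fun i j => (if i = j then (1:ℝ) else 0) - (π j - 1/N) := ⟨_, rfl⟩
  -- product 1 : U1 * V1 = P
  have hP1 : U1 * V1 = P := by
    ext i j
    rw [hU1def, hV1def, Matrix.mul_apply]
    simp only [Matrix.of_apply]
    have e1 : ∀ k, (P i k - wp k) * ((if k = j then (1:ℝ) else 0) + wp j/(1-σ))
        = (P i k - wp k) * (if k = j then (1:ℝ) else 0)
          + (P i k - wp k) * (wp j/(1-σ)) := fun k => by ring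
    rw [Finset.sum_congr rfl (fun k _ => e1 k), Finset.sum_add_distrib]
    have e2 : ∑ k, (P i k - wp k) * (if k = j then (1:ℝ) else 0) = P i j - wp j := by
      simp
    have e3 : ∑ k, (P i k - wp k) * (wp j/(1-σ)) = (1 - σ) * (wp j/(1-σ)) := by
      rw [← Finset.sum_mul, Finset.sum_sub_distrib, hrow i, hwpsum]
    rw [e2, e3]
    field_simp
    ring
  -- product 2 : V1 * U1 = A1
  have hP2 : V1 * U1 = A1 := by
    ext i j
    rw [hV1def, hU1def, hA1def, Matrix.mul_apply]
    simp only [Matrix.of_apply]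
    have e1 : ∀ k, ((if i = k then (1:ℝ) else 0) + wp k/(1-σ)) * (P k j - wp j)
        = (if i = k then (1:ℝ) else 0) * (P k j - wp j)
          + ((wp k * P k j)/(1-σ) - (wp k * wp j)/(1-σ)) := fun k => by ring
    rw [Finset.sum_congr rfl (fun k _ => e1 k), Finset.sum_add_distrib,
      Finset.sum_sub_distrib]
    have e2 : ∑ k, (if i = k then (1:ℝ) else 0) * (P k j - wp j) = P i j - wp j := by
      simp
    have e3 : ∑ k, (wp k * P k j)/(1-σ) = g j/(1-σ) := by
      rw [← Finset.sum_div]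
      simp only [hgdef]
    have e4 : ∑ k, (wp k * wp j)/(1-σ) = (σ * wp j)/(1-σ) := by
      rw [← Finset.sum_div, ← Finset.sum_mul, hwpsum]
    rw [e2, e3, e4]
    field_simp
    ring
  -- product 3 : U2 * V2 = A1
  have hP3 : U2 * V2 = A1 := by
    ext i j
    rw [hU2def, hV2def, hA1def, Matrix.mul_apply]
    simp only [Matrix.of_apply]
    have e1 : ∀ k, ((if i = k then (1:ℝ) else 0) + wm k/(1-σ))
          * (P k j + (g j - hh j) - wp j)
        = (if i = k then (1:ℝ) else 0) * (P k j + (g j - hh j) - wp j)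
          + ((wm k * P k j)/(1-σ) + (wm k * ((g j - hh j) - wp j))/(1-σ)) := fun k => by ring
    rw [Finset.sum_congr rfl (fun k _ => e1 k), Finset.sum_add_distrib,
      Finset.sum_add_distrib]
    have e2 : ∑ k, (if i = k then (1:ℝ) else 0) * (P k j + (g j - hh j) - wp j)
        = P i j + (g j - hh j) - wp j := by simp
    have e3 : ∑ k, (wm k * P k j)/(1-σ) = hh j/(1-σ) := by
      rw [← Finset.sum_div]
      simp only [hhdef]
    have e4 : ∑ k, (wm k * ((g j - hh j) - wp j))/(1-σ)
        = (σ * ((g j - hh j) - wp j))/(1-σ) := by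
      rw [← Finset.sum_div, ← Finset.sum_mul, ← hσdef]
    rw [e2, e3, e4]
    field_simp
    ring
  -- product 4 : V2 * U2 = Qm
  have hP4 : V2 * U2 = Qm := by
    ext i j
    rw [hV2def, hU2def, hQmdef, Matrix.mul_apply]
    simp only [Matrix.of_apply]
    have e1 : ∀ k, (P i k + (g k - hh k) - wp k)
          * ((if k = j then (1:ℝ) else 0) + wm j/(1-σ))
        = (P i k + (g k - hh k) - wp k) * (if k = j then (1:ℝ) else 0)
          + (P i k + (g k - hh k) - wp k) * (wm j/(1-σ)) := fun k => by ring
    rw [Finset.sum_congr rfl (fun k _ => e1 k), Finset.sum_add_distrib]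
    have e2 : ∑ k, (P i k + (g k - hh k) - wp k) * (if k = j then (1:ℝ) else 0)
        = P i j + (g j - hh j) - wp j := by simp
    have e3 : ∑ k, (P i k + (g k - hh k) - wp k) * (wm j/(1-σ))
        = (1 - σ) * (wm j/(1-σ)) := by
      rw [← Finset.sum_mul]
      congr 1
      rw [Finset.sum_sub_distrib, Finset.sum_add_distrib, hrow i, Finset.sum_sub_distrib,
        hgsum, hhsum, hwpsum]
      ring
    rw [e2, e3]
    have e5 : (1 - σ) * (wm j/(1-σ)) = wm j := by field_simp
    rw [e5, hgh j]
    linear_combination - hwpm j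
  -- product 5 : Mm * Mi = 1
  have hMM : Mm * Mi = 1 := by
    ext i j
    rw [hMmdef, hMidef, Matrix.mul_apply]
    simp only [Matrix.of_apply, Matrix.one_apply]
    have e1 : ∀ k, ((if i = k then (1:ℝ) else 0) + (π k - 1/N))
          * ((if k = j then (1:ℝ) else 0) - (π j - 1/N))
        = (if i = k then (1:ℝ) else 0) * (if k = j then (1:ℝ) else 0)
          - (if i = k then (1:ℝ) else 0) * (π j - 1/N)
          + ((π k - 1/N) * (if k = j then (1:ℝ) else 0)
            - (π k - 1/N) * (π j - 1/N)) := fun k => by ring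
    rw [Finset.sum_congr rfl (fun k _ => e1 k), Finset.sum_add_distrib,
      Finset.sum_sub_distrib, Finset.sum_sub_distrib]
    have e2 : ∑ k, (if i = k then (1:ℝ) else 0) * (if k = j then (1:ℝ) else 0)
        = if i = j then (1:ℝ) else 0 := by
      simp [Finset.sum_ite_eq]
    have e3 : ∑ k, (if i = k then (1:ℝ) else 0) * (π j - 1/N) = π j - 1/N := by simp
    have e4 : ∑ k, (π k - 1/N) * (if k = j then (1:ℝ) else 0) = π j - 1/N := by simp
    have e5 : ∑ k, (π k - 1/N) * (π j - 1/N) = 0 := by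
      rw [← Finset.sum_mul, Finset.sum_sub_distrib, hπ1, hsum1N]
      ring
    rw [e2, e3, e4, e5]
    ring
  -- product 6 : Mm * P * Mi = Qm
  have hMP : ∀ i j, (Mm * P) i j = P i j + (π j - c j/N) := by
    intro i j
    rw [hMmdef, Matrix.mul_apply]
    simp only [Matrix.of_apply]
    have e1 : ∀ k, ((if i = k then (1:ℝ) else 0) + (π k - 1/N)) * P k j
        = (if i = k then (1:ℝ) else 0) * P k j + (π k * P k j - (1/N) * P k j) :=
      fun k => by ring
    rw [Finset.sum_congr rfl (fun k _ => e1 k), Finset.sum_add_distrib,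
      Finset.sum_sub_distrib]
    have e2 : ∑ k, (if i = k then (1:ℝ) else 0) * P k j = P i j := by simp
    have e3 : ∑ k, (1/N) * P k j = c j/N := by
      rw [← Finset.mul_sum]
      simp only [hcdef]
      ring
    rw [e2, hπfix j, e3]
  have hMPM : Mm * P * Mi = Qm := by
    ext i j
    rw [Matrix.mul_apply, hQmdef]
    simp only [Matrix.of_apply]
    have e1 : ∀ k, (Mm * P) i k * Mi k j
        = (P i k + (π k - c k/N)) * ((if k = j then (1:ℝ) else 0) - (π j - 1/N)) := by
      intro k
      rw [hMP i k, hMidef]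
      simp only [Matrix.of_apply]
    rw [Finset.sum_congr rfl (fun k _ => e1 k)]
    have e2 : ∀ k, (P i k + (π k - c k/N)) * ((if k = j then (1:ℝ) else 0) - (π j - 1/N))
        = (P i k + (π k - c k/N)) * (if k = j then (1:ℝ) else 0)
          - (P i k + (π k - c k/N)) * (π j - 1/N) := fun k => by ring
    rw [Finset.sum_congr rfl (fun k _ => e2 k), Finset.sum_sub_distrib]
    have e3 : ∑ k, (P i k + (π k - c k/N)) * (if k = j then (1:ℝ) else 0)
        = P i j + (π j - c j/N) := by simp
    have e4 : ∑ k, (P i k + (π k - c k/N)) * (π j - 1/N) = 1 * (π j - 1/N) := by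
      rw [← Finset.sum_mul]
      congr 1
      rw [Finset.sum_add_distrib, hrow i, Finset.sum_sub_distrib, ← Finset.sum_div, hcsum,
        hπ1]
      field_simp
      ring
    rw [e3, e4]
    ring
  -- membership helpers
  have hNU : N ∈ 𝕌 := by
    rw [hNdef]; exact_mod_cast natCast_mem 𝕌 n
  have hinvN : (1:ℝ)/N ∈ 𝕌 := div_mem (one_mem _) hNU
  have hwpU : ∀ j, wp j ∈ 𝕌 := by
    intro j
    simp only [hwpdef]
    rcases le_total (π j) (1/N) with h | h
    · rw [max_eq_right (by linarith)]; exact zero_mem _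
    · rw [max_eq_left (by linarith)]; exact sub_mem (hπU j) hinvN
  have hwmU : ∀ j, wm j ∈ 𝕌 := by
    intro j
    simp only [hwmdef]
    rcases le_total (π j) (1/N) with h | h
    · rw [max_eq_left (by linarith)]; exact sub_mem hinvN (hπU j)
    · rw [max_eq_right (by linarith)]; exact zero_mem _
  have hσU : σ ∈ 𝕌 := hσdef ▸ Subfield.sum_mem _ (fun j _ => hwmU j)
  have h1σU : (1:ℝ) - σ ∈ 𝕌 := sub_mem (one_mem _) hσU
  have hcU : ∀ j, c j ∈ 𝕌 := by
    intro j
    simp only [hcdef]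
    exact Subfield.sum_mem _ (fun i _ => hUP i j)
  have hgU : ∀ j, g j ∈ 𝕌 := by
    intro j
    simp only [hgdef]
    exact Subfield.sum_mem _ (fun k _ => mul_mem (hwpU k) (hUP k j))
  have hhU : ∀ j, hh j ∈ 𝕌 := by
    intro j
    simp only [hhdef]
    exact Subfield.sum_mem _ (fun k _ => mul_mem (hwmU k) (hUP k j))
  have hiteU : ∀ i j : Fin n, (if i = j then (1:ℝ) else 0) ∈ 𝕌 := by
    intro i j
    split
    · exact one_mem _
    · exact zero_mem _
  have hite0 : ∀ i j : Fin n, (0:ℝ) ≤ (if i = j then (1:ℝ) else 0) := by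
    intro i j
    split <;> norm_num
  -- memberships of the connecting matrices in 𝕌₊
  have hU1mem : ∀ i j, U1 i j ∈ {x : ℝ | x ∈ 𝕌 ∧ 0 ≤ x} := by
    intro i j
    rw [hU1def]
    exact ⟨sub_mem (hUP i j) (hwpU j),
      show (0:ℝ) ≤ P i j - wp j by linarith [hwpL j, hLP i j]⟩
  have hV1mem : ∀ i j, V1 i j ∈ {x : ℝ | x ∈ 𝕌 ∧ 0 ≤ x} := by
    intro i j
    rw [hV1def]
    exact ⟨add_mem (hiteU i j) (div_mem (hwpU j) h1σU),
      add_nonneg (hite0 i j) (div_nonneg (hwp0 j) h1σ.le)⟩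
  have hU2mem : ∀ i j, U2 i j ∈ {x : ℝ | x ∈ 𝕌 ∧ 0 ≤ x} := by
    intro i j
    rw [hU2def]
    exact ⟨add_mem (hiteU i j) (div_mem (hwmU j) h1σU),
      add_nonneg (hite0 i j) (div_nonneg (hwm0 j) h1σ.le)⟩
  have hV2mem : ∀ i j, V2 i j ∈ {x : ℝ | x ∈ 𝕌 ∧ 0 ≤ x} := by
    intro i j
    rw [hV2def]
    exact ⟨sub_mem (add_mem (hUP i j) (sub_mem (hgU j) (hhU j))) (hwpU j), (hkey i j).le⟩
  -- assemble
  refine ⟨Qm, ?_, ?_, ?_, ?_, ?_, ?_⟩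
  · intro i j
    rw [hQmdef]
    exact add_mem (hUP i j) (div_mem (sub_mem (one_mem _) (hcU j)) hNU)
  · intro i j
    rw [hQmdef]
    exact hQpos i j
  · intro i
    simp only [hQmdef, Matrix.of_apply]
    rw [Finset.sum_add_distrib, hrow i, ← Finset.sum_div, Finset.sum_sub_distrib,
      Finset.sum_const, Finset.card_univ, Fintype.card_fin, nsmul_eq_mul, mul_one, hcsum,
      ← hNdef]
    simp
  · intro j
    simp only [hQmdef, Matrix.of_apply]
    rw [Finset.sum_add_distrib, Finset.sum_const, Finset.card_univ, Fintype.card_fin,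
      nsmul_eq_mul, ← hNdef]
    have : ∑ i, P i j = c j := by simp only [hcdef]
    rw [this]
    field_simp
    ring
  · -- SimilarOver
    have hdetMm : IsUnit Mm.det := by
      have h := congrArg Matrix.det hMM
      rw [Matrix.det_mul, Matrix.det_one] at h
      exact IsUnit.of_mul_eq_one _ h
    have hMinv : Mm⁻¹ = Mi := Matrix.inv_eq_right_inv hMM
    refine ⟨Mm, (Matrix.isUnit_iff_isUnit_det Mm).2 hdetMm, ?_, ?_, ?_⟩
    · intro i j
      rw [hMmdef]
      exact add_mem (hiteU i j) (sub_mem (hπU j) hinvN)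
    · intro i j
      rw [hMinv, hMidef]
      exact sub_mem (hiteU i j) (sub_mem (hπU j) hinvN)
    · rw [hMinv, hMPM]
  · -- SSEn
    exact Relation.ReflTransGen.head
      ⟨U1, V1, hU1mem, hV1mem, hP1.symm, hP2.symm⟩
      (Relation.ReflTransGen.single ⟨U2, V2, hU2mem, hV2mem, hP3.symm, hP4.symm⟩)
end
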